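/- arXiv:1010.0321 — 5 statements merged into one kernel-verified Lean document; each statement's English description precedes it below -/
import Mathlib

section
/- The braid group B_n is torsion free: for every β ∈ B_n with β ≠ 1 and every integer m ≥ 1, one has β^m ≠ 1. -/
/-- The set of Artin braid relations in the free group on `n - 1` generators:
`σᵢσⱼ = σⱼσᵢ` for `|i - j| > 1` and `σᵢσⱼσᵢ = σⱼσᵢσⱼ` for `|i - j| = 1`. -/
def braidRels (n : ℕ) : Set (FreeGroup (Fin (n - 1))) :=
  { r | (∃ i j : Fin (n - 1), (i : ℕ) + 1 < (j : ℕ) ∧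
          r = FreeGroup.of i * FreeGroup.of j * (FreeGroup.of j * FreeGroup.of i)⁻¹) ∨
        (∃ i j : Fin (n - 1), (j : ℕ) = (i : ℕ) + 1 ∧
          r = FreeGroup.of i * FreeGroup.of j * FreeGroup.of i *
              (FreeGroup.of j * FreeGroup.of i * FreeGroup.of j)⁻¹) }

/-- The braid group on `n` strands, via the Artin presentation. -/
abbrev BraidGroup (n : ℕ) : Type := PresentedGroup (braidRels n)

/-- The standard Artin generator `σᵢ` (`0`-indexed: `i = 0, …, n - 2`). -/
def braidGen (n : ℕ) (i : Fin (n - 1)) : BraidGroup n := PresentedGroup.of i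


namespace BraidTF

variable {k : ℕ}

abbrev Wd (k : ℕ) := List (Fin k)

def far (a b : Fin k) : Prop := a.val + 1 < b.val ∨ b.val + 1 < a.val

def nbr (a b : Fin k) : Prop := a.val + 1 = b.val ∨ b.val + 1 = a.val

lemma far.symm {a b : Fin k} (h : far a b) : far b a := h.elim .inr .inl
lemma nbr.symm {a b : Fin k} (h : nbr a b) : nbr b a := h.elim .inr .inl

lemma far_ne {a b : Fin k} (h : far a b) : a ≠ b := by
  rcases h with h | h <;> (intro e; subst e; omega)

lemma nbr_ne {a b : Fin k} (h : nbr a b) : a ≠ b := by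
  rcases h with h | h <;> (intro e; subst e; omega)

lemma far_or_nbr {a b : Fin k} (h : a ≠ b) : far a b ∨ nbr a b := by
  have : a.val ≠ b.val := fun e => h (Fin.ext e)
  unfold far nbr; omega

lemma not_far_and_nbr {a b : Fin k} (h1 : far a b) (h2 : nbr a b) : False := by
  unfold far nbr at *; omega

inductive Step : Wd k → Wd k → Prop
  | swap (x y : Wd k) (a b : Fin k) (h : far a b) :
      Step (x ++ a :: b :: y) (x ++ b :: a :: y)
  | braid (x y : Wd k) (a b : Fin k) (h : nbr a b) :
      Step (x ++ a :: b :: a :: y) (x ++ b :: a :: b :: y)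

lemma Step.symm {u v : Wd k} (h : Step u v) : Step v u := by
  cases h with
  | swap x y a b h => exact .swap x y b a h.symm
  | braid x y a b h => exact .braid x y b a h.symm

def Rel : Wd k → Wd k → Prop := Relation.ReflTransGen Step

lemma Rel.refl {u : Wd k} : Rel u u := Relation.ReflTransGen.refl

lemma Rel.trans {u v w : Wd k} (h1 : Rel u v) (h2 : Rel v w) : Rel u w :=
  Relation.ReflTransGen.trans h1 h2

lemma Rel.of_step {u v : Wd k} (h : Step u v) : Rel u v :=
  Relation.ReflTransGen.single h

lemma Rel.symm {u v : Wd k} (h : Rel u v) : Rel v u := by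
  induction h with
  | refl => exact .refl
  | tail _ h2 ih => exact Rel.trans (.of_step h2.symm) ih

lemma Step.append_left {u v : Wd k} (x : Wd k) (h : Step u v) :
    Step (x ++ u) (x ++ v) := by
  cases h with
  | swap x' y a b hf => rw [← List.append_assoc, ← List.append_assoc]; exact .swap (x ++ x') y a b hf
  | braid x' y a b hf => rw [← List.append_assoc, ← List.append_assoc]; exact .braid (x ++ x') y a b hf

lemma Step.append_right {u v : Wd k} (h : Step u v) (y : Wd k) :
    Step (u ++ y) (v ++ y) := by
  cases h with
  | swap x y' a b hf =>
      have := Step.swap (k := k) x (y' ++ y) a b hf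
      simpa using this
  | braid x y' a b hf =>
      have := Step.braid (k := k) x (y' ++ y) a b hf
      simpa using this

lemma Rel.append_left {u v : Wd k} (x : Wd k) (h : Rel u v) : Rel (x ++ u) (x ++ v) := by
  induction h with
  | refl => exact .refl
  | tail _ h2 ih => exact ih.trans (.of_step (h2.append_left x))

lemma Rel.append_right {u v : Wd k} (h : Rel u v) (y : Wd k) : Rel (u ++ y) (v ++ y) := by
  induction h with
  | refl => exact .refl
  | tail _ h2 ih => exact ih.trans (.of_step (h2.append_right y))

lemma Rel.append {u v u' v' : Wd k} (h1 : Rel u u') (h2 : Rel v v') :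
    Rel (u ++ v) (u' ++ v') :=
  (h1.append_right v).trans (h2.append_left u')

lemma Rel.cons (a : Fin k) {u v : Wd k} (h : Rel u v) : Rel (a :: u) (a :: v) :=
  h.append_left [a]

lemma Step.length {u v : Wd k} (h : Step u v) : u.length = v.length := by
  cases h <;> simp

lemma Rel.length {u v : Wd k} (h : Rel u v) : u.length = v.length := by
  induction h with
  | refl => rfl
  | tail _ h2 ih => exact ih.trans h2.length

lemma Rel.eq_nil {u : Wd k} (h : Rel u []) : u = [] := by
  have := h.length; simpa using this

-- convenient step lemmas at the head
lemma Rel.swap₀ {a b : Fin k} (h : far a b) (t : Wd k) : Rel (a :: b :: t) (b :: a :: t) :=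
  .of_step (Step.swap [] t a b h)

lemma Rel.braid₀ {a b : Fin k} (h : nbr a b) (t : Wd k) :
    Rel (a :: b :: a :: t) (b :: a :: b :: t) :=
  .of_step (Step.braid [] t a b h)


/-! ### The complement word -/

instance {a b : Fin k} : Decidable (far a b) := by unfold far; infer_instance
instance {a b : Fin k} : Decidable (nbr a b) := by unfold nbr; infer_instance

/-- `cw a b` is the word such that `a :: cw a b` is the right lcm of the generators `a`, `b`. -/
def cw (a b : Fin k) : Wd k := if a = b then [] else if far a b then [b] else [b, a]

@[simp] lemma cw_self (a : Fin k) : cw a a = [] := by simp [cw]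

lemma cw_far {a b : Fin k} (h : far a b) : cw a b = [b] := by
  simp [cw, far_ne h, h]

lemma cw_nbr {a b : Fin k} (h : nbr a b) : cw a b = [b, a] := by
  have := nbr_ne h
  simp only [cw, if_neg this]
  rw [if_neg (fun hf => not_far_and_nbr hf h)]

/-! ### Five-letter calculation lemmas used in the key lemma -/

section Calc

variable {a b e : Fin k} (t : Wd k)

/-- C4, first word. -/
lemma calc_C4X (hab : nbr a b) (hbe : nbr b e) (hae : far a e) :
    Rel (e :: b :: a :: e :: b :: t) (b :: a :: e :: b :: a :: t) := by
  have s1 : Rel (e :: b :: a :: e :: b :: t) (e :: b :: e :: a :: b :: t) :=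
    .of_step (Step.swap [e, b] (b :: t) a e hae)
  have s2 : Rel (e :: b :: e :: a :: b :: t) (b :: e :: b :: a :: b :: t) :=
    .of_step (Step.braid [] (a :: b :: t) e b hbe.symm)
  have s3 : Rel (b :: e :: b :: a :: b :: t) (b :: e :: a :: b :: a :: t) :=
    .of_step (Step.braid [b, e] t b a hab.symm)
  have s4 : Rel (b :: e :: a :: b :: a :: t) (b :: a :: e :: b :: a :: t) :=
    .of_step (Step.swap [b] (b :: a :: t) e a hae.symm)
  exact ((s1.trans s2).trans s3).trans s4

/-- C4, second word. -/
lemma calc_C4Y (hab : nbr a b) (hbe : nbr b e) (hae : far a e) :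
    Rel (e :: b :: a :: b :: e :: t) (a :: b :: e :: b :: a :: t) := by
  have s1 : Rel (e :: b :: a :: b :: e :: t) (e :: a :: b :: a :: e :: t) :=
    .of_step (Step.braid [e] (e :: t) b a hab.symm)
  have s2 : Rel (e :: a :: b :: a :: e :: t) (a :: e :: b :: a :: e :: t) :=
    .of_step (Step.swap [] (b :: a :: e :: t) e a hae.symm)
  have s3 : Rel (a :: e :: b :: a :: e :: t) (a :: e :: b :: e :: a :: t) :=
    .of_step (Step.swap [a, e, b] t a e hae)
  have s4 : Rel (a :: e :: b :: e :: a :: t) (a :: b :: e :: b :: a :: t) :=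
    .of_step (Step.braid [a] (a :: t) e b hbe.symm)
  exact ((s1.trans s2).trans s3).trans s4

/-- D2b, first word. -/
lemma calc_D2bX (hab : nbr a b) (hbe : far b e) (hae : nbr a e) :
    Rel (e :: a :: b :: a :: e :: t) (b :: a :: e :: a :: b :: t) := by
  have s1 : Rel (e :: a :: b :: a :: e :: t) (e :: b :: a :: b :: e :: t) :=
    .of_step (Step.braid [e] (e :: t) a b hab)
  have s2 : Rel (e :: b :: a :: b :: e :: t) (b :: e :: a :: b :: e :: t) :=
    .of_step (Step.swap [] (a :: b :: e :: t) e b hbe.symm)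
  have s3 : Rel (b :: e :: a :: b :: e :: t) (b :: e :: a :: e :: b :: t) :=
    .of_step (Step.swap [b, e, a] t b e hbe)
  have s4 : Rel (b :: e :: a :: e :: b :: t) (b :: a :: e :: a :: b :: t) :=
    .of_step (Step.braid [b] (b :: t) e a hae.symm)
  exact ((s1.trans s2).trans s3).trans s4

/-- D2b, second word. -/
lemma calc_D2bY (hab : nbr a b) (hbe : far b e) (hae : nbr a e) :
    Rel (e :: a :: b :: e :: a :: t) (a :: b :: e :: a :: b :: t) := by
  have s1 : Rel (e :: a :: b :: e :: a :: t) (e :: a :: e :: b :: a :: t) :=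
    .of_step (Step.swap [e, a] (a :: t) b e hbe)
  have s2 : Rel (e :: a :: e :: b :: a :: t) (a :: e :: a :: b :: a :: t) :=
    .of_step (Step.braid [] (b :: a :: t) e a hae.symm)
  have s3 : Rel (a :: e :: a :: b :: a :: t) (a :: e :: b :: a :: b :: t) :=
    .of_step (Step.braid [a, e] t a b hab)
  have s4 : Rel (a :: e :: b :: a :: b :: t) (a :: b :: e :: a :: b :: t) :=
    .of_step (Step.swap [a] (a :: b :: t) e b hbe.symm)
  exact ((s1.trans s2).trans s3).trans s4

/-- D3a, first word. -/
lemma calc_D3aX (hab : far a b) (hbe : nbr b e) (hae : nbr a e) :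
    Rel (e :: a :: b :: e :: a :: t) (b :: e :: a :: b :: e :: t) := by
  have s1 : Rel (e :: a :: b :: e :: a :: t) (e :: b :: a :: e :: a :: t) :=
    .of_step (Step.swap [e] (e :: a :: t) a b hab)
  have s2 : Rel (e :: b :: a :: e :: a :: t) (e :: b :: e :: a :: e :: t) :=
    .of_step (Step.braid [e, b] t a e hae)
  have s3 : Rel (e :: b :: e :: a :: e :: t) (b :: e :: b :: a :: e :: t) :=
    .of_step (Step.braid [] (a :: e :: t) e b hbe.symm)
  have s4 : Rel (b :: e :: b :: a :: e :: t) (b :: e :: a :: b :: e :: t) :=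
    .of_step (Step.swap [b, e] (e :: t) b a hab.symm)
  exact ((s1.trans s2).trans s3).trans s4

/-- D3a, second word. -/
lemma calc_D3aY (hab : far a b) (hbe : nbr b e) (hae : nbr a e) :
    Rel (e :: b :: a :: e :: b :: t) (a :: e :: a :: b :: e :: t) := by
  have s1 : Rel (e :: b :: a :: e :: b :: t) (e :: a :: b :: e :: b :: t) :=
    .of_step (Step.swap [e] (e :: b :: t) b a hab.symm)
  have s2 : Rel (e :: a :: b :: e :: b :: t) (e :: a :: e :: b :: e :: t) :=
    .of_step (Step.braid [e, a] t b e hbe)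
  have s3 : Rel (e :: a :: e :: b :: e :: t) (a :: e :: a :: b :: e :: t) :=
    .of_step (Step.braid [] (b :: e :: t) e a hae.symm)
  exact (s1.trans s2).trans s3

end Calc


variable {k : ℕ}

/-! ### Chains of given length -/

inductive RelN : ℕ → Wd k → Wd k → Prop
  | refl (u : Wd k) : RelN 0 u u
  | head {n : ℕ} {u v w : Wd k} : Step u v → RelN n v w → RelN (n + 1) u w

lemma RelN.tail {n : ℕ} {u v w : Wd k} (h : RelN n u v) (h2 : Step v w) :
    RelN (n + 1) u w := by
  induction h with
  | refl u => exact .head h2 (.refl _)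
  | head hs _ ih => exact .head hs (ih h2)

lemma rel_iff_relN {u v : Wd k} : Rel u v ↔ ∃ n, RelN n u v := by
  constructor
  · intro h
    induction h with
    | refl => exact ⟨0, .refl _⟩
    | tail _ h2 ih => obtain ⟨n, hn⟩ := ih; exact ⟨n + 1, hn.tail h2⟩
  · rintro ⟨n, hn⟩
    induction hn with
    | refl => exact .refl
    | head hs _ ih => exact (Rel.of_step hs).trans ih

lemma relN_zero {u v : Wd k} (h : RelN 0 u v) : u = v := by cases h; rfl

lemma step_cons_cases {a : Fin k} {u z : Wd k} (h : Step (a :: u) z) :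
    (∃ u', z = a :: u' ∧ Step u u') ∨
    (∃ e t, far a e ∧ u = e :: t ∧ z = e :: a :: t) ∨
    (∃ e t, nbr a e ∧ u = e :: a :: t ∧ z = e :: a :: e :: t) := by
  generalize hw : a :: u = w at h
  cases h with
  | swap x y c d hf =>
    cases x with
    | nil =>
      simp only [List.nil_append] at hw ⊢
      injection hw.symm with h1 h2
      subst h1; subst h2
      exact Or.inr (Or.inl ⟨d, y, hf, rfl, rfl⟩)
    | cons f x' =>
      simp only [List.cons_append] at hw ⊢
      injection hw.symm with h1 h2
      subst h1; subst h2
      exact Or.inl ⟨x' ++ d :: c :: y, rfl, Step.swap x' y c d hf⟩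
  | braid x y c d hf =>
    cases x with
    | nil =>
      simp only [List.nil_append] at hw ⊢
      injection hw.symm with h1 h2
      subst h1; subst h2
      exact Or.inr (Or.inr ⟨d, y, hf, rfl, rfl⟩)
    | cons f x' =>
      simp only [List.cons_append] at hw ⊢
      injection hw.symm with h1 h2
      subst h1; subst h2
      exact Or.inl ⟨x' ++ d :: c :: d :: y, rfl, Step.braid x' y c d hf⟩

/-! ### The key lemma (Garside) -/

theorem keyN : ∀ L : ℕ, ∀ n : ℕ, ∀ (u v : Wd k) (a b : Fin k),
    (a :: u).length ≤ L → RelN n (a :: u) (b :: v) →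
    ∃ w, Rel u (cw a b ++ w) ∧ Rel v (cw b a ++ w) := by
  intro L
  induction L with
  | zero => intro n u v a b hl; simp at hl
  | succ L ihL =>
    have ihR : ∀ (u v : Wd k) (a b : Fin k), (a :: u).length ≤ L → Rel (a :: u) (b :: v) →
        ∃ w, Rel u (cw a b ++ w) ∧ Rel v (cw b a ++ w) := by
      intro u v a b hl hr
      obtain ⟨n, hn⟩ := rel_iff_relN.mp hr
      exact ihL n u v a b hl hn
    intro n
    induction n using Nat.strong_induction_on with
    | _ n ihn =>
    intro u v a b hlen hch
    rcases n with _ | m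
    · have h' := relN_zero hch
      injection h' with h1 h2
      subst h1; subst h2
      exact ⟨u, by simpa using Rel.refl, by simpa using Rel.refl⟩
    · cases hch with
    | head hstep hrest =>
      rcases step_cons_cases hstep with ⟨u₁, rfl, hstep'⟩ | ⟨e, t, hae, rfl, rfl⟩ |
        ⟨e, t, hae, rfl, rfl⟩
      · -- step inside the tail
        have hl : (a :: u₁).length ≤ L + 1 := by
          have := hstep'.length
          simp only [List.length_cons] at hlen ⊢
          omega
        obtain ⟨w, hw1, hw2⟩ := ihn m (by omega) u₁ v a b hl hrest
        exact ⟨w, (Rel.of_step hstep').trans hw1, hw2⟩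
      · -- far swap at the head :  a :: e :: t  →  e :: a :: t
        have hml : (e :: a :: t).length ≤ L + 1 := by
          simp only [List.length_cons] at hlen ⊢; omega
        obtain ⟨w₁, h1, h2⟩ := ihn m (by omega) (a :: t) v e b hml hrest
        by_cases hbe : b = e
        · -- case A
          subst hbe
          simp only [cw_self, List.nil_append] at h1 h2
          refine ⟨t, ?_, ?_⟩
          · rw [cw_far hae]; exact Rel.refl
          · rw [cw_far hae.symm]; exact h2.trans h1.symm
        · by_cases hba : b = a
          · -- case B
            subst hba
            rw [cw_far hae.symm] at h1
            rw [cw_far hae] at h2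
            have hl2 : (b :: t).length ≤ L := by
              simp only [List.length_cons] at hlen ⊢; omega
            obtain ⟨w₂, g1, g2⟩ := ihR t w₁ b b hl2 h1
            simp only [cw_self, List.nil_append] at g1 g2 ⊢
            exact ⟨e :: w₂, g1.cons e, h2.trans (g2.cons e)⟩
          · have hab' : a ≠ b := fun h => hba h.symm
            have heb' : e ≠ b := fun h => hbe h.symm
            have hl2 : (a :: t).length ≤ L := by
              simp only [List.length_cons] at hlen ⊢; omega
            rcases far_or_nbr heb' with hEB | hEB <;> rcases far_or_nbr hab' with hAB | hAB
            · -- C1 : far e b, far a b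
              rw [cw_far hEB] at h1
              rw [cw_far hEB.symm] at h2
              obtain ⟨w₂, g1, g2⟩ := ihR t w₁ a b hl2 h1
              rw [cw_far hAB] at g1
              rw [cw_far hAB.symm] at g2
              refine ⟨e :: w₂, ?_, ?_⟩
              · rw [cw_far hAB]
                exact (g1.cons e).trans (Rel.swap₀ hEB w₂)
              · rw [cw_far hAB.symm]
                exact ((h2.trans (g2.cons e))).trans (Rel.swap₀ hae.symm w₂)
            · -- C2 : far e b, nbr a b
              rw [cw_far hEB] at h1
              rw [cw_far hEB.symm] at h2
              obtain ⟨w₂, g1, g2⟩ := ihR t w₁ a b hl2 h1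
              rw [cw_nbr hAB] at g1
              rw [cw_nbr hAB.symm] at g2
              refine ⟨e :: w₂, ?_, ?_⟩
              · rw [cw_nbr hAB]
                exact ((g1.cons e).trans (Rel.swap₀ hEB (a :: w₂))).trans
                  (Rel.of_step (Step.swap [b] w₂ e a hae.symm))
              · rw [cw_nbr hAB.symm]
                exact ((h2.trans (g2.cons e)).trans (Rel.swap₀ hae.symm (b :: w₂))).trans
                  (Rel.of_step (Step.swap [a] w₂ e b hEB))
            · -- C3 : nbr e b, far a b
              rw [cw_nbr hEB] at h1
              rw [cw_nbr hEB.symm] at h2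
              obtain ⟨w₂, g1, g2⟩ := ihR t (e :: w₁) a b hl2 h1
              rw [cw_far hAB] at g1
              rw [cw_far hAB.symm] at g2
              have hl3 : (e :: w₁).length ≤ L := by
                have := h1.length
                simp only [List.length_cons, List.length_append, List.length_nil] at hlen this ⊢; omega
              obtain ⟨w₃, g3, g4⟩ := ihR w₁ w₂ e a hl3 g2
              rw [cw_far hae.symm] at g3
              rw [cw_far hae] at g4
              refine ⟨e :: b :: w₃, ?_, ?_⟩
              · rw [cw_far hAB]
                exact ((g1.cons e).trans ((g4.cons b).cons e)).trans
                  (Rel.braid₀ hEB w₃)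
              · rw [cw_far hAB.symm]
                refine ((h2.trans ((g3.cons b).cons e)).trans ?_)
                exact (Rel.of_step (Step.swap [e] w₃ b a hAB.symm)).trans
                  (Rel.of_step (Step.swap [] (b :: w₃) e a hae.symm))
            · -- C4 : nbr e b, nbr a b
              rw [cw_nbr hEB] at h1
              rw [cw_nbr hEB.symm] at h2
              obtain ⟨w₂, g1, g2⟩ := ihR t (e :: w₁) a b hl2 h1
              rw [cw_nbr hAB] at g1
              rw [cw_nbr hAB.symm] at g2
              have hl3 : (e :: w₁).length ≤ L := by
                have := h1.length
                simp only [List.length_cons, List.length_append, List.length_nil] at hlen this ⊢; omega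
              obtain ⟨w₃, g3, g4⟩ := ihR w₁ (b :: w₂) e a hl3 g2
              rw [cw_far hae.symm] at g3
              rw [cw_far hae] at g4
              have hl4 : (b :: w₂).length ≤ L := by
                have := g1.length
                simp only [List.length_cons, List.cons_append, List.length_append, List.length_nil] at hlen this ⊢
                omega
              obtain ⟨w₄, g5, g6⟩ := ihR w₂ w₃ b e hl4 g4
              rw [cw_nbr hEB.symm] at g5
              rw [cw_nbr hEB] at g6
              refine ⟨e :: b :: a :: w₄, ?_, ?_⟩
              · rw [cw_nbr hAB]
                refine (g1.cons e).trans ?_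
                refine (((g5.cons a).cons b).cons e).trans ?_
                exact calc_C4X w₄ hAB hEB.symm hae
              · rw [cw_nbr hAB.symm]
                refine (h2.trans ((g3.cons b).cons e)).trans ?_
                refine ((((g6.cons a).cons b).cons e)).trans ?_
                exact calc_C4Y w₄ hAB hEB.symm hae
      · -- braid step at the head :  a :: e :: a :: t  →  e :: a :: e :: t
        have hml : (e :: a :: e :: t).length ≤ L + 1 := by
          simp only [List.length_cons] at hlen ⊢; omega
        obtain ⟨w₁, h1, h2⟩ := ihn m (by omega) (a :: e :: t) v e b hml hrest
        by_cases hbe : b = e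
        · -- case D0
          subst hbe
          simp only [cw_self, List.nil_append] at h1 h2
          refine ⟨t, ?_, ?_⟩
          · rw [cw_nbr hae]; exact Rel.refl
          · rw [cw_nbr hae.symm]; exact h2.trans h1.symm
        · by_cases hba : b = a
          · -- case D1
            subst hba
            rw [cw_nbr hae.symm] at h1
            rw [cw_nbr hae] at h2
            have hl2 : (b :: e :: t).length ≤ L := by
              simp only [List.length_cons] at hlen ⊢; omega
            obtain ⟨w₂, g1, g2⟩ := ihR (e :: t) (e :: w₁) b b hl2 h1
            simp only [cw_self, List.nil_append] at g1 g2
            have hg : Rel (e :: t) (e :: w₁) := g1.trans g2.symm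
            have hl3 : (e :: t).length ≤ L := by
              simp only [List.length_cons] at hlen ⊢; omega
            obtain ⟨w₃, g3, g4⟩ := ihR t w₁ e e hl3 hg
            simp only [cw_self, List.nil_append] at g3 g4 ⊢
            exact ⟨e :: b :: w₃, (g3.cons b).cons e, h2.trans ((g4.cons b).cons e)⟩
          · have hab' : a ≠ b := fun h => hba h.symm
            have heb' : e ≠ b := fun h => hbe h.symm
            have hl2 : (a :: e :: t).length ≤ L := by
              simp only [List.length_cons] at hlen ⊢; omega
            rcases far_or_nbr heb' with hEB | hEB <;> rcases far_or_nbr hab' with hAB | hAB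
            · -- D2a : far e b, far a b
              rw [cw_far hEB] at h1
              rw [cw_far hEB.symm] at h2
              obtain ⟨w₂, g1, g2⟩ := ihR (e :: t) w₁ a b hl2 h1
              rw [cw_far hAB] at g1
              rw [cw_far hAB.symm] at g2
              have hl3 : (e :: t).length ≤ L := by
                simp only [List.length_cons] at hlen ⊢; omega
              obtain ⟨w₃, g3, g4⟩ := ihR t w₂ e b hl3 g1
              rw [cw_far hEB] at g3
              rw [cw_far hEB.symm] at g4
              refine ⟨e :: a :: w₃, ?_, ?_⟩
              · rw [cw_far hAB]
                exact (((g3.cons a).cons e).trans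
                  (Rel.of_step (Step.swap [e] w₃ a b hAB))).trans (Rel.swap₀ hEB (a :: w₃))
              · rw [cw_far hAB.symm]
                exact ((h2.trans (g2.cons e)).trans ((g4.cons a).cons e)).trans
                  (Rel.braid₀ hae.symm w₃)
            · -- D2b : far e b, nbr a b
              rw [cw_far hEB] at h1
              rw [cw_far hEB.symm] at h2
              obtain ⟨w₂, g1, g2⟩ := ihR (e :: t) w₁ a b hl2 h1
              rw [cw_nbr hAB] at g1
              rw [cw_nbr hAB.symm] at g2
              have hl3 : (e :: t).length ≤ L := by
                simp only [List.length_cons] at hlen ⊢; omega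
              obtain ⟨w₃, g3, g4⟩ := ihR t (a :: w₂) e b hl3 g1
              rw [cw_far hEB] at g3
              rw [cw_far hEB.symm] at g4
              have hl4 : (a :: w₂).length ≤ L := by
                have := g1.length
                simp only [List.length_cons, List.cons_append, List.length_append, List.length_nil] at hlen this ⊢
                omega
              obtain ⟨w₄, g5, g6⟩ := ihR w₂ w₃ a e hl4 g4
              rw [cw_nbr hae] at g5
              rw [cw_nbr hae.symm] at g6
              refine ⟨e :: a :: b :: w₄, ?_, ?_⟩
              · rw [cw_nbr hAB]
                refine ((g3.cons a).cons e).trans ?_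
                refine ((((g6.cons b).cons a).cons e)).trans ?_
                exact calc_D2bX w₄ hAB hEB.symm hae
              · rw [cw_nbr hAB.symm]
                refine (h2.trans (g2.cons e)).trans ?_
                refine ((((g5.cons b).cons a).cons e)).trans ?_
                exact calc_D2bY w₄ hAB hEB.symm hae
            · -- D3a : nbr e b, far a b
              rw [cw_nbr hEB] at h1
              rw [cw_nbr hEB.symm] at h2
              obtain ⟨w₂, g1, g2⟩ := ihR (e :: t) (e :: w₁) a b hl2 h1
              rw [cw_far hAB] at g1
              rw [cw_far hAB.symm] at g2
              have hl3 : (e :: w₁).length ≤ L := by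
                have := h1.length
                simp only [List.length_cons, List.cons_append, List.length_append, List.length_nil] at hlen this ⊢
                omega
              obtain ⟨w₄, g3, g4⟩ := ihR w₁ w₂ e a hl3 g2
              rw [cw_nbr hae.symm] at g3
              rw [cw_nbr hae] at g4
              have hg1 : Rel (e :: t) (b :: e :: a :: w₄) := g1.trans (g4.cons b)
              have hl5 : (e :: t).length ≤ L := by
                simp only [List.length_cons] at hlen ⊢; omega
              obtain ⟨w₅, g5, g6⟩ := ihR t (e :: a :: w₄) e b hl5 hg1
              rw [cw_nbr hEB] at g5
              rw [cw_nbr hEB.symm] at g6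
              have hl6 : (e :: a :: w₄).length ≤ L := by
                have e1 := g2.length
                have e2 := g1.length
                have e3 := g4.length
                simp only [List.length_cons, List.cons_append, List.length_append,
                  List.length_nil] at hlen e1 e2 e3 ⊢
                omega
              obtain ⟨w₆, g7, g8⟩ := ihR (a :: w₄) (b :: w₅) e e hl6 g6
              simp only [cw_self, List.nil_append] at g7 g8
              have hg2 : Rel (a :: w₄) (b :: w₅) := g7.trans g8.symm
              have hl7 : (a :: w₄).length ≤ L := by
                have e1 := g2.length
                have e2 := g1.length
                have e3 := g4.length
                simp only [List.length_cons, List.cons_append, List.length_append,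
                  List.length_nil] at hlen e1 e2 e3 ⊢
                omega
              obtain ⟨w₇, g9, g10⟩ := ihR w₄ w₅ a b hl7 hg2
              rw [cw_far hAB] at g9
              rw [cw_far hAB.symm] at g10
              refine ⟨e :: a :: b :: e :: w₇, ?_, ?_⟩
              · rw [cw_far hAB]
                refine ((g5.cons a).cons e).trans ?_
                refine (((((g10.cons e).cons b).cons a).cons e)).trans ?_
                exact calc_D3aX w₇ hAB hEB.symm hae
              · rw [cw_far hAB.symm]
                refine (h2.trans ((g3.cons b).cons e)).trans ?_
                refine (((((g9.cons e).cons a).cons b).cons e)).trans ?_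
                exact calc_D3aY w₇ hAB hEB.symm hae
            · -- D3b : impossible
              exfalso
              unfold nbr at hae hEB hAB
              omega

theorem key {u v : Wd k} {a b : Fin k} (h : Rel (a :: u) (b :: v)) :
    ∃ w, Rel u (cw a b ++ w) ∧ Rel v (cw b a ++ w) := by
  obtain ⟨n, hn⟩ := rel_iff_relN.mp h
  exact keyN (a :: u).length n u v a b le_rfl hn


variable {k : ℕ}

/-! ### Cancellation -/

theorem cancel_head {a : Fin k} {u v : Wd k} (h : Rel (a :: u) (a :: v)) : Rel u v := by
  obtain ⟨w, h1, h2⟩ := key h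
  simp only [cw_self, List.nil_append] at h1 h2
  exact h1.trans h2.symm

theorem cancel_left (x : Wd k) {u v : Wd k} (h : Rel (x ++ u) (x ++ v)) : Rel u v := by
  induction x with
  | nil => exact h
  | cons a x ih => exact ih (cancel_head h)

lemma Step.rev {u v : Wd k} (h : Step u v) : Step u.reverse v.reverse := by
  cases h with
  | swap x y a b hf =>
      have := Step.swap (k := k) y.reverse x.reverse b a hf.symm
      simpa [List.reverse_append] using this
  | braid x y a b hf =>
      have := Step.braid (k := k) y.reverse x.reverse a b hf
      simpa [List.reverse_append] using this

lemma Rel.rev {u v : Wd k} (h : Rel u v) : Rel u.reverse v.reverse := by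
  induction h with
  | refl => exact .refl
  | tail _ h2 ih => exact ih.trans (.of_step h2.rev)

theorem cancel_right (x : Wd k) {u v : Wd k} (h : Rel (u ++ x) (v ++ x)) : Rel u v := by
  have h2 := h.rev
  simp only [List.reverse_append] at h2
  have h3 := (cancel_left x.reverse h2).rev
  simpa using h3

/-! ### Divisibility of words -/

/-- `u` left-divides `v` modulo braid relations. -/
def Dvd (u v : Wd k) : Prop := ∃ w, Rel (u ++ w) v

lemma Dvd.refl (u : Wd k) : Dvd u u := ⟨[], by simp; exact Rel.refl⟩

lemma Dvd.of_rel {u v : Wd k} (h : Rel u v) : Dvd u v := ⟨[], by simpa using h⟩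

lemma Dvd.trans {u v z : Wd k} (h1 : Dvd u v) (h2 : Dvd v z) : Dvd u z := by
  obtain ⟨w, hw⟩ := h1
  obtain ⟨w', hw'⟩ := h2
  exact ⟨w ++ w', by rw [← List.append_assoc]; exact ((hw.append_right w').trans hw')⟩

lemma Dvd.rel_left {u u' v : Wd k} (h : Rel u u') (hd : Dvd u' v) : Dvd u v := by
  obtain ⟨w, hw⟩ := hd
  exact ⟨w, (h.append_right w).trans hw⟩

lemma Dvd.rel_right {u v v' : Wd k} (hd : Dvd u v) (h : Rel v v') : Dvd u v' := by
  obtain ⟨w, hw⟩ := hd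
  exact ⟨w, hw.trans h⟩

lemma Dvd.append_right {u v : Wd k} (h : Dvd u v) (x : Wd k) : Dvd u (v ++ x) := by
  obtain ⟨w, hw⟩ := h
  exact ⟨w ++ x, by rw [← List.append_assoc]; exact hw.append_right x⟩

lemma Dvd.nil (u : Wd k) : Dvd [] u := ⟨u, by simp; exact Rel.refl⟩

lemma Dvd.length_le {u v : Wd k} (h : Dvd u v) : u.length ≤ v.length := by
  obtain ⟨w, hw⟩ := h
  have := hw.length
  simp only [List.length_append] at this
  omega

lemma Dvd.cons_cancel {a : Fin k} {u v : Wd k} (h : Dvd (a :: u) (a :: v)) : Dvd u v := by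
  obtain ⟨w, hw⟩ := h
  exact ⟨w, cancel_head hw⟩

lemma Dvd.cons (a : Fin k) {u v : Wd k} (h : Dvd u v) : Dvd (a :: u) (a :: v) := by
  obtain ⟨w, hw⟩ := h
  exact ⟨w, hw.cons a⟩

lemma rel_of_dvd_of_length {u v : Wd k} (h : Dvd u v) (hl : v.length ≤ u.length) : Rel u v := by
  obtain ⟨w, hw⟩ := h
  have := hw.length
  simp only [List.length_append] at this
  have : w = [] := List.eq_nil_of_length_eq_zero (by omega)
  subst this
  simpa using hw

/-- The lcm of two distinct generators, as a word starting with `a`. -/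
lemma mu_comm {a b : Fin k} : Rel (a :: cw a b) (b :: cw b a) := by
  by_cases hab : a = b
  · subst hab; exact Rel.refl
  · rcases far_or_nbr hab with h | h
    · rw [cw_far h, cw_far h.symm]; exact Rel.swap₀ h []
    · rw [cw_nbr h, cw_nbr h.symm]; exact Rel.braid₀ h []

/-- Key lemma, divisibility form: the lcm of two generators divides any common multiple. -/
theorem atom_lcm {a b : Fin k} {z : Wd k} (ha : Dvd [a] z) (hb : Dvd [b] z) :
    Dvd (a :: cw a b) z := by
  obtain ⟨u, hu⟩ := ha
  obtain ⟨v, hv⟩ := hb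
  simp only [List.cons_append, List.nil_append] at hu hv
  obtain ⟨w, h1, h2⟩ := key (hu.trans hv.symm)
  refine ⟨w, ?_⟩
  simp only [List.cons_append]
  exact ((h1.cons a).symm).trans hu


variable {k : ℕ}

/-! ### Commuting a letter past a word of far letters -/

lemma commute_far {x : Fin k} : ∀ {w : Wd k}, (∀ y ∈ w, far x y) → Rel (x :: w) (w ++ [x])
  | [], _ => Rel.refl
  | y :: w, h => by
      have h1 : Rel (x :: y :: w) (y :: x :: w) := Rel.swap₀ (h y (by simp)) w
      have h2 : Rel (x :: w) (w ++ [x]) := commute_far (fun z hz => h z (by simp [hz]))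
      exact h1.trans (h2.cons y)

section Delta

variable (hk : 0 < k)

/-- The `i`-th letter (clamped). -/
def ltr (i : ℕ) : Fin k := ⟨min i (k - 1), by omega⟩

lemma ltr_val {i : ℕ} (h : i < k) : (ltr hk i).val = i := by simp [ltr]; omega

lemma ltr_self (x : Fin k) : ltr hk x.val = x := Fin.ext (ltr_val hk x.isLt)

/-- Ascending word `[s, s+1, …, t-1]`. -/
def asc (s t : ℕ) : Wd k := (List.range' s (t - s)).map (ltr hk)

/-- Descending word `[t-1, …, s+1, s]`. -/
def desc (s t : ℕ) : Wd k := ((List.range' s (t - s)).reverse).map (ltr hk)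

lemma desc_eq_reverse_asc (s t : ℕ) : desc hk s t = (asc hk s t).reverse := by
  simp [asc, desc]

lemma asc_split {s r t : ℕ} (h1 : s ≤ r) (h2 : r ≤ t) :
    asc hk s t = asc hk s r ++ asc hk r t := by
  unfold asc
  rw [← List.map_append]
  congr 1
  have := List.range'_append_1 (s := s) (m := r - s) (n := t - r)
  rw [show s + (r - s) = r by omega] at this
  rw [show r - s + (t - r) = t - s by omega] at this
  exact this.symm

lemma desc_split {s r t : ℕ} (h1 : s ≤ r) (h2 : r ≤ t) :
    desc hk s t = desc hk r t ++ desc hk s r := by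
  rw [desc_eq_reverse_asc, asc_split hk h1 h2, List.reverse_append,
    desc_eq_reverse_asc, desc_eq_reverse_asc]

lemma asc_concat {s t : ℕ} (h : s ≤ t) : asc hk s (t + 1) = asc hk s t ++ [ltr hk t] := by
  unfold asc
  rw [show t + 1 - s = (t - s) + 1 by omega, List.range'_1_concat,
    show s + (t - s) = t by omega, List.map_append]
  rfl

lemma desc_cons {s t : ℕ} (h : s ≤ t) : desc hk s (t + 1) = ltr hk t :: desc hk s t := by
  rw [desc_eq_reverse_asc, asc_concat hk h, List.reverse_append, desc_eq_reverse_asc]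
  rfl

lemma asc_nil (s : ℕ) : asc hk s s = [] := by simp [asc]

lemma asc_one (s : ℕ) : asc hk s (s + 1) = [ltr hk s] := by
  rw [asc_concat hk le_rfl, asc_nil]; rfl

lemma desc_one (s : ℕ) : desc hk s (s + 1) = [ltr hk s] := by
  rw [desc_cons hk le_rfl, desc_nil]
  where desc_nil : desc hk s s = [] := by simp [desc]

lemma mem_asc {y : Fin k} {s t : ℕ} (ht : t ≤ k) (hy : y ∈ asc hk s t) :
    s ≤ y.val ∧ y.val < t := by
  obtain ⟨i, hi, rfl⟩ := List.mem_map.mp hy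
  have h2 := List.mem_range'_1.mp hi
  have hit : i < t := by omega
  rw [ltr_val hk (by omega)]
  omega

lemma mem_desc {y : Fin k} {s t : ℕ} (ht : t ≤ k) (hy : y ∈ desc hk s t) :
    s ≤ y.val ∧ y.val < t := by
  rw [desc_eq_reverse_asc] at hy
  exact mem_asc hk ht (List.mem_reverse.mp hy)

/-- The Garside fundamental word on the first `m` letters. -/
def Dl : ℕ → Wd k
  | 0 => []
  | m + 1 => Dl m ++ desc hk 0 (m + 1)

lemma Dl_support : ∀ {m : ℕ}, m ≤ k → ∀ {y : Fin k}, y ∈ Dl hk m → y.val < m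
  | 0, _, y, hy => by simp [Dl] at hy
  | m + 1, hm, y, hy => by
      rw [Dl, List.mem_append] at hy
      rcases hy with hy | hy
      · have := Dl_support (by omega) hy; omega
      · exact (mem_desc hk hm hy).2

/-- Left shift: `σᵢ · A_m ≈ A_m · σᵢ₊₁`. -/
lemma lshift {i m : ℕ} (him : i + 1 < m) (hmk : m ≤ k) :
    Rel (ltr hk i :: desc hk 0 m) (desc hk 0 m ++ [ltr hk (i + 1)]) := by
  set x := ltr hk i with hx
  set x1 := ltr hk (i + 1) with hx1
  have hvx : x.val = i := ltr_val hk (by omega)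
  have hvx1 : x1.val = i + 1 := ltr_val hk (by omega)
  have e0 : desc hk 0 m = desc hk (i + 2) m ++ (x1 :: x :: desc hk 0 i) := by
    rw [desc_split hk (show 0 ≤ i + 2 by omega) (show i + 2 ≤ m by omega)]
    congr 1
    rw [show i + 2 = (i + 1) + 1 from rfl, desc_cons hk (by omega), desc_cons hk (by omega)]
  rw [e0]
  set D := desc hk (i + 2) m with hD
  set low := desc hk 0 i with hlow
  have hfarD : ∀ y ∈ D, far x y := by
    intro y hy
    have := (mem_desc hk hmk hy).1
    exact Or.inl (by omega)
  have hfarlow : ∀ y ∈ low, far x1 y := by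
    intro y hy
    have := (mem_desc hk (by omega) hy).2
    exact Or.inr (by omega)
  have hnbr : nbr x x1 := Or.inl (by omega)
  have c1 : Rel (x :: (D ++ (x1 :: x :: low))) (D ++ (x :: x1 :: x :: low)) := by
    have := (commute_far hfarD).append_right (x1 :: x :: low)
    simpa using this
  have c2 : Rel (D ++ (x :: x1 :: x :: low)) (D ++ (x1 :: x :: x1 :: low)) :=
    Rel.of_step (Step.braid D low x x1 hnbr)
  have c3 : Rel (D ++ (x1 :: x :: x1 :: low)) (D ++ (x1 :: x :: (low ++ [x1]))) := by
    have := (commute_far hfarlow).append_left (D ++ [x1, x])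
    simpa using this
  have fin : (D ++ (x1 :: x :: (low ++ [x1]))) = (D ++ (x1 :: x :: low)) ++ [x1] := by
    simp
  exact ((c1.trans c2).trans c3).trans (by rw [fin]; exact Rel.refl)

/-- Right shift: `σᵢ₊₁ · R_m ≈ R_m · σᵢ`. -/
lemma rshift {i m : ℕ} (him : i + 1 < m) (hmk : m ≤ k) :
    Rel (ltr hk (i + 1) :: asc hk 0 m) (asc hk 0 m ++ [ltr hk i]) := by
  have h := (lshift hk him hmk).rev
  rw [desc_eq_reverse_asc] at h
  simp only [List.reverse_cons, List.reverse_append, List.reverse_reverse,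
    List.reverse_singleton] at h
  exact h.symm

end Delta


variable {k : ℕ}

section Delta2

variable (hk : 0 < k)

lemma Dl_one : Dl hk 1 = [ltr hk 0] := by
  show Dl hk 0 ++ desc hk 0 (0 + 1) = _
  rw [desc_one]; rfl

/-- Alternative decomposition `Δ_{m+1} ≈ R_{m+1} · Δ_m`. -/
lemma deltaAlt : ∀ m : ℕ, m + 1 ≤ k → Rel (Dl hk (m + 1)) (asc hk 0 (m + 1) ++ Dl hk m)
  | 0, h => by
      rw [Dl_one, asc_one]
      show Rel [ltr hk 0] ([ltr hk 0] ++ Dl hk 0)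
      exact Rel.refl
  | m + 1, h => by
      have ih := deltaAlt m (by omega)
      have c1 : Rel (Dl hk (m + 2)) ((asc hk 0 (m + 1) ++ Dl hk m) ++ desc hk 0 (m + 2)) := by
        show Rel (Dl hk (m + 1) ++ desc hk 0 (m + 2)) _
        exact ih.append_right _
      set x := ltr hk (m + 1) with hx
      have hvx : x.val = m + 1 := ltr_val hk (by omega)
      have e0 : desc hk 0 (m + 2) = x :: desc hk 0 (m + 1) := desc_cons hk (by omega)
      have hfar : ∀ y ∈ Dl hk m, far x y := by
        intro y hy
        have := Dl_support hk (by omega) hy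
        exact Or.inr (by omega)
      have c2 : Rel ((asc hk 0 (m + 1) ++ Dl hk m) ++ desc hk 0 (m + 2))
          (asc hk 0 (m + 1) ++ (x :: (Dl hk m ++ desc hk 0 (m + 1)))) := by
        rw [e0]
        have := ((commute_far hfar).symm.append_right (desc hk 0 (m + 1))).append_left
          (asc hk 0 (m + 1))
        simpa using this
      have e1 : asc hk 0 (m + 1) ++ (x :: (Dl hk m ++ desc hk 0 (m + 1)))
          = asc hk 0 (m + 2) ++ Dl hk (m + 1) := by
        rw [show asc hk 0 (m + 2) = asc hk 0 (m + 1) ++ [x] from asc_concat hk (by omega)]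
        show _ = (asc hk 0 (m + 1) ++ [x]) ++ (Dl hk m ++ desc hk 0 (m + 1))
        simp
      exact (c1.trans c2).trans (by rw [e1]; exact Rel.refl)

/-- Every letter `σᵢ`, `i < m`, is a left divisor of `Δ_m`. -/
lemma headDiv : ∀ m : ℕ, m ≤ k → ∀ i : ℕ, i < m → ∃ d, Rel (Dl hk m) (ltr hk i :: d)
  | 0, _, i, hi => absurd hi (by omega)
  | m + 1, hm, i, hi => by
      rcases Nat.lt_or_ge i m with him | him
      · obtain ⟨d, hd⟩ := headDiv m (by omega) i him
        refine ⟨d ++ desc hk 0 (m + 1), ?_⟩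
        show Rel (Dl hk m ++ desc hk 0 (m + 1)) _
        have := hd.append_right (desc hk 0 (m + 1))
        simpa using this
      · have hi' : i = m := by omega
        subst hi'
        rcases Nat.eq_zero_or_pos i with rfl | hipos
        · exact ⟨[], by rw [Dl_one]; exact Rel.refl⟩
        · obtain ⟨d', hd'⟩ := headDiv i (by omega) (i - 1) (by omega)
          have c1 := deltaAlt hk i hm
          have c2 : Rel (asc hk 0 (i + 1) ++ Dl hk i)
              ((asc hk 0 (i + 1) ++ [ltr hk (i - 1)]) ++ d') := by
            have := hd'.append_left (asc hk 0 (i + 1))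
            simpa using this
          have c3 : Rel ((asc hk 0 (i + 1) ++ [ltr hk (i - 1)]) ++ d')
              (ltr hk i :: (asc hk 0 (i + 1) ++ d')) := by
            have hr := (rshift hk (i := i - 1) (m := i + 1) (by omega) hm).symm
            rw [show i - 1 + 1 = i by omega] at hr
            have := hr.append_right d'
            simpa using this
          exact ⟨asc hk 0 (i + 1) ++ d', (c1.trans c2).trans c3⟩

/-- Conjugation by `Δ_m` : `σᵢ Δ_m ≈ Δ_m σ_{m-1-i}`. -/
lemma deltaConj : ∀ m : ℕ, m ≤ k → ∀ i : ℕ, i < m →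
    Rel (ltr hk i :: Dl hk m) (Dl hk m ++ [ltr hk (m - 1 - i)])
  | 0, _, i, hi => absurd hi (by omega)
  | m + 1, hm, i, hi => by
      rcases Nat.eq_zero_or_pos i with rfl | hipos
      · rcases Nat.eq_zero_or_pos m with rfl | hmpos
        · rw [Dl_one]
          show Rel [ltr hk 0, ltr hk 0] ([ltr hk 0] ++ [ltr hk 0])
          exact Rel.refl
        · have ih := deltaConj m (by omega) 0 hmpos
          have c1 : Rel (ltr hk 0 :: Dl hk (m + 1))
              (Dl hk m ++ (ltr hk (m - 1) :: desc hk 0 (m + 1))) := by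
            show Rel (ltr hk 0 :: (Dl hk m ++ desc hk 0 (m + 1))) _
            have := ih.append_right (desc hk 0 (m + 1))
            simpa using this
          have c2 : Rel (Dl hk m ++ (ltr hk (m - 1) :: desc hk 0 (m + 1)))
              (Dl hk m ++ (desc hk 0 (m + 1) ++ [ltr hk m])) := by
            have hl := lshift hk (i := m - 1) (m := m + 1) (by omega) hm
            rw [show m - 1 + 1 = m by omega] at hl
            exact hl.append_left _
          have e1 : Dl hk m ++ (desc hk 0 (m + 1) ++ [ltr hk m])
              = Dl hk (m + 1) ++ [ltr hk (m + 1 - 1 - 0)] := by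
            show _ = (Dl hk m ++ desc hk 0 (m + 1)) ++ _
            simp
          exact (c1.trans c2).trans (by rw [e1]; exact Rel.refl)
      · have ih := deltaConj m (by omega) (i - 1) (by omega)
        have c1 : Rel (ltr hk i :: Dl hk (m + 1))
            (ltr hk i :: (asc hk 0 (m + 1) ++ Dl hk m)) :=
          (deltaAlt hk m hm).cons _
        have c2 : Rel (ltr hk i :: (asc hk 0 (m + 1) ++ Dl hk m))
            (asc hk 0 (m + 1) ++ (ltr hk (i - 1) :: Dl hk m)) := by
          have hr := rshift hk (i := i - 1) (m := m + 1) (by omega) hm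
          rw [show i - 1 + 1 = i by omega] at hr
          have := hr.append_right (Dl hk m)
          simpa using this
        have c3 : Rel (asc hk 0 (m + 1) ++ (ltr hk (i - 1) :: Dl hk m))
            (asc hk 0 (m + 1) ++ (Dl hk m ++ [ltr hk (m - 1 - (i - 1))])) :=
          ih.append_left _
        have c4 : Rel (asc hk 0 (m + 1) ++ (Dl hk m ++ [ltr hk (m - 1 - (i - 1))]))
            (Dl hk (m + 1) ++ [ltr hk (m + 1 - 1 - i)]) := by
          rw [show m - 1 - (i - 1) = m + 1 - 1 - i by omega]
          have := ((deltaAlt hk m hm).symm).append_right [ltr hk (m + 1 - 1 - i)]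
          simpa using this
        exact ((c1.trans c2).trans c3).trans c4

/-- Conjugating a single letter past `Δ = Δ_k`. -/
lemma conj_letter (x : Fin k) :
    Rel (x :: Dl hk k) (Dl hk k ++ [ltr hk (k - 1 - x.val)]) := by
  have := deltaConj hk k le_rfl x.val x.isLt
  rwa [ltr_self] at this

lemma headDiv_letter (x : Fin k) : ∃ d, Rel (Dl hk k) (x :: d) := by
  obtain ⟨d, hd⟩ := headDiv hk k le_rfl x.val x.isLt
  rw [ltr_self] at hd
  exact ⟨d, hd⟩

lemma wconj : ∀ w : Wd k, ∃ w', Rel (w ++ Dl hk k) (Dl hk k ++ w')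
  | [] => ⟨[], by simpa using Rel.refl⟩
  | x :: w => by
      obtain ⟨w', hw'⟩ := wconj w
      refine ⟨ltr hk (k - 1 - x.val) :: w', ?_⟩
      have c1 : Rel (x :: (w ++ Dl hk k)) (x :: (Dl hk k ++ w')) := hw'.cons x
      have c2 : Rel (x :: (Dl hk k ++ w')) ((Dl hk k ++ [ltr hk (k - 1 - x.val)]) ++ w') := by
        have := (conj_letter hk x).append_right w'
        simpa using this
      have e : (Dl hk k ++ [ltr hk (k - 1 - x.val)]) ++ w'
          = Dl hk k ++ (ltr hk (k - 1 - x.val) :: w') := by simp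
      exact (c1.trans c2).trans (by rw [e]; exact Rel.refl)

/-- Powers of Δ. -/
def Dp : ℕ → Wd k
  | 0 => []
  | m + 1 => Dl hk k ++ Dp m

lemma Dp_add : ∀ a b : ℕ, Dp hk (a + b) = Dp hk a ++ Dp hk b
  | 0, b => by simp [Dp]
  | a + 1, b => by
      rw [show a + 1 + b = (a + b) + 1 by omega]
      show Dl hk k ++ Dp hk (a + b) = (Dl hk k ++ Dp hk a) ++ Dp hk b
      rw [Dp_add a b, List.append_assoc]

lemma wconj_pow : ∀ (m : ℕ) (w : Wd k), ∃ w', Rel (w ++ Dp hk m) (Dp hk m ++ w')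
  | 0, w => ⟨w, by simpa [Dp] using Rel.refl⟩
  | m + 1, w => by
      obtain ⟨w', hw'⟩ := wconj hk w
      obtain ⟨w'', hw''⟩ := wconj_pow m w'
      refine ⟨w'', ?_⟩
      have c1 : Rel (w ++ Dp hk (m + 1)) ((Dl hk k ++ w') ++ Dp hk m) := by
        show Rel (w ++ (Dl hk k ++ Dp hk m)) _
        have := hw'.append_right (Dp hk m)
        simpa using this
      have c2 : Rel ((Dl hk k ++ w') ++ Dp hk m) (Dl hk k ++ (Dp hk m ++ w'')) := by
        have := hw''.append_left (Dl hk k)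
        simpa using this
      have e : Dl hk k ++ (Dp hk m ++ w'') = Dp hk (m + 1) ++ w'' := by
        show _ = (Dl hk k ++ Dp hk m) ++ w''
        simp
      exact (c1.trans c2).trans (by rw [e]; exact Rel.refl)

lemma div_dpow : ∀ u : Wd k, Dvd u (Dp hk u.length)
  | [] => Dvd.refl []
  | x :: u => by
      obtain ⟨s, hs⟩ := div_dpow u
      obtain ⟨d, hd⟩ := headDiv_letter hk x
      obtain ⟨d', hd'⟩ := wconj_pow hk u.length d
      refine ⟨s ++ d', ?_⟩
      show Rel ((x :: u) ++ (s ++ d')) (Dl hk k ++ Dp hk u.length)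
      have c1 : Rel ((x :: u) ++ (s ++ d')) (x :: (Dp hk u.length ++ d')) := by
        have := (hs.append_right d').cons x
        simpa using this
      have c2 : Rel (x :: (Dp hk u.length ++ d')) ((x :: d) ++ Dp hk u.length) := by
        have := (hd'.symm).cons x
        simpa using this
      have c3 : Rel ((x :: d) ++ Dp hk u.length) (Dl hk k ++ Dp hk u.length) := by
        exact (hd.symm).append_right _
      exact (c1.trans c2).trans c3

end Delta2

lemma nil_of_fin_zero (hk : ¬ 0 < k) (u : Wd k) : u = [] := by
  cases u with
  | nil => rfl
  | cons x _ => exact absurd (x.isLt) (by omega)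

/-- Any two positive braid words admit a common right multiple. -/
theorem common_right_mul (u v : Wd k) : ∃ z, Dvd u z ∧ Dvd v z := by
  by_cases hk : 0 < k
  · refine ⟨Dp hk (max u.length v.length), ?_, ?_⟩
    · have h1 := div_dpow hk u
      have : Dvd (Dp hk u.length) (Dp hk (max u.length v.length)) := by
        refine ⟨Dp hk (max u.length v.length - u.length), ?_⟩
        rw [← Dp_add hk, show u.length + (max u.length v.length - u.length)
          = max u.length v.length by omega]
        exact Rel.refl
      exact h1.trans this
    · have h1 := div_dpow hk v
      have : Dvd (Dp hk v.length) (Dp hk (max u.length v.length)) := by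
        refine ⟨Dp hk (max u.length v.length - v.length), ?_⟩
        rw [← Dp_add hk, show v.length + (max u.length v.length - v.length)
          = max u.length v.length by omega]
        exact Rel.refl
      exact h1.trans this
  · rw [nil_of_fin_zero hk u, nil_of_fin_zero hk v]
    exact ⟨[], Dvd.refl [], Dvd.refl []⟩

/-- Any two positive braid words admit a common left multiple. -/
theorem common_left_mul (u v : Wd k) : ∃ s t, Rel (s ++ u) (t ++ v) := by
  obtain ⟨z, ⟨s, hs⟩, ⟨t, ht⟩⟩ := common_right_mul u.reverse v.reverse
  refine ⟨s.reverse, t.reverse, ?_⟩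
  have h1 := hs.rev
  have h2 := ht.rev
  simp only [List.reverse_append, List.reverse_reverse] at h1 h2
  exact h1.trans h2.symm


variable {k : ℕ}

lemma Dvd.append_left (b : Wd k) {u v : Wd k} (h : Dvd u v) : Dvd (b ++ u) (b ++ v) := by
  obtain ⟨w, hw⟩ := h
  exact ⟨w, by rw [List.append_assoc]; exact hw.append_left b⟩

lemma Dvd.append_left_cancel (b : Wd k) {u v : Wd k} (h : Dvd (b ++ u) (b ++ v)) : Dvd u v := by
  obtain ⟨w, hw⟩ := h
  rw [List.append_assoc] at hw
  exact ⟨w, cancel_left b hw⟩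

lemma Dvd.head {a : Fin k} {c u : Wd k} (h : Dvd (a :: c) u) : Dvd [a] u := by
  obtain ⟨w, hw⟩ := h
  exact ⟨c ++ w, by simpa using hw⟩

/-- Conditional right lcm's: any two divisors of a common word admit a true lcm. -/
theorem lcm_exists : ∀ (N : ℕ) (z : Wd k), z.length ≤ N → ∀ c x, Dvd c z → Dvd x z →
    ∃ j, Dvd c j ∧ Dvd x j ∧ ∀ z', Dvd c z' → Dvd x z' → Dvd j z' := by
  intro N
  induction N with
  | zero =>
    intro z hz c x hc hx
    have hcnil : c = [] := List.eq_nil_of_length_eq_zero (by have := hc.length_le; omega)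
    subst hcnil
    exact ⟨x, Dvd.nil x, Dvd.refl x, fun z' _ h2 => h2⟩
  | succ N ih =>
    intro z hz c x hc hx
    match c, x with
    | [], x => exact ⟨x, Dvd.nil x, Dvd.refl x, fun z' _ h2 => h2⟩
    | c, [] => exact ⟨c, Dvd.refl c, Dvd.nil c, fun z' h1 _ => h1⟩
    | a :: c₁, b :: x₁ =>
      obtain ⟨w, hw⟩ := hc
      obtain ⟨w', hw'⟩ := hx
      by_cases hab : a = b
      · subst hab
        -- common head
        set z₁ := c₁ ++ w with hz₁
        have hrz : Rel (a :: z₁) z := hw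
        have hlz₁ : z₁.length ≤ N := by
          have := hrz.length
          simp only [List.length_cons] at this
          omega
        have hc₁ : Dvd c₁ z₁ := ⟨w, Rel.refl⟩
        have hx₁ : Dvd x₁ z₁ := by
          refine ⟨w', ?_⟩
          have h2 : Rel (a :: (x₁ ++ w')) (a :: z₁) := hw'.trans hrz.symm
          exact cancel_head h2
        obtain ⟨j₁, hj1, hj2, hjmin⟩ := ih z₁ hlz₁ c₁ x₁ hc₁ hx₁
        refine ⟨a :: j₁, hj1.cons a, hj2.cons a, ?_⟩
        intro z' hcz' hxz'
        obtain ⟨w₁, hw₁⟩ := hcz'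
        obtain ⟨w₂, hw₂⟩ := hxz'
        set z₁' := c₁ ++ w₁ with hz₁'
        have hrz' : Rel (a :: z₁') z' := hw₁
        have h1 : Dvd c₁ z₁' := ⟨w₁, Rel.refl⟩
        have h2 : Dvd x₁ z₁' := by
          refine ⟨w₂, ?_⟩
          exact cancel_head (hw₂.trans hrz'.symm)
        have h3 : Dvd j₁ z₁' := hjmin z₁' h1 h2
        exact ((h3.cons a).rel_right hrz')
      · -- distinct heads
        set α := cw a b with hα
        set β := cw b a with hβ
        have hkey : Rel (a :: (c₁ ++ w)) (b :: (x₁ ++ w')) := by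
          have h1 : Rel (a :: (c₁ ++ w)) z := hw
          have h2 : Rel (b :: (x₁ ++ w')) z := hw'
          exact h1.trans h2.symm
        obtain ⟨w0, hkey1, hkey2⟩ := key hkey
        set u' := c₁ ++ w with hu'
        set v' := x₁ ++ w' with hv'
        have hlu' : u'.length ≤ N := by
          have := (hw : Rel (a :: u') z).length
          rw [hu']
          simp only [List.length_cons, List.length_append] at this ⊢
          omega
        have hlv' : v'.length ≤ N := by
          have := (hw' : Rel (b :: v') z).length
          rw [hv']
          simp only [List.length_cons, List.length_append] at this ⊢
          omega
        have hc₁u' : Dvd c₁ u' := ⟨w, Rel.refl⟩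
        have hαu' : Dvd α u' := ⟨w0, hkey1.symm⟩
        have hx₁v' : Dvd x₁ v' := ⟨w', Rel.refl⟩
        have hβv' : Dvd β v' := ⟨w0, hkey2.symm⟩
        obtain ⟨j₁, hj₁c, hj₁α, hj₁min⟩ := ih u' hlu' c₁ α hc₁u' hαu'
        obtain ⟨j₂, hj₂x, hj₂β, hj₂min⟩ := ih v' hlv' x₁ β hx₁v' hβv'
        obtain ⟨p, hp⟩ := hj₁α
        obtain ⟨q, hq⟩ := hj₂β
        -- p and q divide w0
        have hpw0 : Dvd p w0 := by
          obtain ⟨r, hr⟩ := hj₁min u' hc₁u' hαu'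
          refine ⟨r, ?_⟩
          have h1 : Rel ((α ++ p) ++ r) u' := (hp.append_right r).trans hr
          rw [List.append_assoc] at h1
          have h2 : Rel (α ++ w0) u' := hkey1.symm
          exact cancel_left α (h1.trans h2.symm)
        have hqw0 : Dvd q w0 := by
          obtain ⟨r, hr⟩ := hj₂min v' hx₁v' hβv'
          refine ⟨r, ?_⟩
          have h1 : Rel ((β ++ q) ++ r) v' := (hq.append_right r).trans hr
          rw [List.append_assoc] at h1
          have h2 : Rel (β ++ w0) v' := hkey2.symm
          exact cancel_left β (h1.trans h2.symm)
        have hlw0 : w0.length ≤ N := by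
          have e1 := hkey1.length
          have := (hw : Rel (a :: u') z).length
          have e2 : u' = c₁ ++ w := hu'
          rw [e2] at e1
          simp only [List.length_cons, List.length_append] at this e1
          omega
        obtain ⟨j₃, hj₃p, hj₃q, hj₃min⟩ := ih w0 hlw0 p q hpw0 hqw0
        refine ⟨(a :: α) ++ j₃, ?_, ?_, ?_⟩
        · -- c divides j
          have h1 : Dvd j₁ (α ++ j₃) := by
            obtain ⟨r₃, hr₃⟩ := hj₃p
            refine ⟨r₃, ?_⟩
            have s1 := hp.symm.append_right r₃
            have s2 : Rel ((α ++ p) ++ r₃) (α ++ j₃) := by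
              rw [List.append_assoc]; exact hr₃.append_left α
            exact s1.trans s2
          have h2 : Dvd c₁ (α ++ j₃) := hj₁c.trans h1
          exact (h2.cons a)
        · -- x divides j
          have h1 : Dvd j₂ (β ++ j₃) := by
            obtain ⟨r₃, hr₃⟩ := hj₃q
            refine ⟨r₃, ?_⟩
            have s1 := hq.symm.append_right r₃
            have s2 : Rel ((β ++ q) ++ r₃) (β ++ j₃) := by
              rw [List.append_assoc]; exact hr₃.append_left β
            exact s1.trans s2
          have h2 : Dvd x₁ (β ++ j₃) := hj₂x.trans h1
          have h3 : Dvd (b :: x₁) (b :: (β ++ j₃)) := h2.cons b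
          have h4 : Rel ((b :: β) ++ j₃) ((a :: α) ++ j₃) := (mu_comm.symm).append_right j₃
          exact h3.rel_right h4
        · -- minimality
          intro z' hcz' hxz'
          have haz' : Dvd [a] z' := hcz'.head
          have hbz' : Dvd [b] z' := hxz'.head
          obtain ⟨w'', hw''⟩ := atom_lcm haz' hbz'
          -- z' ≈ (a :: α) ++ w''
          have hpw'' : Dvd p w'' := by
            obtain ⟨w₁, hw₁⟩ := hcz'
            have h1 : Rel (a :: (c₁ ++ w₁)) ((a :: α) ++ w'') := hw₁.trans hw''.symm
            have h2 : Rel (c₁ ++ w₁) (α ++ w'') := cancel_head (by simpa using h1)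
            have h3 : Dvd c₁ (α ++ w'') := ⟨w₁, h2⟩
            have h4 : Dvd α (α ++ w'') := ⟨w'', Rel.refl⟩
            obtain ⟨r, hr⟩ := hj₁min (α ++ w'') h3 h4
            refine ⟨r, ?_⟩
            have h5 : Rel ((α ++ p) ++ r) (α ++ w'') := (hp.append_right r).trans hr
            rw [List.append_assoc] at h5
            exact cancel_left α h5
          have hqw'' : Dvd q w'' := by
            obtain ⟨w₂, hw₂⟩ := hxz'
            have h0 : Rel ((b :: β) ++ w'') ((a :: α) ++ w'') := (mu_comm.symm).append_right w''
            have h1 : Rel (b :: (x₁ ++ w₂)) (b :: (β ++ w'')) := by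
              refine (hw₂.trans hw''.symm).trans ?_
              have := h0.symm
              simpa using this
            have h2 : Rel (x₁ ++ w₂) (β ++ w'') := cancel_head h1
            have h3 : Dvd x₁ (β ++ w'') := ⟨w₂, h2⟩
            have h4 : Dvd β (β ++ w'') := ⟨w'', Rel.refl⟩
            obtain ⟨r, hr⟩ := hj₂min (β ++ w'') h3 h4
            refine ⟨r, ?_⟩
            have h5 : Rel ((β ++ q) ++ r) (β ++ w'') := (hq.append_right r).trans hr
            rw [List.append_assoc] at h5
            exact cancel_left β h5
          obtain ⟨r', hr'⟩ := hj₃min w'' hpw'' hqw''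
          refine ⟨r', ?_⟩
          rw [List.append_assoc]
          have h6 : Rel (j₃ ++ r') w'' := hr'
          exact ((h6.append_left (a :: α)).trans (by simpa using hw''))


variable {k : ℕ}

/-- Left gcd's exist. -/
theorem gcd_exists : ∀ (N : ℕ) (u v : Wd k), u.length ≤ N →
    ∃ g, Dvd g u ∧ Dvd g v ∧ ∀ c, Dvd c u → Dvd c v → Dvd c g := by
  intro N
  induction N with
  | zero =>
    intro u v hu
    refine ⟨[], Dvd.nil u, Dvd.nil v, ?_⟩
    intro c hcu _
    have : c = [] := List.eq_nil_of_length_eq_zero (by have := hcu.length_le; omega)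
    subst this
    exact Dvd.refl []
  | succ N ih =>
    intro u v hu
    by_cases hex : ∃ a : Fin k, Dvd [a] u ∧ Dvd [a] v
    · obtain ⟨a, ⟨u₁, hu₁⟩, ⟨v₁, hv₁⟩⟩ := hex
      simp only [List.cons_append, List.nil_append] at hu₁ hv₁
      -- hu₁ : Rel (a :: u₁) u, hv₁ : Rel (a :: v₁) v
      have hlu₁ : u₁.length ≤ N := by
        have := hu₁.length
        simp only [List.length_cons] at this
        omega
      obtain ⟨g₁, hg₁u, hg₁v, hg₁min⟩ := ih u₁ v₁ hlu₁
      refine ⟨a :: g₁, ((hg₁u.cons a).rel_right hu₁), ((hg₁v.cons a).rel_right hv₁), ?_⟩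
      intro c hcu hcv
      obtain ⟨j, hjc, hja, hjmin⟩ := lcm_exists u.length u le_rfl c [a] hcu
        ⟨u₁, hu₁⟩
      have hju : Dvd j u := hjmin u hcu ⟨u₁, hu₁⟩
      have hjv : Dvd j v := hjmin v hcv ⟨v₁, hv₁⟩
      obtain ⟨j₁, hj₁⟩ := hja
      simp only [List.cons_append, List.nil_append] at hj₁
      -- hj₁ : Rel (a :: j₁) j
      have hj₁u₁ : Dvd j₁ u₁ := by
        obtain ⟨r, hr⟩ := hju
        have h1 : Rel ((a :: j₁) ++ r) u := (hj₁.append_right r).trans hr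
        have h2 : Rel (a :: (j₁ ++ r)) (a :: u₁) := by
          refine Rel.trans ?_ hu₁.symm
          simpa using h1
        exact ⟨r, cancel_head h2⟩
      have hj₁v₁ : Dvd j₁ v₁ := by
        obtain ⟨r, hr⟩ := hjv
        have h1 : Rel ((a :: j₁) ++ r) v := (hj₁.append_right r).trans hr
        have h2 : Rel (a :: (j₁ ++ r)) (a :: v₁) := by
          refine Rel.trans ?_ hv₁.symm
          simpa using h1
        exact ⟨r, cancel_head h2⟩
      have hj₁g₁ : Dvd j₁ g₁ := hg₁min j₁ hj₁u₁ hj₁v₁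
      have : Dvd j (a :: g₁) := (hj₁g₁.cons a).rel_left hj₁.symm
      exact hjc.trans this
    · refine ⟨[], Dvd.nil u, Dvd.nil v, ?_⟩
      intro c hcu hcv
      match c with
      | [] => exact Dvd.refl []
      | a :: c₁ => exact absurd ⟨a, hcu.head, hcv.head⟩ hex

/-- gcd is compatible with left translation:  if `c ∣ b·u` and `c ∣ b·v` then `c ∣ b·g`
for `g` any gcd of `u, v`. -/
theorem dvd_append_gcd {b u v g c : Wd k}
    (hgu : Dvd g u) (hgv : Dvd g v) (hgmin : ∀ c, Dvd c u → Dvd c v → Dvd c g)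
    (hcu : Dvd c (b ++ u)) (hcv : Dvd c (b ++ v)) : Dvd c (b ++ g) := by
  obtain ⟨g', hg'u, hg'v, hg'min⟩ := gcd_exists (b ++ u).length (b ++ u) (b ++ v) le_rfl
  have hcg' : Dvd c g' := hg'min c hcu hcv
  have hbg' : Dvd b g' := hg'min b (⟨u, Rel.refl⟩) (⟨v, Rel.refl⟩)
  obtain ⟨g'', hg''⟩ := hbg'
  -- hg'' : Rel (b ++ g'') g'
  have hg''u : Dvd g'' u := by
    have h1 : Dvd (b ++ g'') (b ++ u) := hg'u.rel_left hg''
    exact h1.append_left_cancel b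
  have hg''v : Dvd g'' v := by
    have h1 : Dvd (b ++ g'') (b ++ v) := hg'v.rel_left hg''
    exact h1.append_left_cancel b
  have hg''g : Dvd g'' g := hgmin g'' hg''u hg''v
  have h2 : Dvd g' (b ++ g) := ((hg''g.append_left b).rel_left hg''.symm)
  exact hcg'.trans h2


variable {k : ℕ}

instance mset (k : ℕ) : Setoid (Wd k) :=
  ⟨Rel, ⟨fun _ => Rel.refl, Rel.symm, Rel.trans⟩⟩

/-- The positive braid monoid. -/
def Mon (k : ℕ) : Type := Quotient (mset k)

namespace Mon

def mk (w : Wd k) : Mon k := ⟦w⟧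

lemma mk_eq_mk {u v : Wd k} : mk u = mk v ↔ Rel u v :=
  ⟨fun h => Quotient.exact h, fun h => Quotient.sound h⟩

instance : Monoid (Mon k) where
  mul := Quotient.map₂ (· ++ ·) (fun _ _ ha _ _ hb => ha.append hb)
  one := mk []
  mul_assoc a b c := by
    induction a using Quotient.ind with | _ a =>
    induction b using Quotient.ind with | _ b =>
    induction c using Quotient.ind with | _ c =>
    apply Quotient.sound
    show Rel ((a ++ b) ++ c) (a ++ (b ++ c))
    rw [List.append_assoc]
    exact Rel.refl
  one_mul a := by
    induction a using Quotient.ind with | _ a =>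
    apply Quotient.sound
    show Rel ([] ++ a) a
    exact Rel.refl
  mul_one a := by
    induction a using Quotient.ind with | _ a =>
    apply Quotient.sound
    show Rel (a ++ []) a
    rw [List.append_nil]
    exact Rel.refl

lemma mk_mul (u v : Wd k) : mk u * mk v = mk (u ++ v) := rfl

lemma one_def : (1 : Mon k) = mk [] := rfl

lemma ind {P : Mon k → Prop} (h : ∀ w, P (mk w)) : ∀ x, P x := Quotient.ind h

lemma mul_left_cancel' {a b c : Mon k} (h : a * b = a * c) : b = c := by
  induction a using Quotient.ind
  induction b using Quotient.ind
  induction c using Quotient.ind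
  exact Quotient.sound (cancel_left _ (Quotient.exact h))

lemma mul_right_cancel' {a b c : Mon k} (h : a * c = b * c) : a = b := by
  induction a using Quotient.ind
  induction b using Quotient.ind
  induction c using Quotient.ind
  exact Quotient.sound (cancel_right _ (Quotient.exact h))

lemma ore_exists (r s : Mon k) : ∃ (v : Mon k) (u : Mon k), u * r = v * s := by
  induction r using Quotient.ind with | _ r =>
  induction s using Quotient.ind with | _ s =>
  obtain ⟨s', t', h⟩ := common_left_mul r s
  exact ⟨mk t', mk s', Quotient.sound h⟩

end Mon

noncomputable instance : OreLocalization.OreSet (⊤ : Submonoid (Mon k)) where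
  ore_right_cancel r₁ r₂ s h := ⟨1, by
    simp only [OneMemClass.coe_one, one_mul]
    exact Mon.mul_right_cancel' h⟩
  oreNum r s := (Mon.ore_exists r s).choose
  oreDenom r s := ⟨(Mon.ore_exists r s).choose_spec.choose, trivial⟩
  ore_eq r s := (Mon.ore_exists r s).choose_spec.choose_spec

/-- The Ore localization of the positive braid monoid. -/
abbrev Loc (k : ℕ) : Type := OreLocalization (⊤ : Submonoid (Mon k)) (Mon k)

open OreLocalization

lemma num_inj : Function.Injective (numeratorHom : Mon k → Loc k) := by
  intro r r' h
  rw [numeratorHom_apply, numeratorHom_apply, oreDiv_eq_iff] at h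
  obtain ⟨u, v, h1, h2⟩ := h
  simp only [OneMemClass.coe_one, mul_one] at h2
  rw [Submonoid.smul_def, smul_eq_mul, smul_eq_mul, h2] at h1
  exact (Mon.mul_left_cancel' h1).symm

lemma div_self_eq_one (a : Mon k) :
    (a /ₒ (⟨a, trivial⟩ : (⊤ : Submonoid (Mon k)))) = (1 : Loc k) := by
  rw [OreLocalization.one_def, oreDiv_eq_iff]
  exact ⟨⟨a, trivial⟩, 1, by simp [Submonoid.smul_def], by simp⟩

/-- Each positive braid is invertible in the localization. -/
noncomputable def unitOf (a : Mon k) : (Loc k)ˣ where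
  val := numeratorHom a
  inv := (1 : Mon k) /ₒ (⟨a, trivial⟩ : (⊤ : Submonoid (Mon k)))
  val_inv := by
    rw [numeratorHom_apply]
    have h := OreLocalization.mul_cancel (r := (1 : Mon k))
      (s := (⟨a, trivial⟩ : (⊤ : Submonoid (Mon k)))) (t := (1 : (⊤ : Submonoid (Mon k))))
    rw [← OreLocalization.one_def] at h
    exact h
  inv_val := by
    rw [numeratorHom_apply]
    have := OreLocalization.mul_cancel (r := a)
      (s := (1 : (⊤ : Submonoid (Mon k)))) (t := (⟨a, trivial⟩ : (⊤ : Submonoid (Mon k))))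
    simp only [OneMemClass.coe_one] at this
    rw [this]
    exact div_self_eq_one a

lemma unitOf_mul (a b : Mon k) : unitOf (a * b) = unitOf a * unitOf b := by
  ext
  show numeratorHom (a * b) = numeratorHom a * numeratorHom b
  exact map_mul _ a b


open OreLocalization

variable {n : ℕ}

/-- The image of a positive word in the braid group. -/
def wp (w : Wd (n - 1)) : BraidGroup n :=
  (List.map (fun i => (PresentedGroup.of (rels := braidRels n) i)) w).prod

lemma wp_nil : wp ([] : Wd (n - 1)) = 1 := rfl

lemma wp_cons (a : Fin (n - 1)) (w : Wd (n - 1)) :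
    wp (a :: w) = PresentedGroup.of (rels := braidRels n) a * wp w := by
  simp [wp]

lemma wp_append (u v : Wd (n - 1)) : wp (u ++ v) = wp u * wp v := by
  simp [wp]

lemma rel_one_of_mem {r : FreeGroup (Fin (n - 1))} (hr : r ∈ braidRels n) :
    PresentedGroup.mk (braidRels n) r = 1 :=
  (QuotientGroup.eq_one_iff _).mpr (Subgroup.subset_normalClosure hr)

lemma of_comm_lt {i j : Fin (n - 1)} (h : (i : ℕ) + 1 < (j : ℕ)) :
    (PresentedGroup.of (rels := braidRels n) i) * PresentedGroup.of j
      = PresentedGroup.of j * PresentedGroup.of i := by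
  have h1 := rel_one_of_mem (n := n) (Or.inl ⟨i, j, h, rfl⟩)
  rw [map_mul, map_inv, map_mul, map_mul] at h1
  exact mul_inv_eq_one.mp h1

lemma of_comm {i j : Fin (n - 1)} (h : far i j) :
    (PresentedGroup.of (rels := braidRels n) i) * PresentedGroup.of j
      = PresentedGroup.of j * PresentedGroup.of i := by
  rcases h with h | h
  · exact of_comm_lt h
  · exact (of_comm_lt h).symm

lemma of_braid_eq {i j : Fin (n - 1)} (h : (j : ℕ) = (i : ℕ) + 1) :
    (PresentedGroup.of (rels := braidRels n) i) * PresentedGroup.of j * PresentedGroup.of i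
      = PresentedGroup.of j * PresentedGroup.of i * PresentedGroup.of j := by
  have h1 := rel_one_of_mem (n := n) (Or.inr ⟨i, j, h, rfl⟩)
  rw [map_mul, map_inv, map_mul, map_mul, map_mul, map_mul] at h1
  exact mul_inv_eq_one.mp h1

lemma of_braid {i j : Fin (n - 1)} (h : nbr i j) :
    (PresentedGroup.of (rels := braidRels n) i) * PresentedGroup.of j * PresentedGroup.of i
      = PresentedGroup.of j * PresentedGroup.of i * PresentedGroup.of j := by
  rcases h with h | h
  · exact of_braid_eq h.symm
  · exact (of_braid_eq h.symm).symm

lemma wp_step {u v : Wd (n - 1)} (h : Step u v) : wp u = wp v := by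
  cases h with
  | swap x y a b hf =>
    simp only [wp_append, wp_cons, ← mul_assoc]
    rw [mul_assoc (wp x), of_comm hf, ← mul_assoc]
  | braid x y a b hf =>
    have h4 : ∀ t : BraidGroup n,
        PresentedGroup.of (rels := braidRels n) a *
            (PresentedGroup.of b * (PresentedGroup.of a * t))
          = PresentedGroup.of b * (PresentedGroup.of a * (PresentedGroup.of b * t)) := by
      intro t
      rw [← mul_assoc, ← mul_assoc, of_braid hf, mul_assoc, mul_assoc]
    simp only [wp_append, wp_cons]
    rw [h4]

lemma wp_rel {u v : Wd (n - 1)} (h : Rel u v) : wp u = wp v := by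
  induction h with
  | refl => rfl
  | tail _ h2 ih => exact ih.trans (wp_step h2)

/-- The generators, as units of the localization. -/
noncomputable def genU (i : Fin (n - 1)) : (Loc (n - 1))ˣ := unitOf (Mon.mk [i])

lemma genU_rels : ∀ r ∈ braidRels n, FreeGroup.lift (genU (n := n)) r = 1 := by
  intro r hr
  rcases hr with ⟨i, j, hij, rfl⟩ | ⟨i, j, hij, rfl⟩
  · simp only [map_mul, map_inv, FreeGroup.lift_apply_of]
    rw [mul_inv_eq_one]
    show unitOf (Mon.mk [i]) * unitOf (Mon.mk [j]) = unitOf (Mon.mk [j]) * unitOf (Mon.mk [i])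
    rw [← unitOf_mul, ← unitOf_mul, Mon.mk_mul, Mon.mk_mul]
    congr 1
    exact Quotient.sound (Rel.swap₀ (Or.inl hij) [])
  · simp only [map_mul, map_inv, FreeGroup.lift_apply_of]
    rw [mul_inv_eq_one]
    show unitOf (Mon.mk [i]) * unitOf (Mon.mk [j]) * unitOf (Mon.mk [i])
      = unitOf (Mon.mk [j]) * unitOf (Mon.mk [i]) * unitOf (Mon.mk [j])
    rw [← unitOf_mul, ← unitOf_mul, ← unitOf_mul, ← unitOf_mul,
      Mon.mk_mul, Mon.mk_mul, Mon.mk_mul, Mon.mk_mul]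
    congr 1
    exact Quotient.sound (Rel.braid₀ (Or.inl hij.symm) [])

/-- The braid group maps to the units of the localized braid monoid. -/
noncomputable def Psi : BraidGroup n →* (Loc (n - 1))ˣ :=
  PresentedGroup.toGroup (f := genU) genU_rels

lemma Psi_wp (w : Wd (n - 1)) :
    ((Psi (wp w) : (Loc (n - 1))ˣ) : Loc (n - 1)) = numeratorHom (Mon.mk w) := by
  induction w with
  | nil =>
    rw [wp_nil, map_one, Units.val_one]
    exact (map_one (numeratorHom : Mon (n - 1) →* Loc (n - 1))).symm
  | cons a w ih =>
    rw [wp_cons, map_mul, Units.val_mul, ih]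
    rw [show Psi (PresentedGroup.of a) = genU a from PresentedGroup.toGroup.of _]
    show (numeratorHom (Mon.mk [a]) : Loc _) * numeratorHom (Mon.mk w) = _
    rw [← map_mul, Mon.mk_mul]
    rfl

/-- The fundamental embedding theorem: the positive braid monoid embeds in the braid group. -/
theorem wp_inj {u v : Wd (n - 1)} (h : wp u = wp v) : Rel u v := by
  have h3 : (numeratorHom (Mon.mk u) : Loc (n - 1)) = numeratorHom (Mon.mk v) := by
    rw [← Psi_wp, ← Psi_wp, h]
  exact Quotient.exact (num_inj h3)


variable {n : ℕ}

/-- Every element of the braid group is a left fraction of positive words. -/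
lemma exists_frac (x : BraidGroup n) : ∃ a b : Wd (n - 1), x = (wp a)⁻¹ * wp b := by
  let H : Subgroup (BraidGroup n) :=
    { carrier := {x | ∃ a b : Wd (n - 1), x = (wp a)⁻¹ * wp b}
      one_mem' := ⟨[], [], by rw [wp_nil]; simp⟩
      mul_mem' := by
        rintro x y ⟨a, b, rfl⟩ ⟨c, d, rfl⟩
        obtain ⟨s, t, hst⟩ := common_left_mul b c
        refine ⟨s ++ a, t ++ d, ?_⟩
        have h1 : wp s * wp b = wp t * wp c := by
          rw [← wp_append, ← wp_append]; exact wp_rel hst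
        have h2 : wp b * (wp c)⁻¹ = (wp s)⁻¹ * wp t := by
          refine mul_left_cancel (a := wp s) ?_
          rw [← mul_assoc, h1, mul_assoc, mul_inv_cancel, mul_one, ← mul_assoc,
            mul_inv_cancel, one_mul]
        rw [wp_append, wp_append, mul_inv_rev, mul_assoc, ← mul_assoc (wp b), h2]
        simp [mul_assoc]
      inv_mem' := by
        rintro x ⟨a, b, rfl⟩
        exact ⟨b, a, by rw [mul_inv_rev, inv_inv]⟩ }
  exact PresentedGroup.generated_by (braidRels n) H
    (fun j => ⟨[], [j], by rw [wp_nil, wp_cons, wp_nil]; simp⟩) x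

/-- The length homomorphism. -/
noncomputable def lenHom : BraidGroup n →* Multiplicative ℤ :=
  PresentedGroup.toGroup (f := fun _ => Multiplicative.ofAdd (1 : ℤ)) (by
    intro r hr
    rcases hr with ⟨i, j, _, rfl⟩ | ⟨i, j, _, rfl⟩ <;>
      · simp only [map_mul, map_inv, FreeGroup.lift_apply_of]
        group)

lemma lenHom_wp (w : Wd (n - 1)) : lenHom (wp w) = Multiplicative.ofAdd (w.length : ℤ) := by
  induction w with
  | nil => rw [wp_nil, map_one]; rfl
  | cons a w ih =>
    rw [wp_cons, map_mul, ih]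
    rw [show lenHom (PresentedGroup.of a) = Multiplicative.ofAdd (1 : ℤ) from
      PresentedGroup.toGroup.of _]
    rw [← ofAdd_add]
    congr 1
    simp only [List.length_cons]
    push_cast
    ring

lemma nil_nil_of_wp_mul {c d : Wd (n - 1)} (h : wp c * wp d = 1) : c = [] ∧ d = [] := by
  have h1 := congrArg lenHom h
  rw [map_mul, lenHom_wp, lenHom_wp, map_one, ← ofAdd_add, ← ofAdd_zero] at h1
  have h2 : (c.length : ℤ) + (d.length : ℤ) = 0 := Multiplicative.ofAdd.injective h1
  constructor <;> [skip; skip] <;>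
    exact List.eq_nil_of_length_eq_zero (by omega)

/-- gcd of a nonempty list of words. -/
lemma gcd_list : ∀ (us : List (Wd (n - 1))), us ≠ [] →
    ∃ g, (∀ u ∈ us, Dvd g u) ∧ ∀ c, (∀ u ∈ us, Dvd c u) → Dvd c g
  | [], h => absurd rfl h
  | [u], _ => ⟨u, by simp [Dvd.refl], fun c hc => hc u (by simp)⟩
  | u :: u' :: us, _ => by
      obtain ⟨g', hg'1, hg'2⟩ := gcd_list (u' :: us) (by simp)
      obtain ⟨g, hgu, hgg', hmin⟩ := gcd_exists u.length u g' le_rfl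
      refine ⟨g, ?_, ?_⟩
      · intro v hv
        rcases List.mem_cons.mp hv with rfl | hv
        · exact hgu
        · exact hgg'.trans (hg'1 v hv)
      · intro c hc
        exact hmin c (hc u (by simp)) (hg'2 c (fun v hv => hc v (by simp [hv])))

lemma dvd_append_gcd_list {a b g : Wd (n - 1)} {us : List (Wd (n - 1))} (hne : us ≠ [])
    (hg1 : ∀ u ∈ us, Dvd g u) (hg2 : ∀ c, (∀ u ∈ us, Dvd c u) → Dvd c g)
    (hb : ∀ u ∈ us, Dvd b (a ++ u)) : Dvd b (a ++ g) := by
  obtain ⟨g₂, hg₂1, hg₂2⟩ := gcd_list (us.map (a ++ ·)) (by simpa using hne)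
  have hbg₂ : Dvd b g₂ := by
    refine hg₂2 b ?_
    intro v hv
    obtain ⟨u, hu, rfl⟩ := List.mem_map.mp hv
    exact hb u hu
  have hag₂ : Dvd a g₂ := by
    refine hg₂2 a ?_
    intro v hv
    obtain ⟨u, hu, rfl⟩ := List.mem_map.mp hv
    exact ⟨u, Rel.refl⟩
  obtain ⟨g₃, hg₃⟩ := hag₂
  have hg₃u : ∀ u ∈ us, Dvd g₃ u := by
    intro u hu
    have h1 : Dvd g₂ (a ++ u) := hg₂1 (a ++ u) (List.mem_map.mpr ⟨u, hu, rfl⟩)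
    exact (h1.rel_left hg₃).append_left_cancel a
  have hg₃g : Dvd g₃ g := hg2 g₃ hg₃u
  exact hbg₂.trans ((hg₃g.append_left a).rel_left hg₃.symm)

/-- Common left denominators for all powers of `β` below `m`. -/
lemma common_denom_pow (β : BraidGroup n) : ∀ m : ℕ,
    ∃ z : Wd (n - 1), ∀ j, j < m → ∃ u, β ^ j = (wp z)⁻¹ * wp u
  | 0 => ⟨[], fun j hj => absurd hj (by omega)⟩
  | m + 1 => by
      obtain ⟨z, hz⟩ := common_denom_pow β m
      obtain ⟨a, b, hab⟩ := exists_frac (β ^ m)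
      obtain ⟨s, t, hst⟩ := common_left_mul a z
      refine ⟨s ++ a, ?_⟩
      have hsa : wp ((s ++ a : Wd (n - 1))) = wp t * wp z := by
        rw [show wp (s ++ a) = wp (t ++ z) from wp_rel hst, wp_append]
      intro j hj
      rcases Nat.lt_or_ge j m with hjm | hjm
      · obtain ⟨u, hu⟩ := hz j hjm
        refine ⟨t ++ u, ?_⟩
        rw [hu, hsa, wp_append, mul_inv_rev]
        rw [mul_assoc, ← mul_assoc (wp t)⁻¹, inv_mul_cancel, one_mul]
      · have hjm' : j = m := by omega
        subst hjm'
        refine ⟨s ++ b, ?_⟩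
        rw [hab, wp_append, wp_append, mul_inv_rev]
        rw [mul_assoc, ← mul_assoc (wp s)⁻¹, inv_mul_cancel, one_mul]


/-- The heart of torsion-freeness: if `β ^ m = 1` with `m ≥ 1` then `β = 1`. -/
theorem eq_one_of_pow_eq_one {n : ℕ} {β : BraidGroup n} {m : ℕ} (hm : 1 ≤ m)
    (h : β ^ m = 1) : β = 1 := by
  classical
  obtain ⟨z, hz⟩ := common_denom_pow β m
  set u : ℕ → Wd (n - 1) := fun j => if hj : j < m then (hz j hj).choose else [] with hu_def
  have hu : ∀ j (hj : j < m), β ^ j = (wp z)⁻¹ * wp (u j) := by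
    intro j hj
    simp only [hu_def, dif_pos hj]
    exact (hz j hj).choose_spec
  set us : List (Wd (n - 1)) := (List.range m).map u with hus_def
  have husne : us ≠ [] := by
    simp only [hus_def, ne_eq, List.map_eq_nil_iff, List.range_eq_nil]
    omega
  obtain ⟨g, hg1, hg2⟩ := gcd_list us husne
  set w := (wp z)⁻¹ * wp g with hw_def
  have humem : ∀ j, j < m → u j ∈ us := fun j hj =>
    List.mem_map.mpr ⟨j, List.mem_range.mpr hj, rfl⟩
  have hwinv : w⁻¹ = (wp g)⁻¹ * wp z := by rw [hw_def, mul_inv_rev, inv_inv]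
  -- `w` is a lower bound for all powers of `β`
  have claim1 : ∀ j, j < m → ∃ c, w⁻¹ * β ^ j = wp c := by
    intro j hj
    obtain ⟨c, hc⟩ := hg1 (u j) (humem j hj)
    refine ⟨c, ?_⟩
    rw [hu j hj, hwinv, mul_assoc, ← mul_assoc (wp z), mul_inv_cancel, one_mul]
    rw [← wp_rel hc, wp_append, ← mul_assoc, inv_mul_cancel, one_mul]
  -- `w` is the greatest lower bound
  have claim2 : ∀ y : BraidGroup n, (∀ j, j < m → ∃ c, y⁻¹ * β ^ j = wp c) →
      ∃ d, y⁻¹ * w = wp d := by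
    intro y hy
    obtain ⟨a, b, hab⟩ := exists_frac (wp z * y)
    have hyinv : y⁻¹ * (wp z)⁻¹ = (wp b)⁻¹ * wp a := by
      have h1 : (wp z * y)⁻¹ = ((wp a)⁻¹ * wp b)⁻¹ := by rw [hab]
      rw [mul_inv_rev, mul_inv_rev, inv_inv] at h1
      exact h1
    have hball : ∀ v ∈ us, Dvd b (a ++ v) := by
      intro v hv
      obtain ⟨j, hjr, rfl⟩ := List.mem_map.mp hv
      have hj := List.mem_range.mp hjr
      obtain ⟨c, hc⟩ := hy j hj
      rw [hu j hj, ← mul_assoc, hyinv] at hc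
      have h3 : wp a * wp (u j) = wp b * wp c := by
        rw [mul_assoc] at hc
        calc wp a * wp (u j)
            = wp b * ((wp b)⁻¹ * (wp a * wp (u j))) := by
              rw [← mul_assoc, mul_inv_cancel, one_mul]
          _ = wp b * wp c := by rw [hc]
      have h2 : wp (a ++ u j) = wp (b ++ c) := by
        rw [wp_append, wp_append]; exact h3
      exact ⟨c, (wp_inj h2).symm⟩
    obtain ⟨d, hd⟩ := dvd_append_gcd_list husne hg1 hg2 hball
    refine ⟨d, ?_⟩
    rw [hw_def, ← mul_assoc, hyinv, mul_assoc, ← wp_append, ← wp_rel hd, wp_append,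
      ← mul_assoc, inv_mul_cancel, one_mul]
  -- `β * w` is also a lower bound
  have claim1' : ∀ j, j < m → ∃ c, (β * w)⁻¹ * β ^ j = wp c := by
    intro j hj
    have e : (β * w)⁻¹ * β ^ j = w⁻¹ * (β⁻¹ * β ^ j) := by
      rw [mul_inv_rev, mul_assoc]
    rcases Nat.eq_zero_or_pos j with rfl | hjpos
    · have hβinv : β⁻¹ * β ^ 0 = β ^ (m - 1) := by
        rw [pow_zero, mul_one]
        have h1 : β * β ^ (m - 1) = 1 := by
          rw [← pow_succ', show m - 1 + 1 = m by omega]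
          exact h
        exact (inv_eq_of_mul_eq_one_right h1)
      rw [e, hβinv]
      exact claim1 (m - 1) (by omega)
    · have hβj : β⁻¹ * β ^ j = β ^ (j - 1) := by
        have h1 : β ^ j = β * β ^ (j - 1) := by
          rw [← pow_succ', show j - 1 + 1 = j by omega]
        rw [h1, ← mul_assoc, inv_mul_cancel, one_mul]
      rw [e, hβj]
      exact claim1 (j - 1) (by omega)
  -- `β * w` is also a greatest lower bound
  have claim2' : ∀ y : BraidGroup n, (∀ j, j < m → ∃ c, y⁻¹ * β ^ j = wp c) →
      ∃ d, y⁻¹ * (β * w) = wp d := by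
    intro y hy
    have hy' : ∀ j, j < m → ∃ c, (β⁻¹ * y)⁻¹ * β ^ j = wp c := by
      intro j hj
      have e : (β⁻¹ * y)⁻¹ * β ^ j = y⁻¹ * (β * β ^ j) := by
        rw [mul_inv_rev, inv_inv, mul_assoc]
      rcases Nat.lt_or_ge (j + 1) m with h1 | h1
      · rw [e, ← pow_succ']
        exact hy (j + 1) h1
      · have h2 : j + 1 = m := by omega
        rw [e, ← pow_succ', h2, h]
        have h3 := hy 0 (by omega)
        simpa [pow_zero] using h3
    obtain ⟨d, hd⟩ := claim2 (β⁻¹ * y) hy'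
    refine ⟨d, ?_⟩
    rw [← hd, mul_inv_rev, inv_inv, mul_assoc]
  obtain ⟨d, hd⟩ := claim2' w claim1
  obtain ⟨d', hd'⟩ := claim2 (β * w) claim1'
  have hdd : wp d * wp d' = 1 := by
    rw [← hd, ← hd']
    group
  obtain ⟨hdnil, -⟩ := nil_nil_of_wp_mul hdd
  subst hdnil
  rw [wp_nil] at hd
  have h4 : w = β * w := inv_mul_eq_one.mp hd
  have h5 : (1 : BraidGroup n) * w = β * w := by rw [one_mul]; exact h4
  exact (mul_right_cancel h5).symm

end BraidTF

/-- The braid group `Bₙ` is torsion free. -/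
theorem braidGroup_torsionFree (n : ℕ) (β : BraidGroup n) (hβ : β ≠ 1)
    (m : ℕ) (hm : 1 ≤ m) : β ^ m ≠ 1 := by
  exact fun h => hβ (BraidTF.eq_one_of_pow_eq_one hm h)
end

section
/- (Baumslag) If G is a finitely generated, residually finite group, then its automorphism group Aut(G) is residually finite. -/
theorem finite_monoidHom_of_fg (G P : Type) [Group G] [Group.FG G] [Group P] [Finite P] :
    Finite (G →* P) := by
  obtain ⟨S, hS, hSfin⟩ := Group.fg_iff.mp ‹Group.FG G›
  haveI := hSfin.to_subtype
  refine Finite.of_injective (fun ψ : G →* P => fun s : S => ψ s.1) ?_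
  intro ψ₁ ψ₂ h
  refine MonoidHom.eq_of_eqOn_dense hS ?_
  intro x hx
  exact congrFun h ⟨x, hx⟩

/-- (Baumslag) The automorphism group of a finitely generated, residually finite group
is residually finite. -/
theorem aut_residuallyFinite (G : Type) [Group G] [Group.FG G]
    (hres : ∀ a : G, a ≠ 1 →
      ∃ (H : Type) (_ : Group H) (_ : Finite H) (φ : G →* H), φ a ≠ 1) :
    ∀ f : MulAut G, f ≠ 1 →
      ∃ (K : Type) (_ : Group K) (_ : Finite K) (ψ : MulAut G →* K), ψ f ≠ 1 := by
  intro f hf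
  obtain ⟨g, hg⟩ : ∃ g : G, f g ≠ g := by
    by_contra h
    push_neg at h
    exact hf (MulEquiv.ext fun x => h x)
  have ha : f g * g⁻¹ ≠ 1 := by
    intro h
    exact hg (by rwa [mul_inv_eq_one] at h)
  obtain ⟨H, _, _, φ, hφ⟩ := hres _ ha
  -- finite quotient by the kernel
  haveI : Finite (G ⧸ φ.ker) := Finite.of_equiv _ (QuotientGroup.quotientKerEquivRange φ).symm.toEquiv
  set Q := G ⧸ φ.ker with hQ
  set P := Equiv.Perm Q with hP
  haveI : Finite P := Finite.of_injective (fun e : P => (e : Q → Q)) (fun a b h => Equiv.ext fun x => congrFun h x)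
  haveI : Finite (G →* P) := finite_monoidHom_of_fg G P
  -- the big diagonal homomorphism
  set Ψ : G →* ((G →* P) → P) := Pi.monoidHom (fun ψ => ψ) with hΨ
  set M : Subgroup G := Ψ.ker with hM
  have hMmem : ∀ x : G, x ∈ M ↔ ∀ ψ : G →* P, ψ x = 1 := by
    intro x
    simp [hM, hΨ, MonoidHom.mem_ker, funext_iff]
    exact Iff.rfl
  haveI : M.Normal := MonoidHom.normal_ker Ψ
  haveI : Finite (G ⧸ M) := Finite.of_equiv _ (QuotientGroup.quotientKerEquivRange Ψ).symm.toEquiv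
  -- M is contained in φ.ker
  have hMle : M ≤ φ.ker := by
    intro x hx
    have h0 := (hMmem x).mp hx (MulAction.toPermHom G Q)
    have h1 : x • ((1 : G) : Q) = ((1 : G) : Q) := by
      rw [show x • ((1 : G) : Q) = MulAction.toPermHom G Q x ((1 : G) : Q) from rfl, h0]; rfl
    rw [MulAction.Quotient.smul_mk, smul_eq_mul, mul_one] at h1
    exact (QuotientGroup.eq_one_iff x).mp (h1.trans (QuotientGroup.mk_one _))
  -- M is characteristic
  have hcomap : ∀ σ : MulAut G, M.comap σ.toMonoidHom = M := by
    intro σ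
    ext x
    simp only [Subgroup.mem_comap, hMmem]
    constructor
    · intro h ψ
      have := h (ψ.comp σ.symm.toMonoidHom)
      simpa using this
    · intro h ψ
      exact h (ψ.comp σ.toMonoidHom)
  have hmap : ∀ σ : MulAut G, M.map (σ : G →* G) = M := by
    intro σ
    rw [Subgroup.map_equiv_eq_comap_symm]
    exact hcomap σ.symm
  -- build the homomorphism to MulAut (G ⧸ M)
  refine ⟨MulAut (G ⧸ M), inferInstance,
    Finite.of_injective (fun e : MulAut (G ⧸ M) => (e : (G ⧸ M) → (G ⧸ M)))
      (fun e₁ e₂ h => by ext x; exact congrFun h x), ?_, ?_⟩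
  · exact
      { toFun := fun σ => QuotientGroup.congr M M σ (hmap σ)
        map_one' := by
          apply MulEquiv.ext
          intro x
          induction x using QuotientGroup.induction_on with
          | H z => rw [QuotientGroup.congr_mk]; rfl
        map_mul' := by
          intro σ τ
          apply MulEquiv.ext
          intro x
          induction x using QuotientGroup.induction_on with
          | H z =>
            rw [MulAut.mul_apply, QuotientGroup.congr_mk, QuotientGroup.congr_mk,
              QuotientGroup.congr_mk]
            rfl }
  · intro h1
    have h2 : QuotientGroup.congr M M f (hmap f) ((g : G ⧸ M)) = ((g : G ⧸ M)) := by
      rw [show QuotientGroup.congr M M f (hmap f) = 1 from h1]; rfl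
    rw [QuotientGroup.congr_mk] at h2
    have h3 : (f g)⁻¹ * g ∈ M := QuotientGroup.eq.mp h2
    have h4 : f g * g⁻¹ ∈ M := by
      have h5 : (((f g)⁻¹ * g)⁻¹ : G) ∈ M := M.inv_mem h3
      have h6 := Subgroup.Normal.conj_mem ‹M.Normal› _ h5 (f g)
      simpa [mul_assoc] using h6
    exact hφ (MonoidHom.mem_ker.mp (hMle h4))
end

section
/- (Mal'cev) Every finitely generated, residually finite group is Hopfian: if G is finitely generated and residually finite, then every surjective group homomorphism G → G is injective. -/
lemma hom_finite (G H : Type) [Group G] [Group.FG G] [Group H] [Finite H] :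
    Finite (G →* H) := by
  obtain ⟨S, hS⟩ := Group.FG.out (G := G)
  have : Function.Injective (fun (φ : G →* H) => (fun s : S => φ s)) := by
    intro φ ψ h
    refine MonoidHom.eq_of_eqOn_dense hS ?_
    intro x hx
    exact congrFun h ⟨x, hx⟩
  exact Finite.of_injective _ this

/-- (Mal'cev) Every finitely generated, residually finite group is Hopfian. -/
theorem fg_residuallyFinite_hopfian (G : Type) [Group G] [Group.FG G]
    (hres : ∀ a : G, a ≠ 1 →
      ∃ (H : Type) (_ : Group H) (_ : Finite H) (φ : G →* H), φ a ≠ 1)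
    (f : G →* G) (hf : Function.Surjective f) : Function.Injective f := by
  rw [← MonoidHom.ker_eq_bot_iff, eq_bot_iff]
  intro a ha
  by_contra hne
  obtain ⟨H, _, _, φ, hφ⟩ := hres a (by simpa using hne)
  have : Finite (G →* H) := hom_finite G H
  have hinj : Function.Injective (fun ψ : G →* H => ψ.comp f) := by
    intro ψ ψ' h
    ext x
    obtain ⟨y, rfl⟩ := hf x
    exact DFunLike.congr_fun h y
  obtain ⟨ψ, hψ⟩ := (Finite.injective_iff_surjective.mp hinj) φ
  have : φ a = ψ (f a) := by rw [← hψ]; rfl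
  have hfa : f a = 1 := ha
  rw [this, hfa, map_one] at hφ
  exact hφ rfl
end

section
/- (Garside normal form) Every braid β ∈ B_n can be written in a unique way as β = Δ^p A, where p ∈ ℤ, A is a positive braid (an element of the submonoid of B_n generated by σ_1,…,σ_{n-1}), and Δ is not a prefix of A (i.e. there is no positive braid c with Δc = A). -/
/-- The generator `σᵢ` indexed by a natural number (`1` if out of range). -/
def sigmaN (n : ℕ) (i : ℕ) : BraidGroup n :=
  if h : i < n - 1 then braidGen n ⟨i, h⟩ else 1

/-- The descending run `σₖ σₖ₋₁ ⋯ σ₀` (0-indexed). -/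
def descRun (n k : ℕ) : BraidGroup n :=
  (((List.range (k + 1)).reverse).map (sigmaN n)).prod

/-- The half twist `Δ = σ₁(σ₂σ₁)(σ₃σ₂σ₁)⋯(σₙ₋₁σₙ₋₂⋯σ₁)` (written 1-indexed). -/
def halfTwist (n : ℕ) : BraidGroup n :=
  ((List.range (n - 1)).map (descRun n)).prod

/-- The braid `δ = σ₁σ₂⋯σₙ₋₁` (written 1-indexed). -/
def deltaBraid (n : ℕ) : BraidGroup n :=
  ((List.range (n - 1)).map (sigmaN n)).prod

/-- The braid `ε = σ₁δ = σ₁(σ₁σ₂⋯σₙ₋₁)` (written 1-indexed). -/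
def epsBraid (n : ℕ) : BraidGroup n := sigmaN n 0 * deltaBraid n

/-- The monoid of positive braids: the submonoid of `Bₙ` generated by `σ₁, …, σₙ₋₁`. -/
def posBraid (n : ℕ) : Submonoid (BraidGroup n) :=
  Submonoid.closure (Set.range (braidGen n))

/-- The prefix order on `Bₙ`: `a ≼ b` iff `a c = b` for some positive braid `c`. -/
def braidPrefix (n : ℕ) (a b : BraidGroup n) : Prop :=
  ∃ c ∈ posBraid n, a * c = b

namespace GarsideProof
variable {n : ℕ}

lemma rel_eq_one {r : FreeGroup (Fin (n-1))} (hr : r ∈ braidRels n) :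
    PresentedGroup.mk (braidRels n) r = 1 :=
  (QuotientGroup.eq_one_iff _).mpr (Subgroup.subset_normalClosure hr)

lemma sigma_comm {i j : ℕ} (h : i + 1 < j) :
    sigmaN n i * sigmaN n j = sigmaN n j * sigmaN n i := by
  by_cases hj : j < n - 1
  · have hi : i < n - 1 := by omega
    have h1 := rel_eq_one (n := n) (Or.inl ⟨⟨i, hi⟩, ⟨j, hj⟩, h, rfl⟩)
    rw [map_mul, map_inv, map_mul, mul_inv_eq_one] at h1
    simpa [sigmaN, dif_pos hi, dif_pos hj, braidGen, PresentedGroup.of] using h1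
  · simp [sigmaN, dif_neg hj]

lemma sigma_braid {i : ℕ} (h : i + 1 < n - 1) :
    sigmaN n i * sigmaN n (i+1) * sigmaN n i = sigmaN n (i+1) * sigmaN n i * sigmaN n (i+1) := by
  have hi : i < n - 1 := by omega
  have h1 := rel_eq_one (n := n) (Or.inr ⟨⟨i, hi⟩, ⟨i+1, h⟩, rfl, rfl⟩)
  rw [map_mul, map_inv, map_mul, map_mul, map_mul, mul_inv_eq_one] at h1
  simpa [sigmaN, dif_pos hi, dif_pos h, braidGen, PresentedGroup.of] using h1


variable {n : ℕ}

def PT (n m : ℕ) : BraidGroup n := ((List.range m).map (descRun n)).prod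

lemma descRun_zero : descRun n 0 = sigmaN n 0 := by
  rw [descRun, show List.range 1 = [0] from rfl]; simp

lemma descRun_succ (k : ℕ) : descRun n (k+1) = sigmaN n (k+1) * descRun n k := by
  simp [descRun, List.range_succ]

lemma PT_zero : PT n 0 = 1 := by simp [PT]

lemma PT_succ (m : ℕ) : PT n (m+1) = PT n m * descRun n m := by
  simp [PT, List.range_succ]

lemma halfTwist_eq : halfTwist n = PT n (n-1) := rfl

lemma sigmaN_mem (i : ℕ) : sigmaN n i ∈ posBraid n := by
  unfold sigmaN
  split
  · exact Submonoid.subset_closure ⟨_, rfl⟩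
  · exact one_mem _

lemma descRun_mem (k : ℕ) : descRun n k ∈ posBraid n := by
  induction k with
  | zero => rw [descRun_zero]; exact sigmaN_mem 0
  | succ k ih => rw [descRun_succ]; exact mul_mem (sigmaN_mem _) ih

lemma PT_mem (m : ℕ) : PT n m ∈ posBraid n := by
  induction m with
  | zero => rw [PT_zero]; exact one_mem _
  | succ m ih => rw [PT_succ]; exact mul_mem ih (descRun_mem m)

lemma braidGen_eq (i : Fin (n-1)) : braidGen n i = sigmaN n i.val := by
  simp [sigmaN, dif_pos i.isLt]

/-- R0 : σⱼ commutes with Dₖ for j ≥ k+2 -/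
lemma R0 (k : ℕ) : ∀ j, k + 2 ≤ j → descRun n k * sigmaN n j = sigmaN n j * descRun n k := by
  induction k with
  | zero => intro j hj; rw [descRun_zero]; exact sigma_comm (by omega)
  | succ k ih =>
    intro j hj
    rw [descRun_succ, mul_assoc, ih j (by omega), ← mul_assoc,
      sigma_comm (i := k+1) (by omega), mul_assoc]

/-- R0' : σⱼ commutes with PT m for j ≥ m+1 -/
lemma R0' (m : ℕ) : ∀ j, m + 1 ≤ j → PT n m * sigmaN n j = sigmaN n j * PT n m := by
  induction m with
  | zero => intro j _; rw [PT_zero, one_mul, mul_one]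
  | succ m ih =>
    intro j hj
    rw [PT_succ, mul_assoc, R0 m j (by omega), ← mul_assoc, ih j (by omega), mul_assoc]

/-- top case of R1: D_{k+1} σ_{k+1} = σ_k D_{k+1} -/
lemma R1top (k : ℕ) (hk : k + 1 ≤ n - 2) :
    descRun n (k+1) * sigmaN n (k+1) = sigmaN n k * descRun n (k+1) := by
  cases k with
  | zero =>
    rw [descRun_succ, descRun_zero]
    have hb := sigma_braid (n := n) (i := 0) (by omega)
    calc sigmaN n (0+1) * sigmaN n 0 * sigmaN n (0+1)
        = sigmaN n 0 * sigmaN n (0+1) * sigmaN n 0 := by rw [← hb]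
      _ = sigmaN n 0 * (sigmaN n (0+1) * sigmaN n 0) := by group
  | succ t =>
    rw [descRun_succ, descRun_succ]
    have hb := sigma_braid (n := n) (i := t+1) (by omega)
    have hc := R0 (n := n) t (t+1+1) (by omega)
    calc sigmaN n (t+1+1) * (sigmaN n (t+1) * descRun n t) * sigmaN n (t+1+1)
        = sigmaN n (t+1+1) * sigmaN n (t+1) * (descRun n t * sigmaN n (t+1+1)) := by group
      _ = sigmaN n (t+1+1) * sigmaN n (t+1) * (sigmaN n (t+1+1) * descRun n t) := by rw [hc]
      _ = (sigmaN n (t+1+1) * sigmaN n (t+1) * sigmaN n (t+1+1)) * descRun n t := by group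
      _ = (sigmaN n (t+1) * sigmaN n (t+1+1) * sigmaN n (t+1)) * descRun n t := by rw [← hb]
      _ = sigmaN n (t+1) * (sigmaN n (t+1+1) * (sigmaN n (t+1) * descRun n t)) := by group

/-- R1 : Dₖ σᵢ₊₁ = σᵢ Dₖ for i+1 ≤ k ≤ n-2 -/
lemma R1 (k : ℕ) : ∀ i, i + 1 ≤ k → k ≤ n - 2 →
    descRun n k * sigmaN n (i+1) = sigmaN n i * descRun n k := by
  induction k with
  | zero => intro i hi _; omega
  | succ k ih =>
    intro i hi hk
    rcases Nat.lt_or_ge (i+1) (k+1) with hlt | hge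
    · rw [descRun_succ, mul_assoc, ih i (by omega) (by omega), ← mul_assoc,
        ← sigma_comm (n := n) (i := i) (j := k+1) (by omega), mul_assoc]
    · have : i = k := by omega
      subst this
      exact R1top i hk

/-- LL : σ_{k+1} Dₖ D_{k+1} = Dₖ D_{k+1} σ₀ -/
lemma LL (k : ℕ) : k + 1 ≤ n - 2 →
    sigmaN n (k+1) * descRun n k * descRun n (k+1) =
      descRun n k * descRun n (k+1) * sigmaN n 0 := by
  induction k with
  | zero =>
    intro hk
    rw [descRun_succ, descRun_zero]
    have hb := sigma_braid (n := n) (i := 0) (by omega)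
    calc sigmaN n (0+1) * sigmaN n 0 * (sigmaN n (0+1) * sigmaN n 0)
        = (sigmaN n (0+1) * sigmaN n 0 * sigmaN n (0+1)) * sigmaN n 0 := by group
      _ = (sigmaN n 0 * sigmaN n (0+1) * sigmaN n 0) * sigmaN n 0 := by rw [← hb]
      _ = sigmaN n 0 * (sigmaN n (0+1) * sigmaN n 0) * sigmaN n 0 := by group
  | succ t ih =>
    intro hk
    have hb := sigma_braid (n := n) (i := t+1) (by omega)
    have hc := R0 (n := n) t (t+1+1) (by omega)
    have iht := ih (by omega)
    rw [descRun_succ (t+1), descRun_succ t]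
    calc sigmaN n (t+1+1) * (sigmaN n (t+1) * descRun n t) *
          (sigmaN n (t+1+1) * (sigmaN n (t+1) * descRun n t))
        = sigmaN n (t+1+1) * sigmaN n (t+1) * (descRun n t * sigmaN n (t+1+1)) *
            (sigmaN n (t+1) * descRun n t) := by group
      _ = sigmaN n (t+1+1) * sigmaN n (t+1) * (sigmaN n (t+1+1) * descRun n t) *
            (sigmaN n (t+1) * descRun n t) := by rw [hc]
      _ = (sigmaN n (t+1+1) * sigmaN n (t+1) * sigmaN n (t+1+1)) *
            (descRun n t * (sigmaN n (t+1) * descRun n t)) := by group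
      _ = (sigmaN n (t+1) * sigmaN n (t+1+1) * sigmaN n (t+1)) *
            (descRun n t * (sigmaN n (t+1) * descRun n t)) := by rw [← hb]
      _ = sigmaN n (t+1) * sigmaN n (t+1+1) *
            (sigmaN n (t+1) * descRun n t * (sigmaN n (t+1) * descRun n t)) := by group
      _ = sigmaN n (t+1) * sigmaN n (t+1+1) *
            (sigmaN n (t+1) * descRun n t * descRun n (t+1)) := by rw [descRun_succ t]
      _ = sigmaN n (t+1) * sigmaN n (t+1+1) *
            (descRun n t * descRun n (t+1) * sigmaN n 0) := by rw [iht]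
      _ = sigmaN n (t+1) * sigmaN n (t+1+1) *
            (descRun n t * (sigmaN n (t+1) * descRun n t) * sigmaN n 0) := by rw [descRun_succ t]
      _ = sigmaN n (t+1) * (sigmaN n (t+1+1) * descRun n t) *
            (sigmaN n (t+1) * descRun n t) * sigmaN n 0 := by group
      _ = sigmaN n (t+1) * (descRun n t * sigmaN n (t+1+1)) *
            (sigmaN n (t+1) * descRun n t) * sigmaN n 0 := by rw [hc]
      _ = sigmaN n (t+1) * descRun n t *
            (sigmaN n (t+1+1) * (sigmaN n (t+1) * descRun n t)) * sigmaN n 0 := by group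

/-- T : PT m σⱼ = σₖ PT m when j + k + 1 = m ≤ n - 1 -/
lemma T (m : ℕ) : ∀ j k, j + k + 1 = m → m ≤ n - 1 →
    PT n m * sigmaN n j = sigmaN n k * PT n m := by
  induction m with
  | zero => intro j k h _; omega
  | succ m ih =>
    intro j k hjk hm
    rcases j with _ | i
    · -- j = 0, k = m
      have hk : k = m := by omega
      subst hk
      rcases k with _ | t
      · -- m = 0 : PT 1 * σ₀ = σ₀ * PT 1
        rw [PT_succ, PT_zero, descRun_zero, one_mul]
      · -- m = t+1
        rw [PT_succ, PT_succ]
        calc PT n t * descRun n t * descRun n (t+1) * sigmaN n 0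
            = PT n t * (sigmaN n (t+1) * descRun n t * descRun n (t+1)) := by
              rw [LL t (by omega)]; group
          _ = PT n t * sigmaN n (t+1) * (descRun n t * descRun n (t+1)) := by group
          _ = sigmaN n (t+1) * PT n t * (descRun n t * descRun n (t+1)) := by
              rw [R0' t (t+1) (by omega)]
          _ = sigmaN n (t+1) * (PT n t * descRun n t * descRun n (t+1)) := by group
    · -- j = i+1
      rw [PT_succ, mul_assoc, R1 m i (by omega) (by omega), ← mul_assoc,
        ih i k (by omega) (by omega), mul_assoc]

/-- Dₖ ends with σ₀ -/
lemma descRun_tail (k : ℕ) : ∃ E ∈ posBraid n, descRun n k = E * sigmaN n 0 := by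
  induction k with
  | zero => exact ⟨1, one_mem _, by rw [descRun_zero, one_mul]⟩
  | succ k ih =>
    obtain ⟨E, hE, hEq⟩ := ih
    exact ⟨sigmaN n (k+1) * E, mul_mem (sigmaN_mem _) hE, by
      rw [descRun_succ, hEq, mul_assoc]⟩

/-- L5 : every generator σⱼ (j ≤ m-1) left-divides PT m -/
lemma L5 (m : ℕ) : ∀ j, j + 1 ≤ m → m ≤ n - 1 →
    ∃ Q ∈ posBraid n, PT n m = sigmaN n j * Q := by
  induction m with
  | zero => intro j h _; omega
  | succ m ih =>
    intro j hj hm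
    rcases Nat.lt_or_ge (j+1) (m+1) with hlt | hge
    · obtain ⟨Q, hQ, hEq⟩ := ih j (by omega) (by omega)
      exact ⟨Q * descRun n m, mul_mem hQ (descRun_mem m), by
        rw [PT_succ, hEq, mul_assoc]⟩
    · have hjm : j = m := by omega
      subst hjm
      have hT := T (n := n) (j+1) 0 j (by omega) hm
      obtain ⟨E, hE, hEq⟩ := descRun_tail (n := n) j
      refine ⟨PT n j * E, mul_mem (PT_mem j) hE, ?_⟩
      have h1 : PT n (j+1) = PT n j * E * sigmaN n 0 := by
        rw [PT_succ, hEq, mul_assoc]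
      have h2 : sigmaN n j * (PT n j * E) = sigmaN n j * PT n (j+1) * (sigmaN n 0)⁻¹ := by
        rw [h1]; group
      rw [h2, ← hT]; group

lemma halfTwist_mem : halfTwist n ∈ posBraid n := PT_mem (n-1)

variable (hn : 2 ≤ n)
include hn

/-- Δ σᵢ = σ_{n-2-i} Δ for i ≤ n-2 -/
lemma C1 {i : ℕ} (hi : i ≤ n - 2) :
    halfTwist n * sigmaN n i = sigmaN n (n-2-i) * halfTwist n :=
  T (n-1) i (n-2-i) (by omega) (le_refl _)

/-- Δ σ_{n-2-i} = σᵢ Δ for i ≤ n-2 -/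
lemma C2 {i : ℕ} (hi : i ≤ n - 2) :
    halfTwist n * sigmaN n (n-2-i) = sigmaN n i * halfTwist n := by
  have := T (n := n) (n-1) (n-2-i) i (by omega) (le_refl _)
  exact this

/-- Δ σᵢ⁻¹ is positive -/
lemma DInvGen (i : ℕ) : halfTwist n * (sigmaN n i)⁻¹ ∈ posBraid n := by
  rcases Nat.lt_or_ge i (n-1) with hi | hi
  · obtain ⟨Q, hQ, hEq⟩ := L5 (n := n) (n-1) (n-2-i) (by omega) (le_refl _)
    rw [← halfTwist_eq] at hEq
    have hC : halfTwist n * sigmaN n i = sigmaN n (n-2-i) * halfTwist n := C1 hn (by omega)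
    have h3 : sigmaN n (n-2-i) * (halfTwist n * (sigmaN n i)⁻¹) = sigmaN n (n-2-i) * Q := by
      rw [← hEq, ← mul_assoc, ← hC, mul_assoc]
      simp
    have : halfTwist n * (sigmaN n i)⁻¹ = Q := mul_left_cancel h3
    rw [this]; exact hQ
  · have : sigmaN n i = 1 := by simp [sigmaN, Nat.not_lt.mpr hi]
    rw [this, inv_one, mul_one]; exact halfTwist_mem

/-- conjugation by Δ preserves positivity -/
lemma conj_pos {A : BraidGroup n} (hA : A ∈ posBraid n) :
    halfTwist n * A * (halfTwist n)⁻¹ ∈ posBraid n := by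
  induction hA using Submonoid.closure_induction with
  | mem x hx =>
    obtain ⟨i, rfl⟩ := hx
    rw [braidGen_eq]
    have hC : halfTwist n * sigmaN n i.val = sigmaN n (n-2-i.val) * halfTwist n :=
      C1 hn (by omega)
    have : halfTwist n * sigmaN n i.val * (halfTwist n)⁻¹ = sigmaN n (n-2-i.val) := by
      rw [hC]; group
    rw [this]; exact sigmaN_mem _
  | one => simpa using one_mem _
  | mul x y hx hy ihx ihy =>
    have : halfTwist n * (x * y) * (halfTwist n)⁻¹ =
        (halfTwist n * x * (halfTwist n)⁻¹) * (halfTwist n * y * (halfTwist n)⁻¹) := by group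
    rw [this]; exact mul_mem ihx ihy

/-- conjugation by Δ⁻¹ preserves positivity -/
lemma conj_pos' {A : BraidGroup n} (hA : A ∈ posBraid n) :
    (halfTwist n)⁻¹ * A * halfTwist n ∈ posBraid n := by
  induction hA using Submonoid.closure_induction with
  | mem x hx =>
    obtain ⟨i, rfl⟩ := hx
    rw [braidGen_eq]
    have hC : halfTwist n * sigmaN n (n-2-i.val) = sigmaN n i.val * halfTwist n := by
      have hi : i.val ≤ n - 2 := by omega
      exact C2 hn hi
    have : (halfTwist n)⁻¹ * sigmaN n i.val * halfTwist n = sigmaN n (n-2-i.val) := by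
      rw [← mul_inv_eq_iff_eq_mul] at hC
      rw [← hC]; group
    rw [this]; exact sigmaN_mem _
  | one => simpa using one_mem _
  | mul x y hx hy ihx ihy =>
    have : (halfTwist n)⁻¹ * (x * y) * halfTwist n =
        ((halfTwist n)⁻¹ * x * halfTwist n) * ((halfTwist n)⁻¹ * y * halfTwist n) := by group
    rw [this]; exact mul_mem ihx ihy

/-- conjugation by Δ^k preserves positivity -/
lemma conj_pow_pos (k : ℕ) : ∀ {A : BraidGroup n}, A ∈ posBraid n →
    halfTwist n ^ k * A * (halfTwist n ^ k)⁻¹ ∈ posBraid n := by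
  induction k with
  | zero => intro A hA; simpa using hA
  | succ k ih =>
    intro A hA
    have heq : halfTwist n ^ (k+1) * A * (halfTwist n ^ (k+1))⁻¹ =
        halfTwist n ^ k * (halfTwist n * A * (halfTwist n)⁻¹) * (halfTwist n ^ k)⁻¹ := by
      rw [pow_succ]; group
    rw [heq]
    exact ih (conj_pos hn hA)

/-- Δ^k A⁻¹ is positive for some k, when A is positive -/
lemma negpart {A : BraidGroup n} (hA : A ∈ posBraid n) :
    ∃ k : ℕ, halfTwist n ^ k * A⁻¹ ∈ posBraid n := by
  induction hA using Submonoid.closure_induction with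
  | mem x hx =>
    obtain ⟨i, rfl⟩ := hx
    refine ⟨1, ?_⟩
    rw [pow_one, braidGen_eq]
    exact DInvGen hn i.val
  | one => exact ⟨0, by simpa using one_mem _⟩
  | mul x y hx hy ihx ihy =>
    obtain ⟨a, ha⟩ := ihx
    obtain ⟨b, hb⟩ := ihy
    refine ⟨a + b, ?_⟩
    have : halfTwist n ^ (a+b) * (x*y)⁻¹ =
        (halfTwist n ^ a * (halfTwist n ^ b * y⁻¹) * (halfTwist n ^ a)⁻¹) *
          (halfTwist n ^ a * x⁻¹) := by
      rw [pow_add]; group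
    rw [this]
    exact mul_mem (conj_pow_pos hn a hb) ha

/-- every braid becomes positive after multiplying by a power of Δ -/
lemma exists_pos (β : BraidGroup n) :
    ∃ k : ℕ, halfTwist n ^ k * β ∈ posBraid n := by
  induction β using PresentedGroup.induction_on with
  | H z =>
    induction z using FreeGroup.induction_on with
    | C1 => exact ⟨0, by simpa using one_mem _⟩
    | of x =>
      refine ⟨0, ?_⟩
      rw [pow_zero, one_mul]
      have h0 : (PresentedGroup.mk (braidRels n)) (FreeGroup.of x) = braidGen n x := rfl
      rw [h0]
      exact Submonoid.subset_closure ⟨x, rfl⟩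
    | inv_of x _ =>
      refine ⟨1, ?_⟩
      have h1 : (PresentedGroup.mk (braidRels n)) (FreeGroup.of x)⁻¹ =
          (sigmaN n x.val)⁻¹ := by
        rw [map_inv]
        congr 1
        rw [← braidGen_eq]
        rfl
      rw [pow_one, h1]
      exact DInvGen hn x.val
    | mul x y ihx ihy =>
      obtain ⟨a, ha⟩ := ihx
      obtain ⟨b, hb⟩ := ihy
      refine ⟨a + b, ?_⟩
      have : halfTwist n ^ (a+b) * (PresentedGroup.mk (braidRels n)) (x*y) =
          (halfTwist n ^ b * (halfTwist n ^ a * (PresentedGroup.mk (braidRels n)) x) *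
            (halfTwist n ^ b)⁻¹) *
            (halfTwist n ^ b * (PresentedGroup.mk (braidRels n)) y) := by
        rw [pow_add, map_mul]; group
      rw [this]
      exact mul_mem (conj_pow_pos hn b ha) hb

omit hn

/-- the length homomorphism sending every generator to 1 -/
def lenHom (n : ℕ) : BraidGroup n →* Multiplicative ℤ :=
  PresentedGroup.toGroup (f := fun _ => Multiplicative.ofAdd (1:ℤ)) (by
    intro r hr
    rcases hr with ⟨i, j, _, rfl⟩ | ⟨i, j, _, rfl⟩ <;>
      · simp only [map_mul, map_inv, FreeGroup.lift_apply_of]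
        group)

def len (n : ℕ) (b : BraidGroup n) : ℤ := Multiplicative.toAdd (lenHom n b)

lemma len_mul (a b : BraidGroup n) : len n (a * b) = len n a + len n b := by
  simp [len, map_mul]

lemma len_sigma {i : ℕ} (hi : i < n - 1) : len n (sigmaN n i) = 1 := by
  have : sigmaN n i = braidGen n ⟨i, hi⟩ := by simp [sigmaN, dif_pos hi]
  rw [this]
  simp only [len, braidGen, lenHom, PresentedGroup.toGroup.of]
  rfl

lemma len_nonneg {A : BraidGroup n} (hA : A ∈ posBraid n) : 0 ≤ len n A := by
  induction hA using Submonoid.closure_induction with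
  | mem x hx =>
    obtain ⟨i, rfl⟩ := hx
    rw [braidGen_eq, len_sigma i.isLt]
    omega
  | one => simp [len]
  | mul x y hx hy ihx ihy => rw [len_mul]; omega

lemma len_zpow (a : BraidGroup n) (z : ℤ) : len n (a ^ z) = z * len n a := by
  simp [len, map_zpow, toAdd_zpow, smul_eq_mul]

lemma len_halfTwist (hn : 2 ≤ n) : 1 ≤ len n (halfTwist n) := by
  obtain ⟨Q, hQ, hEq⟩ := L5 (n := n) (n-1) 0 (by omega) (le_refl _)
  rw [← halfTwist_eq] at hEq
  rw [hEq, len_mul, len_sigma (by omega : 0 < n - 1)]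
  have := len_nonneg hQ
  omega

theorem main (n : ℕ) (hn : 2 ≤ n) (β : BraidGroup n) :
    ∃! pA : ℤ × BraidGroup n,
      pA.2 ∈ posBraid n ∧ β = halfTwist n ^ pA.1 * pA.2 ∧
        ¬ braidPrefix n (halfTwist n) pA.2 := by
  have hDmem : halfTwist n ∈ posBraid n := halfTwist_mem
  have hpowmem : ∀ t : ℕ, halfTwist n ^ (t:ℤ) ∈ posBraid n := fun t => by
    rw [zpow_natCast]; exact pow_mem hDmem t
  set P : ℤ → Prop := fun p => halfTwist n ^ (-p) * β ∈ posBraid n with hP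
  obtain ⟨k0, hk0⟩ := exists_pos hn β
  have hinh : ∃ z, P z := ⟨-(k0:ℤ), by simpa [P, zpow_natCast] using hk0⟩
  have hlenΔ : 1 ≤ len n (halfTwist n) := len_halfTwist hn
  have hbdd : ∃ b : ℤ, ∀ z, P z → z ≤ b := by
    refine ⟨max (len n β) 0, ?_⟩
    intro z hz
    have h0 : 0 ≤ len n (halfTwist n ^ (-z) * β) := len_nonneg hz
    rw [len_mul, len_zpow] at h0
    rcases le_or_gt z 0 with h | h
    · exact le_trans h (le_max_right _ _)
    · have h1 : z ≤ z * len n (halfTwist n) := le_mul_of_one_le_right (le_of_lt h) hlenΔ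
      nlinarith [le_max_left (len n β) (0:ℤ)]
  obtain ⟨p, hp, hmax⟩ := Int.exists_greatest_of_bdd hbdd hinh
  refine ⟨(p, halfTwist n ^ (-p) * β), ⟨hp, by group, ?_⟩, ?_⟩
  · rintro ⟨c, hc, hcEq⟩
    simp only at hcEq
    have hPp1 : P (p + 1) := by
      have heq : halfTwist n ^ (-(p+1)) * β = c := by
        have h1 : halfTwist n ^ (-(p+1)) * β =
            (halfTwist n)⁻¹ * (halfTwist n ^ (-p) * β) := by
          rw [show -(p+1) = -1 + -p by ring, zpow_add, zpow_neg_one]; group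
        rw [h1, ← hcEq]; group
      rw [hP]; simp only; rw [heq]; exact hc
    have := hmax _ hPp1
    omega
  · rintro ⟨q, B⟩ ⟨hB, hβq, hnpB⟩
    simp only at hB hβq hnpB
    have hBeq : halfTwist n ^ (-q) * β = B := by
      rw [hβq, ← mul_assoc, ← zpow_add, neg_add_cancel, zpow_zero, one_mul]
    have hqP : P q := by rw [hP]; simp only; rw [hBeq]; exact hB
    have hqle : q ≤ p := hmax q hqP
    rcases lt_or_eq_of_le hqle with hlt | heq
    · exfalso
      apply hnpB
      refine ⟨halfTwist n ^ (p - q - 1) * (halfTwist n ^ (-p) * β), mul_mem ?_ hp, ?_⟩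
      · have ht : (p - q - 1) = ((p - q - 1).toNat : ℤ) := by omega
        rw [ht]; exact hpowmem _
      · rw [← hBeq]
        calc halfTwist n * (halfTwist n ^ (p-q-1) * (halfTwist n ^ (-p) * β))
            = halfTwist n ^ (1:ℤ) * halfTwist n ^ (p-q-1) * halfTwist n ^ (-p) * β := by
              rw [zpow_one]; group
          _ = halfTwist n ^ (1 + (p-q-1) + -p) * β := by rw [zpow_add, zpow_add]
          _ = halfTwist n ^ (-q) * β := by rw [show (1:ℤ) + (p-q-1) + -p = -q by ring]
    · rw [Prod.mk.injEq]
      exact ⟨heq, by rw [← hBeq, heq]⟩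

end GarsideProof

/-- (Garside normal form) Every braid `β ∈ Bₙ` can be written uniquely as `β = Δᵖ A` with
`p ∈ ℤ`, `A` a positive braid, and `Δ` not a prefix of `A`. -/
theorem garside_normal_form (n : ℕ) (hn : 2 ≤ n) (β : BraidGroup n) :
    ∃! pA : ℤ × BraidGroup n,
      pA.2 ∈ posBraid n ∧ β = halfTwist n ^ pA.1 * pA.2 ∧
        ¬ braidPrefix n (halfTwist n) pA.2 :=
  GarsideProof.main n hn β
end

section
/- (Garside lattice structure) The prefix order on B_n admits greatest common divisors and least common multiples: for all a, b ∈ B_n there exists d ∈ B_n with d ≼ a, d ≼ b, and d' ≼ d for every d' ∈ B_n satisfying d' ≼ a and d' ≼ b; and there exists m ∈ B_n with a ≼ m, b ≼ m, and m ≼ m' for every m' ∈ B_n satisfying a ≼ m' and b ≼ m'. -/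
namespace Garside

variable {m : ℕ}

abbrev W (m : ℕ) := List (Fin m)

def Far (i j : Fin m) : Prop := (i : ℕ) + 1 < j ∨ (j : ℕ) + 1 < i
def Adj (i j : Fin m) : Prop := (j : ℕ) = i + 1 ∨ (i : ℕ) = j + 1

instance {i j : Fin m} : Decidable (Adj i j) := by unfold Adj; infer_instance
instance {i j : Fin m} : Decidable (Far i j) := by unfold Far; infer_instance

theorem Far.symm {i j : Fin m} (h : Far i j) : Far j i := Or.symm h
theorem Adj.symm {i j : Fin m} (h : Adj i j) : Adj j i := Or.symm h

inductive Stp : W m → W m → Prop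
  | far (i j : Fin m) (h : Far i j) (x y : W m) : Stp (x ++ i :: j :: y) (x ++ j :: i :: y)
  | adj (i j : Fin m) (h : Adj i j) (x y : W m) :
      Stp (x ++ i :: j :: i :: y) (x ++ j :: i :: j :: y)

theorem Stp.symm {u v : W m} (h : Stp u v) : Stp v u := by
  cases h with
  | far i j h x y => exact Stp.far j i h.symm x y
  | adj i j h x y => exact Stp.adj j i h.symm x y

def Beq : W m → W m → Prop := Relation.ReflTransGen Stp

theorem Beq.refl (u : W m) : Beq u u := Relation.ReflTransGen.refl

theorem Beq.trans {u v w : W m} (h1 : Beq u v) (h2 : Beq v w) : Beq u w :=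
  Relation.ReflTransGen.trans h1 h2

theorem Beq.symm {u v : W m} (h : Beq u v) : Beq v u := by
  induction h with
  | refl => exact Beq.refl _
  | tail h1 h2 ih => exact Beq.trans (Relation.ReflTransGen.single h2.symm) ih

instance : Trans (Beq (m := m)) (Beq (m := m)) (Beq (m := m)) := ⟨Beq.trans⟩

theorem Stp.beq {u v : W m} (h : Stp u v) : Beq u v := Relation.ReflTransGen.single h

theorem Stp.append {u v : W m} (h : Stp u v) (x y : W m) : Stp (x ++ u ++ y) (x ++ v ++ y) := by
  cases h with
  | far i j h a b =>
    have e1 : ∀ i j : Fin m, x ++ (a ++ i :: j :: b) ++ y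
        = (x ++ a) ++ i :: j :: (b ++ y) := by intros; simp
    rw [e1, e1]; exact Stp.far _ _ h _ _
  | adj i j h a b =>
    have e1 : ∀ i j k : Fin m, x ++ (a ++ i :: j :: k :: b) ++ y
        = (x ++ a) ++ i :: j :: k :: (b ++ y) := by intros; simp
    rw [e1, e1]; exact Stp.adj _ _ h _ _

theorem Beq.append_congr {u v x y : W m} (h1 : Beq u x) (h2 : Beq v y) :
    Beq (u ++ v) (x ++ y) := by
  have l1 : ∀ a b c : W m, Beq a b → Beq (a ++ c) (b ++ c) := by
    intro a b c h
    induction h with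
    | refl => exact Beq.refl _
    | tail h1 h2 ih =>
      refine ih.trans (Relation.ReflTransGen.single ?_)
      simpa using h2.append [] c
  have l2 : ∀ a b c : W m, Beq b c → Beq (a ++ b) (a ++ c) := by
    intro a b c h
    induction h with
    | refl => exact Beq.refl _
    | tail h1 h2 ih =>
      refine ih.trans (Relation.ReflTransGen.single ?_)
      simpa using h2.append a []
  exact (l1 u x v h1).trans (l2 x v y h2)

theorem Beq.append_left (x : W m) {u v : W m} (h : Beq u v) : Beq (x ++ u) (x ++ v) :=
  Beq.append_congr (Beq.refl x) h

theorem Beq.append_right (x : W m) {u v : W m} (h : Beq u v) : Beq (u ++ x) (v ++ x) :=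
  Beq.append_congr h (Beq.refl x)

theorem Beq.cons (a : Fin m) {u v : W m} (h : Beq u v) : Beq (a :: u) (a :: v) := by
  simpa using Beq.append_left [a] h

theorem Stp.length {u v : W m} (h : Stp u v) : u.length = v.length := by
  cases h <;> simp

theorem Beq.length {u v : W m} (h : Beq u v) : u.length = v.length := by
  induction h with
  | refl => rfl
  | tail h1 h2 ih => rw [ih, h2.length]

theorem Beq.eq_nil {u : W m} (h : Beq [] u) : u = [] := by
  have := h.length; simpa using (List.length_eq_zero_iff.1 this.symm)

/-- basic swap relation -/
theorem beq_swap {i j : Fin m} (h : Far i j) (y : W m) :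
    Beq (i :: j :: y) (j :: i :: y) := by
  simpa using (Stp.far _ _ h [] y).beq

theorem beq_braid {i j : Fin m} (h : Adj i j) (y : W m) :
    Beq (i :: j :: i :: y) (j :: i :: j :: y) := by
  simpa using (Stp.adj _ _ h [] y).beq

/-- reversal -/
theorem Stp.reverse {u v : W m} (h : Stp u v) : Stp u.reverse v.reverse := by
  cases h with
  | far i j h x y =>
    have e : ∀ i j : Fin m, (x ++ i :: j :: y).reverse = y.reverse ++ j :: i :: x.reverse := by
      intros; simp
    rw [e, e]; exact Stp.far _ _ h.symm _ _
  | adj i j h x y =>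
    have e : ∀ i j k : Fin m, (x ++ i :: j :: k :: y).reverse
        = y.reverse ++ k :: j :: i :: x.reverse := by intros; simp
    rw [e, e]; exact Stp.adj _ _ h _ _

theorem Beq.reverse {u v : W m} (h : Beq u v) : Beq u.reverse v.reverse := by
  induction h with
  | refl => exact Beq.refl _
  | tail h1 h2 ih => exact ih.trans h2.reverse.beq

theorem beq_reverse_iff {u v : W m} : Beq u.reverse v.reverse ↔ Beq u v :=
  ⟨fun h => by simpa using h.reverse, Beq.reverse⟩


/-! ### Complement words and the Key Lemma -/

theorem far_or_adj {i j : Fin m} (h : i ≠ j) : Far i j ∨ Adj i j := by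
  have : (i : ℕ) ≠ (j : ℕ) := fun hc => h (Fin.ext hc)
  unfold Far Adj; omega

theorem Far.ne {i j : Fin m} (h : Far i j) : i ≠ j := by
  rintro rfl; unfold Far at h; omega

theorem Adj.ne {i j : Fin m} (h : Adj i j) : i ≠ j := by
  rintro rfl; unfold Adj at h; omega

theorem Far.not_adj {i j : Fin m} (h : Far i j) : ¬ Adj i j := by
  unfold Far at h; unfold Adj; omega

/-- The complement: `i * cw i j = j * cw j i` is the lcm of `i` and `j`. -/
def cw (i j : Fin m) : W m :=
  if i = j then [] else if Adj i j then [j, i] else [j]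

@[simp] theorem cw_self (i : Fin m) : cw i i = [] := by simp [cw]

theorem cw_adj {i j : Fin m} (h : Adj i j) : cw i j = [j, i] := by
  simp [cw, h.ne, h]

theorem cw_far {i j : Fin m} (h : Far i j) : cw i j = [j] := by
  simp [cw, h.ne, h.not_adj]

/-- The two lcm-words agree. -/
theorem beq_cw_head (i j : Fin m) (s : W m) :
    Beq (i :: (cw i j ++ s)) (j :: (cw j i ++ s)) := by
  rcases eq_or_ne i j with rfl | hne
  · exact Beq.refl _
  rcases far_or_adj hne with hf | ha
  · rw [cw_far hf, cw_far hf.symm]; exact beq_swap hf s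
  · rw [cw_adj ha, cw_adj ha.symm]; exact beq_braid ha s

theorem stp_two_le_length {u v : W m} (h : Stp u v) : 2 ≤ u.length := by
  cases h <;> simp <;> omega


theorem Beq.cons₂ {u v : W m} (a b : Fin m) (h : Beq u v) : Beq (a :: b :: u) (a :: b :: v) :=
  (h.cons b).cons a

/-- The cube condition for triples of generators. -/
theorem cube {N : ℕ}
    (ihKL : ∀ u v : W m, u.length ≤ N → ∀ i j, Beq (i :: u) (j :: v) →
      ∃ w, Beq u (cw i j ++ w) ∧ Beq v (cw j i ++ w))
    (i j k : Fin m) (hki : k ≠ i) (t w₁ : W m)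
    (hlen : (cw k i ++ t).length ≤ N + 1)
    (hstar : Beq (cw k i ++ t) (cw k j ++ w₁)) :
    ∃ w, Beq (cw i k ++ t) (cw i j ++ w) ∧ Beq (cw j k ++ w₁) (cw j i ++ w) := by
  have hcancel : ∀ (a : Fin m) (p q : W m), p.length ≤ N → Beq (a :: p) (a :: q) → Beq p q := by
    intro a p q hl hpq
    obtain ⟨w, h1, h2⟩ := ihKL p q hl a a hpq
    simp only [cw_self, List.nil_append] at h1 h2
    exact h1.trans h2.symm
  by_cases hkj : k = j
  · subst hkj
    simp only [cw_self, List.nil_append] at hstar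
    exact ⟨t, Beq.refl _, by simpa using hstar.symm⟩
  by_cases hij : i = j
  · subst hij
    have htw : Beq t w₁ := by
      rcases far_or_adj hki with hf | ha
      · rw [cw_far hf] at hstar hlen
        simp only [List.cons_append, List.nil_append] at hstar hlen
        exact hcancel i t w₁ (by simp at hlen; omega) hstar
      · rw [cw_adj ha] at hstar hlen
        simp only [List.cons_append, List.nil_append] at hstar hlen
        have h2 := hcancel i (k :: t) (k :: w₁) (by simp at hlen ⊢; omega) hstar
        exact hcancel k t w₁ (by simp at hlen; omega) h2
    exact ⟨cw i k ++ t, by simp [Beq.refl], by simpa using Beq.append_left _ htw.symm⟩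
  have hik : i ≠ k := fun hc => hki hc.symm
  have hjk : j ≠ k := fun hc => hkj hc.symm
  rcases far_or_adj hij with fij | aij <;> rcases far_or_adj hik with fik | aik <;>
    rcases far_or_adj hjk with fjk | ajk
  · -- case A : all pairs far
    rw [cw_far fik.symm] at hstar hlen
    rw [cw_far fjk.symm] at hstar
    simp only [List.cons_append, List.nil_append] at hstar hlen
    simp only [List.length_cons] at hlen
    obtain ⟨s, hs1, hs2⟩ := ihKL t w₁ (by omega) i j hstar
    rw [cw_far fij] at hs1; rw [cw_far fij.symm] at hs2
    simp only [List.cons_append, List.nil_append] at hs1 hs2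
    refine ⟨k :: s, ?_, ?_⟩
    · rw [cw_far fik, cw_far fij]
      simp only [List.cons_append, List.nil_append]
      exact (Beq.cons k hs1).trans (beq_swap fjk.symm _)
    · rw [cw_far fjk, cw_far fij.symm]
      simp only [List.cons_append, List.nil_append]
      exact (Beq.cons k hs2).trans (beq_swap fik.symm _)
  · -- case C' : i,j far; i,k far; j,k adjacent
    rw [cw_far fik.symm] at hstar hlen
    rw [cw_adj ajk.symm] at hstar
    simp only [List.cons_append, List.nil_append] at hstar hlen
    have hll := hstar.length
    simp only [List.length_cons] at hll hlen
    obtain ⟨s, hs1, hs2⟩ := ihKL t (k :: w₁) (by omega) i j hstar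
    rw [cw_far fij] at hs1; rw [cw_far fij.symm] at hs2
    simp only [List.cons_append, List.nil_append] at hs1 hs2
    obtain ⟨s₁, hu1, hu2⟩ := ihKL w₁ s (by omega) k i hs2
    rw [cw_far fik.symm] at hu1; rw [cw_far fik] at hu2
    simp only [List.cons_append, List.nil_append] at hu1 hu2
    refine ⟨k :: j :: s₁, ?_, ?_⟩
    · rw [cw_far fik, cw_far fij]
      simp only [List.cons_append, List.nil_append]
      exact ((Beq.cons k hs1).trans (Beq.cons₂ k j hu2)).trans (beq_braid ajk.symm s₁)
    · rw [cw_adj ajk, cw_far fij.symm]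
      simp only [List.cons_append, List.nil_append]
      exact ((Beq.cons₂ k j hu1).trans (Beq.cons k (beq_swap fij.symm s₁))).trans
        (beq_swap fik.symm (j :: s₁))
  · -- case C : i,j far; i,k adjacent; j,k far
    rw [cw_adj aik.symm] at hstar hlen
    rw [cw_far fjk.symm] at hstar
    simp only [List.cons_append, List.nil_append] at hstar hlen
    simp only [List.length_cons] at hlen
    obtain ⟨s, hs1, hs2⟩ := ihKL (k :: t) w₁ (by simp only [List.length_cons]; omega) i j hstar
    rw [cw_far fij] at hs1; rw [cw_far fij.symm] at hs2
    simp only [List.cons_append, List.nil_append] at hs1 hs2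
    obtain ⟨s₁, ht1, ht2⟩ := ihKL t s (by omega) k j hs1
    rw [cw_far fjk.symm] at ht1; rw [cw_far fjk] at ht2
    simp only [List.cons_append, List.nil_append] at ht1 ht2
    refine ⟨k :: i :: s₁, ?_, ?_⟩
    · rw [cw_adj aik, cw_far fij]
      simp only [List.cons_append, List.nil_append]
      exact ((Beq.cons₂ k i ht1).trans (Beq.cons k (beq_swap fij s₁))).trans
        (beq_swap fjk.symm (i :: s₁))
    · rw [cw_far fjk, cw_far fij.symm]
      simp only [List.cons_append, List.nil_append]
      exact ((Beq.cons k hs2).trans (Beq.cons₂ k i ht2)).trans (beq_braid aik.symm s₁)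
  · -- case D : i,j far; i,k adjacent; j,k adjacent
    rw [cw_adj aik.symm] at hstar hlen
    rw [cw_adj ajk.symm] at hstar
    simp only [List.cons_append, List.nil_append] at hstar hlen
    have hll := hstar.length
    simp only [List.length_cons] at hll hlen
    obtain ⟨s, hs1, hs2⟩ := ihKL (k :: t) (k :: w₁) (by simp only [List.length_cons]; omega) i j hstar
    rw [cw_far fij] at hs1; rw [cw_far fij.symm] at hs2
    simp only [List.cons_append, List.nil_append] at hs1 hs2
    have hls := hs1.length
    simp only [List.length_cons] at hls
    obtain ⟨s₁, ht1, ht2⟩ := ihKL t s (by omega) k j hs1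
    rw [cw_adj ajk.symm] at ht1; rw [cw_adj ajk] at ht2
    simp only [List.cons_append, List.nil_append] at ht1 ht2
    obtain ⟨s₂, hu1, hu2⟩ := ihKL w₁ s (by omega) k i hs2
    rw [cw_adj aik.symm] at hu1; rw [cw_adj aik] at hu2
    simp only [List.cons_append, List.nil_append] at hu1 hu2
    have hts := ht2.length
    simp only [List.length_cons] at hts
    have hji : Beq (j :: s₁) (i :: s₂) := hcancel k _ _ (by simp only [List.length_cons]; omega)
      (ht2.symm.trans hu2)
    obtain ⟨s₃, hv1, hv2⟩ := ihKL s₁ s₂ (by omega) j i hji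
    rw [cw_far fij.symm] at hv1; rw [cw_far fij] at hv2
    simp only [List.cons_append, List.nil_append] at hv1 hv2
    refine ⟨k :: i :: j :: k :: s₃, ?_, ?_⟩
    · rw [cw_adj aik, cw_far fij]
      simp only [List.cons_append, List.nil_append]
      refine (Beq.cons₂ k i ht1).trans ?_
      refine (Beq.cons₂ k i (Beq.cons₂ j k hv1)).trans ?_
      refine (Beq.cons k (beq_swap fij (k :: i :: s₃))).trans ?_
      refine (Beq.cons₂ k j (beq_braid aik s₃)).trans ?_
      refine (beq_braid ajk.symm (i :: k :: s₃)).trans ?_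
      exact Beq.cons₂ j k (beq_swap fij.symm (k :: s₃))
    · rw [cw_adj ajk, cw_far fij.symm]
      simp only [List.cons_append, List.nil_append]
      refine (Beq.cons₂ k j hu1).trans ?_
      refine (Beq.cons₂ k j (Beq.cons₂ i k hv2)).trans ?_
      refine (Beq.cons k (beq_swap fij.symm (k :: j :: s₃))).trans ?_
      refine (Beq.cons₂ k i (beq_braid ajk s₃)).trans ?_
      exact beq_braid aik.symm (j :: k :: s₃)
  · -- case B : i,j adjacent; i,k far; j,k far
    rw [cw_far fik.symm] at hstar hlen
    rw [cw_far fjk.symm] at hstar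
    simp only [List.cons_append, List.nil_append] at hstar hlen
    simp only [List.length_cons] at hlen
    obtain ⟨s, hs1, hs2⟩ := ihKL t w₁ (by omega) i j hstar
    rw [cw_adj aij] at hs1; rw [cw_adj aij.symm] at hs2
    simp only [List.cons_append, List.nil_append] at hs1 hs2
    refine ⟨k :: s, ?_, ?_⟩
    · rw [cw_far fik, cw_adj aij]
      simp only [List.cons_append, List.nil_append]
      exact ((Beq.cons k hs1).trans (beq_swap fjk.symm (i :: s))).trans
        (Beq.cons j (beq_swap fik.symm s))
    · rw [cw_far fjk, cw_adj aij.symm]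
      simp only [List.cons_append, List.nil_append]
      exact ((Beq.cons k hs2).trans (beq_swap fik.symm (j :: s))).trans
        (Beq.cons i (beq_swap fjk.symm s))
  · -- case E' : i,j adjacent; i,k far; j,k adjacent
    rw [cw_far fik.symm] at hstar hlen
    rw [cw_adj ajk.symm] at hstar
    simp only [List.cons_append, List.nil_append] at hstar hlen
    have hll := hstar.length
    simp only [List.length_cons] at hll hlen
    obtain ⟨s, hs1, hs2⟩ := ihKL t (k :: w₁) (by omega) i j hstar
    rw [cw_adj aij] at hs1; rw [cw_adj aij.symm] at hs2
    simp only [List.cons_append, List.nil_append] at hs1 hs2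
    have hl2 := hs2.length
    simp only [List.length_cons] at hl2
    obtain ⟨s₁, hu1, hu2⟩ := ihKL w₁ (j :: s) (by omega) k i hs2
    rw [cw_far fik.symm] at hu1; rw [cw_far fik] at hu2
    simp only [List.cons_append, List.nil_append] at hu1 hu2
    obtain ⟨s₂, hv1, hv2⟩ := ihKL s s₁ (by omega) j k hu2
    rw [cw_adj ajk] at hv1; rw [cw_adj ajk.symm] at hv2
    simp only [List.cons_append, List.nil_append] at hv1 hv2
    refine ⟨k :: j :: i :: s₂, ?_, ?_⟩
    · rw [cw_far fik, cw_adj aij]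
      simp only [List.cons_append, List.nil_append]
      refine (Beq.cons k hs1).trans ?_
      refine (Beq.cons k (Beq.cons₂ j i hv1)).trans ?_
      refine (Beq.cons₂ k j (beq_swap fik (j :: s₂))).trans ?_
      refine (beq_braid ajk.symm (i :: j :: s₂)).trans ?_
      refine (Beq.cons₂ j k (beq_braid aij.symm s₂)).trans ?_
      exact Beq.cons j (beq_swap fik.symm (j :: i :: s₂))
    · rw [cw_adj ajk, cw_adj aij.symm]
      simp only [List.cons_append, List.nil_append]
      refine (Beq.cons₂ k j hu1).trans ?_
      refine (Beq.cons₂ k j (Beq.cons i hv2)).trans ?_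
      refine (Beq.cons k (beq_braid aij.symm (k :: s₂))).trans ?_
      refine (beq_swap fik.symm (j :: i :: k :: s₂)).trans ?_
      refine (Beq.cons₂ i k (Beq.cons j (beq_swap fik s₂))).trans ?_
      exact Beq.cons i (beq_braid ajk.symm (i :: s₂))
  · -- case E : i,j adjacent; i,k adjacent; j,k far
    rw [cw_adj aik.symm] at hstar hlen
    rw [cw_far fjk.symm] at hstar
    simp only [List.cons_append, List.nil_append] at hstar hlen
    have hll := hstar.length
    simp only [List.length_cons] at hll hlen
    obtain ⟨s, hs1, hs2⟩ := ihKL (k :: t) w₁ (by simp only [List.length_cons]; omega) i j hstar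
    rw [cw_adj aij] at hs1; rw [cw_adj aij.symm] at hs2
    simp only [List.cons_append, List.nil_append] at hs1 hs2
    have hl1 := hs1.length
    simp only [List.length_cons] at hl1
    obtain ⟨s₁, ht1, ht2⟩ := ihKL t (i :: s) (by omega) k j hs1
    rw [cw_far fjk.symm] at ht1; rw [cw_far fjk] at ht2
    simp only [List.cons_append, List.nil_append] at ht1 ht2
    obtain ⟨s₂, hu1, hu2⟩ := ihKL s s₁ (by omega) i k ht2
    rw [cw_adj aik] at hu1; rw [cw_adj aik.symm] at hu2
    simp only [List.cons_append, List.nil_append] at hu1 hu2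
    refine ⟨k :: i :: j :: s₂, ?_, ?_⟩
    · rw [cw_adj aik, cw_adj aij]
      simp only [List.cons_append, List.nil_append]
      refine (Beq.cons₂ k i ht1).trans ?_
      refine (Beq.cons₂ k i (Beq.cons j hu2)).trans ?_
      refine (Beq.cons k (beq_braid aij (k :: s₂))).trans ?_
      refine (beq_swap fjk.symm (i :: j :: k :: s₂)).trans ?_
      refine (Beq.cons₂ j k (Beq.cons i (beq_swap fjk s₂))).trans ?_
      exact Beq.cons j (beq_braid aik.symm (j :: s₂))
    · rw [cw_far fjk, cw_adj aij.symm]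
      simp only [List.cons_append, List.nil_append]
      refine (Beq.cons k hs2).trans ?_
      refine (Beq.cons k (Beq.cons₂ i j hu1)).trans ?_
      refine (Beq.cons₂ k i (beq_swap fjk (i :: s₂))).trans ?_
      refine (beq_braid aik.symm (j :: i :: s₂)).trans ?_
      refine (Beq.cons₂ i k (beq_braid aij s₂)).trans ?_
      exact Beq.cons i (beq_swap fjk.symm (i :: j :: s₂))
  · -- impossible : three pairwise adjacent generators
    exfalso
    unfold Adj at aij aik ajk
    omega

/-- Garside's Key Lemma. -/
theorem key : ∀ (N : ℕ) (u v : W m), u.length ≤ N → ∀ i j, Beq (i :: u) (j :: v) →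
    ∃ w, Beq u (cw i j ++ w) ∧ Beq v (cw j i ++ w) := by
  intro N
  induction N with
  | zero =>
    intro u v hu i j h
    interval_cases hul : u.length
    · have hu0 : u = [] := List.length_eq_zero_iff.1 hul
      subst hu0
      rcases (Relation.ReflTransGen.cases_head h) with heq | ⟨c, hc, _⟩
      · obtain ⟨rfl, rfl⟩ := List.cons.inj heq
        exact ⟨[], by simp [Beq.refl], by simp [Beq.refl]⟩
      · exact absurd (stp_two_le_length hc) (by simp)
  | succ N ih =>
    intro u v hu i j h
    have H : ∀ z, Beq z (j :: v) → ∀ (a : Fin m) (p : W m), z = a :: p → p.length ≤ N + 1 →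
        ∃ w, Beq p (cw a j ++ w) ∧ Beq v (cw j a ++ w) := by
      intro z hz
      induction hz using Relation.ReflTransGen.head_induction_on with
      | refl =>
        intro a p he _
        obtain ⟨rfl, rfl⟩ := List.cons.inj he.symm
        exact ⟨p, by simp [Beq.refl], by simp [Beq.refl]⟩
      | head hstep hrest ih2 =>
        intro a p he hl
        cases hstep with
        | far i' j' hrel x y =>
          cases x with
          | nil =>
            simp only [List.nil_append] at he ih2
            obtain ⟨h1, rfl⟩ := List.cons.inj he
            subst h1
            obtain ⟨w₁, hw1, hw2⟩ := ih2 j' (i' :: y) rfl (by simpa using hl)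
            obtain ⟨w, hc1, hc2⟩ := cube (N := N) (fun b c hb => ih b c hb) i' j j'
              hrel.ne.symm y w₁
              (by rw [cw_far hrel.symm]; simpa using hl)
              (by rw [cw_far hrel.symm]; simpa using hw1)
            refine ⟨w, ?_, hw2.trans hc2⟩
            rw [cw_far hrel] at hc1
            simpa using hc1
          | cons b x' =>
            simp only [List.cons_append] at he
            obtain ⟨h1, rfl⟩ := List.cons.inj he
            subst h1
            obtain ⟨w, hw1, hw2⟩ := ih2 b (x' ++ j' :: i' :: y) rfl (by
              have := hl; simp at this ⊢; omega)
            exact ⟨w, ((Stp.far _ _ hrel x' y).beq).trans hw1, hw2⟩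
        | adj i' j' hrel x y =>
          cases x with
          | nil =>
            simp only [List.nil_append] at he ih2
            obtain ⟨h1, rfl⟩ := List.cons.inj he
            subst h1
            obtain ⟨w₁, hw1, hw2⟩ := ih2 j' (i' :: j' :: y) rfl (by simpa using hl)
            obtain ⟨w, hc1, hc2⟩ := cube (N := N) (fun b c hb => ih b c hb) i' j j'
              hrel.ne.symm y w₁
              (by rw [cw_adj hrel.symm]; simpa using hl)
              (by rw [cw_adj hrel.symm]; simpa using hw1)
            refine ⟨w, ?_, hw2.trans hc2⟩
            rw [cw_adj hrel] at hc1
            simpa using hc1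
          | cons b x' =>
            simp only [List.cons_append] at he
            obtain ⟨h1, rfl⟩ := List.cons.inj he
            subst h1
            obtain ⟨w, hw1, hw2⟩ := ih2 b (x' ++ j' :: i' :: j' :: y) rfl (by
              have := hl; simp at this ⊢; omega)
            exact ⟨w, ((Stp.adj _ _ hrel x' y).beq).trans hw1, hw2⟩
    exact H (i :: u) h i u rfl hu

/-! ### Cancellation and divisibility -/

theorem cancel_head {a : Fin m} {u v : W m} (h : Beq (a :: u) (a :: v)) : Beq u v := by
  obtain ⟨w, h1, h2⟩ := key u.length u v le_rfl a a h
  simp only [cw_self, List.nil_append] at h1 h2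
  exact h1.trans h2.symm

theorem cancel_left (x : W m) {u v : W m} (h : Beq (x ++ u) (x ++ v)) : Beq u v := by
  induction x with
  | nil => simpa using h
  | cons a x ih => exact ih (cancel_head (by simpa using h))

theorem cancel_right (x : W m) {u v : W m} (h : Beq (u ++ x) (v ++ x)) : Beq u v := by
  rw [← beq_reverse_iff] at h ⊢
  simp only [List.reverse_append] at h
  exact cancel_left x.reverse h

/-- Left-divisibility of words. -/
def Dvd (u v : W m) : Prop := ∃ c, Beq (u ++ c) v

theorem Dvd.refl (u : W m) : Dvd u u := ⟨[], by simp [Beq.refl]⟩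

theorem Beq.dvd {u v : W m} (h : Beq u v) : Dvd u v := ⟨[], by simpa using h⟩

theorem Dvd.trans {u v w : W m} (h1 : Dvd u v) (h2 : Dvd v w) : Dvd u w := by
  obtain ⟨c1, hc1⟩ := h1; obtain ⟨c2, hc2⟩ := h2
  exact ⟨c1 ++ c2, by rw [← List.append_assoc]; exact (hc1.append_right c2).trans hc2⟩

theorem Dvd.of_beq_left {u u' v : W m} (h : Beq u u') (hd : Dvd u' v) : Dvd u v :=
  h.dvd.trans hd

theorem Dvd.of_beq_right {u v v' : W m} (hd : Dvd u v) (h : Beq v v') : Dvd u v' :=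
  hd.trans h.dvd

theorem Dvd.length_le {u v : W m} (h : Dvd u v) : u.length ≤ v.length := by
  obtain ⟨c, hc⟩ := h
  have := hc.length; simp at this; omega

theorem Dvd.beq_of_length {u v : W m} (h : Dvd u v) (hl : v.length ≤ u.length) : Beq u v := by
  obtain ⟨c, hc⟩ := h
  have hlen := hc.length
  simp only [List.length_append] at hlen
  have : c = [] := List.length_eq_zero_iff.1 (by omega)
  subst this; simpa using hc

theorem dvd_nil (u : W m) : Dvd [] u := ⟨u, by simp [Beq.refl]⟩

theorem dvd_append (u c : W m) : Dvd u (u ++ c) := ⟨c, Beq.refl _⟩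

theorem Dvd.cons {u v : W m} (a : Fin m) (h : Dvd u v) : Dvd (a :: u) (a :: v) := by
  obtain ⟨c, hc⟩ := h
  exact ⟨c, by simpa using hc.cons a⟩

theorem Dvd.shift {u v : W m} (x : W m) (h : Dvd u v) : Dvd (x ++ u) (x ++ v) := by
  obtain ⟨c, hc⟩ := h
  exact ⟨c, by rw [List.append_assoc]; exact Beq.append_left x hc⟩

theorem Dvd.cancel {u v : W m} (x : W m) (h : Dvd (x ++ u) (x ++ v)) : Dvd u v := by
  obtain ⟨c, hc⟩ := h
  rw [List.append_assoc] at hc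
  exact ⟨c, cancel_left x hc⟩

theorem sandwich {x p w : W m} (h1 : Dvd x p) (h2 : Dvd p (x ++ w)) :
    ∃ b, Beq (x ++ b) p ∧ Dvd b w := by
  obtain ⟨b, hb⟩ := h1
  refine ⟨b, hb, Dvd.cancel x (Dvd.of_beq_left hb h2)⟩

/-! ### Conditional lcm (Garside's induction on a common multiple) -/

theorem cw_length_pos {i j : Fin m} (h : i ≠ j) : 0 < (cw i j).length := by
  rcases far_or_adj h with hf | ha
  · rw [cw_far hf]; simp
  · rw [cw_adj ha]; simp

theorem lcm_aux : ∀ (N : ℕ) (t u v : W m), t.length ≤ N → Dvd u t → Dvd v t →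
    ∃ l, Dvd u l ∧ Dvd v l ∧ Dvd l t ∧ ∀ w', Dvd u w' → Dvd v w' → Dvd l w' := by
  intro N
  induction N with
  | zero =>
    intro t u v ht hu hv
    have h2 : t = [] := List.length_eq_zero_iff.1 (Nat.le_zero.1 ht)
    subst h2
    have h3 : u = [] := by
      have h1 := hu.length_le
      simp only [List.length_nil] at h1
      exact List.length_eq_zero_iff.1 (Nat.le_zero.1 h1)
    subst h3
    exact ⟨v, dvd_nil v, Dvd.refl v, hv, fun w' _ h => h⟩
  | succ N ih =>
    intro t u v ht hu hv
    match u, v with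
    | [], v => exact ⟨v, dvd_nil v, Dvd.refl v, hv, fun w' _ h => h⟩
    | u, [] => exact ⟨u, Dvd.refl u, dvd_nil u, hu, fun w' h _ => h⟩
    | i :: u', j :: v' =>
      obtain ⟨c₁, hc₁⟩ := hu
      obtain ⟨c₂, hc₂⟩ := hv
      simp only [List.cons_append] at hc₁ hc₂
      by_cases hij : i = j
      · subst hij
        have hw : Beq (u' ++ c₁) (v' ++ c₂) := cancel_head (hc₁.trans hc₂.symm)
        have hlen : (u' ++ c₁).length ≤ N := by
          have := hc₁.length; simp only [List.length_cons] at this; omega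
        obtain ⟨m₁, hm1u, hm1v, hm1t, hm1uni⟩ := ih (u' ++ c₁) u' v' hlen
          (dvd_append u' c₁) ⟨c₂, hw.symm⟩
        refine ⟨i :: m₁, hm1u.cons i, hm1v.cons i, (hm1t.cons i).of_beq_right hc₁, ?_⟩
        intro w' hw1 hw2
        obtain ⟨d₁, hd₁⟩ := hw1
        obtain ⟨d₂, hd₂⟩ := hw2
        simp only [List.cons_append] at hd₁ hd₂
        have h4 : Beq (u' ++ d₁) (v' ++ d₂) := cancel_head (hd₁.trans hd₂.symm)
        have h5 := hm1uni (u' ++ d₁) (dvd_append u' d₁) ⟨d₂, h4.symm⟩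
        exact (h5.cons i).of_beq_right hd₁
      · obtain ⟨s, hs1, hs2⟩ := key (u' ++ c₁).length (u' ++ c₁) (v' ++ c₂) le_rfl i j
          (hc₁.trans hc₂.symm)
        have hwrd : Beq t (i :: (cw i j ++ s)) := hc₁.symm.trans (hs1.cons i)
        have hlen1 : (cw i j ++ s).length ≤ N := by
          have := hwrd.length; simp only [List.length_cons] at this; omega
        have hlen2 : (cw j i ++ s).length ≤ N := by
          have h1 := (beq_cw_head i j s).length
          simp only [List.length_cons] at h1
          omega
        obtain ⟨m₁, hm1u, hm1cw, hm1t, hm1uni⟩ := ih (cw i j ++ s) u' (cw i j) hlen1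
          ⟨c₁, hs1⟩ (dvd_append _ s)
        obtain ⟨m₂, hm2v, hm2cw, hm2t, hm2uni⟩ := ih (cw j i ++ s) v' (cw j i) hlen2
          ⟨c₂, hs2⟩ (dvd_append _ s)
        obtain ⟨b₁, hb₁, hb₁s⟩ := sandwich hm1cw hm1t
        obtain ⟨b₂, hb₂, hb₂s⟩ := sandwich hm2cw hm2t
        have hlen3 : s.length ≤ N := by
          have := cw_length_pos hij
          simp only [List.length_append] at hlen1; omega
        obtain ⟨m₃, hm3b₁, hm3b₂, hm3s, hm3uni⟩ := ih s b₁ b₂ hlen3 hb₁s hb₂s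
        refine ⟨i :: (cw i j ++ m₃), ?_, ?_, ?_, ?_⟩
        · exact ((hm1u.of_beq_right hb₁.symm).trans ((hm3b₁.shift (cw i j)))).cons i
        · have h6 : Dvd (j :: v') (j :: (cw j i ++ m₃)) :=
            ((hm2v.of_beq_right hb₂.symm).trans ((hm3b₂.shift (cw j i)))).cons j
          exact h6.of_beq_right (beq_cw_head j i m₃)
        · exact ((hm3s.shift (cw i j)).cons i).of_beq_right hwrd.symm
        · intro w' hw1 hw2
          obtain ⟨d₁, hd₁⟩ := hw1
          obtain ⟨d₂, hd₂⟩ := hw2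
          simp only [List.cons_append] at hd₁ hd₂
          obtain ⟨s', hs1', hs2'⟩ := key (u' ++ d₁).length (u' ++ d₁) (v' ++ d₂) le_rfl i j
            (hd₁.trans hd₂.symm)
          have h7 := hm1uni (cw i j ++ s') ⟨d₁, hs1'⟩ (dvd_append _ s')
          have h8 := hm2uni (cw j i ++ s') ⟨d₂, hs2'⟩ (dvd_append _ s')
          have h9 : Dvd b₁ s' := Dvd.cancel (cw i j) ((hb₁.dvd).trans h7)
          have h10 : Dvd b₂ s' := Dvd.cancel (cw j i) ((hb₂.dvd).trans h8)
          have h11 := hm3uni s' h9 h10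
          have h12 : Beq w' (i :: (cw i j ++ s')) := hd₁.symm.trans (hs1'.cons i)
          exact (((h11.shift (cw i j)).cons i)).of_beq_right h12.symm

/-! ### gcd -/

open Classical in
theorem gcd_exists (p q : W m) :
    ∃ g, Dvd g p ∧ Dvd g q ∧ ∀ d, Dvd d p → Dvd d q → Dvd d g := by
  classical
  set P : ℕ → Prop := fun ℓ => ∃ w : W m, w.length = ℓ ∧ Dvd w p ∧ Dvd w q with hP
  have h0 : P 0 := ⟨[], rfl, dvd_nil p, dvd_nil q⟩
  have hspec : P (Nat.findGreatest P p.length) :=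
    Nat.findGreatest_spec (Nat.zero_le _) h0
  obtain ⟨g, hg, hgp, hgq⟩ := hspec
  refine ⟨g, hgp, hgq, ?_⟩
  intro d hdp hdq
  obtain ⟨L, hLg, hLd, hLp, hLuni⟩ := lcm_aux p.length p g d le_rfl hgp hdp
  have hLq : Dvd L q := hLuni q hgq hdq
  have hle : L.length ≤ Nat.findGreatest P p.length :=
    Nat.le_findGreatest hLp.length_le ⟨L, rfl, hLp, hLq⟩
  have : Beq g L := hLg.beq_of_length (by omega)
  exact hLd.of_beq_right this.symm

/-! ### The fundamental element Δ -/

/-- Interpret a list of naturals as a braid word (dropping out-of-range letters). -/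
def toW (m : ℕ) (l : List ℕ) : W m :=
  l.filterMap (fun a => if h : a < m then some ⟨a, h⟩ else none)

@[simp] theorem toW_nil : toW m [] = [] := rfl

theorem toW_cons_of_lt {a : ℕ} (h : a < m) (l : List ℕ) :
    toW m (a :: l) = ⟨a, h⟩ :: toW m l := by simp [toW, h]

@[simp] theorem toW_append (l₁ l₂ : List ℕ) :
    toW m (l₁ ++ l₂) = toW m l₁ ++ toW m l₂ := by simp [toW]

theorem toW_reverse (l : List ℕ) : toW m l.reverse = (toW m l).reverse := by
  induction l with
  | nil => rfl
  | cons a l ih =>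
    by_cases h : a < m
    · rw [toW_cons_of_lt h]
      simp only [List.reverse_cons, toW_append, ih]
      rw [toW_cons_of_lt h]
      rfl
    · simp only [List.reverse_cons, toW_append, ih, toW]
      simp [h]

theorem mem_toW {p : Fin m} {l : List ℕ} (h : p ∈ toW m l) : (p : ℕ) ∈ l := by
  simp only [toW, List.mem_filterMap] at h
  obtain ⟨a, ha, hd⟩ := h
  by_cases h' : a < m
  · simp [h'] at hd; subst hd; exact ha
  · simp [h'] at hd

/-- A letter far above a word commutes across it. -/
theorem far_commute {b : ℕ} (hb : b < m) (u : W m) (hfar : ∀ p ∈ u, (p : ℕ) + 1 < b) :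
    Beq ((⟨b, hb⟩ : Fin m) :: u) (u ++ [⟨b, hb⟩]) := by
  induction u with
  | nil => exact Beq.refl _
  | cons a u ih =>
    have h1 : Far (⟨b, hb⟩ : Fin m) a := Or.inr (hfar a (by simp))
    refine (beq_swap h1 u).trans ?_
    simpa using (ih (fun p hp => hfar p (by simp [hp]))).cons a

/-- The descending word `[r-1, …, 1, 0]`. -/
def desc : ℕ → List ℕ
  | 0 => []
  | r + 1 => r :: desc r

/-- `Δ_r` as a word : `desc 1 ++ desc 2 ++ ⋯ ++ desc r`. -/
def DlN : ℕ → List ℕ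
  | 0 => []
  | r + 1 => DlN r ++ desc (r + 1)

theorem desc_letters : ∀ r, ∀ a ∈ desc r, a < r := by
  intro r
  induction r with
  | zero => simp [desc]
  | succ r ih =>
    intro a ha
    rcases (by simpa [desc] using ha : a = r ∨ a ∈ desc r) with rfl | h
    · omega
    · have := ih a h; omega

theorem DlN_letters : ∀ r, ∀ a ∈ DlN r, a < r := by
  intro r
  induction r with
  | zero => simp [DlN]
  | succ r ih =>
    intro a ha
    rcases (by simpa [DlN] using ha : a ∈ DlN r ∨ a ∈ desc (r+1)) with h | h
    · have := ih a h; omega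
    · exact desc_letters _ a h

/-- Key identity : `desc (r+1) · σⱼ = σ_{j-1} · desc (r+1)` for `1 ≤ j ≤ r`. -/
theorem desc_step : ∀ r, r + 1 ≤ m → ∀ j, 1 ≤ j → j ≤ r →
    Beq (toW m (desc (r+1) ++ [j])) (toW m ((j-1) :: desc (r+1))) := by
  intro r
  induction r with
  | zero => omega
  | succ r ih =>
    intro hm j h1 h2
    rcases Nat.lt_or_ge j (r+1) with hj | hj
    · -- j ≤ r : use IH inside
      have e1 : desc (r+2) ++ [j] = (r+1) :: (desc (r+1) ++ [j]) := by simp [desc]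
      rw [e1, toW_cons_of_lt (by omega)]
      have step := ih (by omega) j h1 (by omega)
      refine ((step.cons _)).trans ?_
      rw [toW_cons_of_lt (show j - 1 < m by omega)]
      have hsw : Far (⟨r+1, by omega⟩ : Fin m) (⟨j-1, by omega⟩ : Fin m) :=
        Or.inr (by simp; omega)
      refine (beq_swap hsw _).trans ?_
      rw [show ((j:ℕ)-1) :: desc (r+2) = (j-1) :: ((r+1) :: desc (r+1)) from by simp [desc],
        toW_cons_of_lt (show j - 1 < m by omega), toW_cons_of_lt (show r + 1 < m by omega)]
      exact Beq.refl _
    · -- j = r+1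
      have hj' : j = r + 1 := by omega
      subst hj'
      have e1 : desc (r+2) ++ [r+1] = (r+1) :: r :: (desc r ++ [r+1]) := by simp [desc]
      rw [e1, toW_cons_of_lt (show r+1 < m by omega), toW_cons_of_lt (show r < m by omega)]
      have hcomm := far_commute (m := m) (show r+1 < m by omega) (toW m (desc r))
        (fun p hp => by have := desc_letters r _ (mem_toW hp); omega)
      have : Beq (toW m (desc r ++ [r+1])) ((⟨r+1, by omega⟩ : Fin m) :: toW m (desc r)) := by
        rw [toW_append, toW_cons_of_lt (show r+1 < m by omega)]
        simpa using hcomm.symm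
      refine ((this.cons _).cons _).trans ?_
      have hbr : Adj (⟨r+1, by omega⟩ : Fin m) (⟨r, by omega⟩ : Fin m) := Or.inr (by simp)
      refine (beq_braid hbr _).trans ?_
      rw [show ((r+1:ℕ)-1) :: desc (r+2) = r :: ((r+1) :: (r :: desc r)) from by simp [desc],
        toW_cons_of_lt (show r < m by omega), toW_cons_of_lt (show r+1 < m by omega),
        toW_cons_of_lt (show r < m by omega)]
      exact Beq.refl _

theorem sigma_delta : ∀ r, r + 1 ≤ m → 1 ≤ r →
    Beq (toW m (r :: DlN r)) (toW m (DlN (r-1) ++ desc (r+1))) := by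
  intro r hm hr
  obtain ⟨r', rfl⟩ : ∃ r', r = r' + 1 := ⟨r - 1, by omega⟩
  rw [show DlN (r'+1) = DlN r' ++ desc (r'+1) from rfl]
  rw [toW_cons_of_lt (show r'+1 < m by omega), toW_append]
  have hcomm := far_commute (m := m) (show r'+1 < m by omega) (toW m (DlN r'))
    (fun p hp => by have := DlN_letters r' _ (mem_toW hp); omega)
  have h1 : Beq ((⟨r'+1, by omega⟩ : Fin m) :: (toW m (DlN r') ++ toW m (desc (r'+1))))
      ((toW m (DlN r') ++ [⟨r'+1, by omega⟩]) ++ toW m (desc (r'+1))) := by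
    have := hcomm.append_right (toW m (desc (r'+1)))
    simpa using this
  refine h1.trans ?_
  rw [show (r'+1-1 : ℕ) = r' from by omega]
  rw [show desc (r'+1+1) = (r'+1) :: desc (r'+1) from rfl]
  rw [toW_append, toW_cons_of_lt (show r'+1 < m by omega)]
  simp only [List.append_assoc, List.singleton_append]
  exact Beq.refl _

theorem asc_delta : ∀ r, r + 1 ≤ m →
    Beq (toW m ((desc (r+1)).reverse ++ DlN r)) (toW m (DlN (r+1))) := by
  intro r
  induction r with
  | zero => intro _; exact Beq.refl _
  | succ r ih =>
    intro hm
    have e1 : (desc (r+2)).reverse ++ DlN (r+1)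
        = (desc (r+1)).reverse ++ ((r+1) :: DlN (r+1)) := by
      simp [show desc (r+2) = (r+1) :: desc (r+1) from rfl]
    rw [e1, toW_append]
    have h2 := sigma_delta (r+1) hm (by omega)
    rw [show (r+1-1 : ℕ) = r from by omega] at h2
    refine (h2.append_left _).trans ?_
    rw [toW_append, ← List.append_assoc, ← toW_append]
    have h3 := (ih (by omega)).append_right (toW m (desc (r+2)))
    refine h3.trans ?_
    rw [← toW_append]
    exact Beq.refl _

theorem rev_delta : ∀ r, r ≤ m → Beq (toW m ((DlN r).reverse)) (toW m (DlN r)) := by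
  intro r
  induction r with
  | zero => intro _; exact Beq.refl _
  | succ r ih =>
    intro hm
    rw [show DlN (r+1) = DlN r ++ desc (r+1) from rfl, List.reverse_append, toW_append]
    refine (Beq.append_left _ (ih (by omega))).trans ?_
    rw [← toW_append]
    exact asc_delta r hm

theorem delta_comm : ∀ r, r ≤ m → ∀ i, i < r →
    Beq (toW m (DlN r ++ [i])) (toW m ((r-1-i) :: DlN r)) := by
  intro r
  induction r with
  | zero => omega
  | succ r ih =>
    intro hm i hi
    rcases Nat.eq_zero_or_pos r with rfl | hr
    · have hi0 : i = 0 := by omega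
      subst hi0
      rw [show DlN 1 ++ [0] = (0+1-1-0) :: DlN 1 from by simp [DlN, desc]]
      exact Beq.refl _
    rcases Nat.eq_zero_or_pos i with rfl | hi1
    · -- i = 0 : via reversal
      set Δ := toW m (DlN (r+1)) with hΔ
      have hm1 : 0 < m := by omega
      have hrev : Beq Δ.reverse Δ := by
        have := rev_delta (r+1) hm
        rwa [toW_reverse] at this
      -- C'0 : Beq (σ0 :: Δ) (Δ ++ [σr])
      have hC0 : Beq ((⟨0, hm1⟩ : Fin m) :: Δ) (Δ ++ [⟨r, by omega⟩]) := by
        have hIH := (ih (by omega) (r-1) (by omega)).symm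
        rw [show r-1-(r-1) = 0 from by omega] at hIH
        have h2 := hIH.append_right (toW m (desc (r+1)))
        have h3 := desc_step r hm r (by omega) le_rfl
        rw [show (r-1 : ℕ) :: desc (r+1) = [r-1] ++ desc (r+1) from rfl] at h3
        have h4 := h3.symm.append_left (toW m (DlN r))
        rw [hΔ, show DlN (r+1) = DlN r ++ desc (r+1) from rfl]
        have e0 : (⟨0, hm1⟩ : Fin m) :: toW m (DlN r ++ desc (r+1))
            = toW m (0 :: DlN r) ++ toW m (desc (r+1)) := by
          rw [toW_cons_of_lt hm1, toW_append]
          simp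
        rw [e0]
        refine h2.trans ?_
        have e1 : toW m (DlN r ++ [r-1]) ++ toW m (desc (r+1))
            = toW m (DlN r) ++ toW m ([r-1] ++ desc (r+1)) := by
          rw [toW_append, toW_append, List.append_assoc]
        rw [e1]
        refine h4.trans ?_
        have e2 : toW m (DlN r) ++ toW m (desc (r+1) ++ [r])
            = toW m (DlN r ++ desc (r+1)) ++ [(⟨r, by omega⟩ : Fin m)] := by
          rw [toW_append, toW_append, toW_cons_of_lt (show r < m by omega)]
          simp
        rw [e2]
        exact Beq.refl _
      have h5 : Beq ((⟨0, hm1⟩ : Fin m) :: Δ.reverse) (Δ.reverse ++ [⟨r, by omega⟩]) :=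
        ((hrev.cons _).trans hC0).trans (hrev.symm.append_right _)
      have h6 := h5.reverse
      simp only [List.reverse_cons, List.reverse_append, List.reverse_reverse,
        List.reverse_singleton, List.singleton_append] at h6
      rw [toW_append, toW_cons_of_lt hm1, show (r+1-1-0 : ℕ) = r from by omega,
        toW_cons_of_lt (show r < m by omega)]
      simpa using h6
    · -- 1 ≤ i
      rw [show DlN (r+1) ++ [i] = DlN r ++ (desc (r+1) ++ [i]) from by
        simp [show DlN (r+1) = DlN r ++ desc (r+1) from rfl]]
      rw [toW_append]
      have h1 := desc_step r hm i hi1 (by omega)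
      refine (h1.append_left _).trans ?_
      rw [show ((i:ℕ)-1) :: desc (r+1) = [i-1] ++ desc (r+1) from rfl, toW_append,
        ← List.append_assoc, ← toW_append]
      have h2 := (ih (by omega) (i-1) (by omega)).append_right (toW m (desc (r+1)))
      refine h2.trans ?_
      rw [show r-1-(i-1) = r+1-1-i from by omega, ← toW_append]
      rw [show ((r+1-1-i : ℕ) :: DlN r) ++ desc (r+1) = (r+1-1-i) :: DlN (r+1) from by
        simp [show DlN (r+1) = DlN r ++ desc (r+1) from rfl]]
      exact Beq.refl _

theorem ld0 (hm1 : 0 < m) : ∀ r, 1 ≤ r → r ≤ m →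
    Dvd [(⟨0, hm1⟩ : Fin m)] (toW m (DlN r)) := by
  intro r
  induction r with
  | zero => omega
  | succ r ih =>
    intro _ hm
    rcases Nat.eq_zero_or_pos r with rfl | hr
    · rw [show DlN 1 = [0] from rfl, toW_cons_of_lt hm1]
      exact Dvd.refl _
    · refine (ih hr (by omega)).trans ?_
      rw [show DlN (r+1) = DlN r ++ desc (r+1) from rfl, toW_append]
      exact dvd_append _ _

theorem delta_ld : ∀ r, (hr : r ≤ m) → ∀ i, (hi : i < r) →
    Dvd [(⟨i, lt_of_lt_of_le hi hr⟩ : Fin m)] (toW m (DlN r)) := by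
  intro r
  induction r with
  | zero => omega
  | succ r ih =>
    intro hm i hi
    rcases Nat.lt_or_ge i r with hir | hir
    · refine (ih (by omega) i hir).trans ?_
      rw [show DlN (r+1) = DlN r ++ desc (r+1) from rfl, toW_append]
      exact dvd_append _ _
    · have hi' : r = i := by omega
      subst hi'
      have hm1 : 0 < m := by omega
      obtain ⟨cf, hcf⟩ := ld0 hm1 (r+1) (by omega) hm
      have hC := delta_comm (r+1) hm r hi
      rw [show r+1-1-r = 0 from by omega, toW_append, toW_cons_of_lt hm1,
        toW_cons_of_lt (show r < m by omega)] at hC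
      simp only [toW_nil] at hC
      have h1 : Beq (([(⟨0, hm1⟩ : Fin m)] ++ cf) ++ [⟨r, by omega⟩])
          ((⟨0, hm1⟩ : Fin m) :: toW m (DlN (r+1))) := (hcf.append_right _).trans hC
      have h2 : Beq (cf ++ [(⟨r, by omega⟩ : Fin m)]) (toW m (DlN (r+1))) :=
        cancel_head (by simpa using h1)
      have hrev : Beq (toW m (DlN (r+1))).reverse (toW m (DlN (r+1))) := by
        have := rev_delta (r+1) hm; rwa [toW_reverse] at this
      have h3 := h2.reverse
      simp only [List.reverse_append, List.reverse_singleton, List.singleton_append] at h3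
      exact ⟨cf.reverse, by simpa using h3.trans hrev⟩

/-- The Garside word Δ. -/
def Dw (m : ℕ) : W m := toW m (DlN m)

theorem delta_dvd_left (i : Fin m) : Dvd [i] (Dw m) := by
  have := delta_ld m le_rfl i.val i.isLt
  simpa [Dw] using this

theorem rev_Dw : Beq (Dw m).reverse (Dw m) := by
  have := rev_delta m le_rfl; rwa [toW_reverse] at this

theorem delta_dvd_right (i : Fin m) : ∃ cf, Beq (cf ++ [i]) (Dw m) := by
  obtain ⟨c, hc⟩ := delta_dvd_left i
  have h3 := hc.reverse
  simp only [List.reverse_append, List.reverse_singleton, List.singleton_append] at h3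
  exact ⟨c.reverse, by simpa using h3.trans rev_Dw⟩

/-- The index-flip involution. -/
def ρ (i : Fin m) : Fin m := ⟨m - 1 - i, by have := i.isLt; omega⟩

theorem rho_rho (i : Fin m) : ρ (ρ i) = i := by
  have := i.isLt
  simp only [ρ]
  exact Fin.ext (by simp; omega)

theorem map_rho_rho (u : W m) : (u.map ρ).map ρ = u := by
  induction u with
  | nil => rfl
  | cons a u ih => simp [ih, rho_rho]

theorem delta_comm_gen (i : Fin m) : Beq (Dw m ++ [i]) (ρ i :: Dw m) := by
  have h := delta_comm m le_rfl i.val i.isLt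
  rw [toW_append, toW_cons_of_lt i.isLt, toW_cons_of_lt (show m-1-i.val < m by
    have := i.isLt; omega)] at h
  simp only [toW_nil, Fin.eta] at h
  exact h

theorem delta_comm_word (u : W m) : Beq (Dw m ++ u) (u.map ρ ++ Dw m) := by
  induction u with
  | nil => simp [Beq.refl]
  | cons a u ih =>
    have h1 := (delta_comm_gen a).append_right u
    have e : Dw m ++ a :: u = (Dw m ++ [a]) ++ u := by simp
    rw [e]
    refine h1.trans ?_
    simpa using ih.cons (ρ a)

theorem delta_comm_word' (u : W m) : Beq (u ++ Dw m) (Dw m ++ u.map ρ) := by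
  have := (delta_comm_word (u.map ρ)).symm
  rwa [map_rho_rho] at this

/-- Powers of Δ. -/
def Dpow (m : ℕ) : ℕ → W m
  | 0 => []
  | k + 1 => Dpow m k ++ Dw m

@[simp] theorem Dpow_zero : Dpow m 0 = [] := rfl

theorem Dpow_succ (k : ℕ) : Dpow m (k+1) = Dpow m k ++ Dw m := rfl

theorem Dpow_add (k l : ℕ) : Dpow m (k + l) = Dpow m k ++ Dpow m l := by
  induction l with
  | zero => simp
  | succ l ih =>
    rw [show k + (l+1) = (k+l) + 1 from by omega, Dpow_succ, Dpow_succ, ih,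
      List.append_assoc]

theorem comm_pow_left : ∀ (k : ℕ) (u : W m), ∃ u', Beq (Dpow m k ++ u) (u' ++ Dpow m k) := by
  intro k
  induction k with
  | zero => intro u; exact ⟨u, by simpa using Beq.refl u⟩
  | succ k ih =>
    intro u
    have h1 : Beq (Dpow m (k+1) ++ u) (Dpow m k ++ (u.map ρ ++ Dw m)) := by
      rw [Dpow_succ, List.append_assoc]
      exact (delta_comm_word u).append_left _
    obtain ⟨u', hu'⟩ := ih (u.map ρ)
    refine ⟨u', h1.trans ?_⟩
    rw [Dpow_succ, ← List.append_assoc, ← List.append_assoc]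
    exact hu'.append_right _

theorem comm_pow_right : ∀ (k : ℕ) (u : W m), ∃ u', Beq (u ++ Dpow m k) (Dpow m k ++ u') := by
  intro k
  induction k with
  | zero => intro u; exact ⟨u, by simpa using Beq.refl u⟩
  | succ k ih =>
    intro u
    obtain ⟨u', hu'⟩ := ih u
    have h1 : Beq (u ++ Dpow m (k+1)) ((Dpow m k ++ u') ++ Dw m) := by
      rw [Dpow_succ, ← List.append_assoc]
      exact hu'.append_right _
    refine ⟨u'.map ρ, h1.trans ?_⟩
    rw [List.append_assoc]
    refine ((delta_comm_word' u').append_left _).trans ?_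
    rw [Dpow_succ, ← List.append_assoc]
    exact Beq.refl _

theorem dvd_Dpow (u : W m) : ∃ k, Dvd u (Dpow m k) := by
  induction u using List.reverseRecOn with
  | nil => exact ⟨0, dvd_nil _⟩
  | append_singleton u₀ i ih =>
    obtain ⟨k, c₀, hc₀⟩ := ih
    obtain ⟨cf, hcf⟩ := delta_dvd_left i
    refine ⟨k + 1, cf ++ c₀.map ρ, ?_⟩
    have h1 : Beq (Dpow m (k+1)) (u₀ ++ (c₀ ++ Dw m)) := by
      rw [Dpow_succ]
      have := (hc₀.symm).append_right (Dw m)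
      simpa [List.append_assoc] using this
    have h2 : Beq (u₀ ++ (c₀ ++ Dw m)) (u₀ ++ (Dw m ++ c₀.map ρ)) :=
      (delta_comm_word' c₀).append_left u₀
    have h3 : Beq (u₀ ++ (Dw m ++ c₀.map ρ)) (u₀ ++ (([i] ++ cf) ++ c₀.map ρ)) :=
      ((hcf.symm).append_right (c₀.map ρ)).append_left u₀
    have h4 := (h1.trans h2).trans h3
    refine (Beq.symm ?_)
    simpa [List.append_assoc] using h4

theorem common_multiple (u v : W m) : ∃ t, Dvd u t ∧ Dvd v t := by
  obtain ⟨k₁, hu⟩ := dvd_Dpow u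
  obtain ⟨k₂, hv⟩ := dvd_Dpow v
  refine ⟨Dpow m (k₁ + k₂), hu.trans ?_, hv.trans ?_⟩
  · rw [Dpow_add]; exact dvd_append _ _
  · rw [show k₁ + k₂ = k₂ + k₁ from by omega, Dpow_add]; exact dvd_append _ _

theorem lcm_exists (u v : W m) :
    ∃ l, Dvd u l ∧ Dvd v l ∧ ∀ w', Dvd u w' → Dvd v w' → Dvd l w' := by
  obtain ⟨t, hu, hv⟩ := common_multiple u v
  obtain ⟨l, h1, h2, _, h4⟩ := lcm_aux t.length t u v le_rfl hu hv
  exact ⟨l, h1, h2, h4⟩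

/-! ### lcm and gcd shift lemmas -/

theorem lcm_shift (x p q l : W m) (hp : Dvd p l) (hq : Dvd q l)
    (huni : ∀ w', Dvd p w' → Dvd q w' → Dvd l w') :
    ∀ w', Dvd (x ++ p) w' → Dvd (x ++ q) w' → Dvd (x ++ l) w' := by
  intro w' h1 h2
  have hx : Dvd x w' := (dvd_append x p).trans h1
  obtain ⟨w'', hw''⟩ := hx
  have hp' : Dvd p w'' := Dvd.cancel x (h1.of_beq_right hw''.symm)
  have hq' : Dvd q w'' := Dvd.cancel x (h2.of_beq_right hw''.symm)
  exact ((huni w'' hp' hq').shift x).of_beq_right hw''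

theorem gcd_shift (x p q g : W m) (huni : ∀ d, Dvd d p → Dvd d q → Dvd d g) :
    ∀ d, Dvd d (x ++ p) → Dvd d (x ++ q) → Dvd d (x ++ g) := by
  intro d h1 h2
  obtain ⟨L, hLd, hLx, hLuni⟩ := lcm_exists d x
  have hLp : Dvd L (x ++ p) := hLuni _ h1 (dvd_append x p)
  have hLq : Dvd L (x ++ q) := hLuni _ h2 (dvd_append x q)
  obtain ⟨L', hL'⟩ := hLx
  have h3 : Dvd L' p := Dvd.cancel x (Dvd.of_beq_left hL' hLp)
  have h4 : Dvd L' q := Dvd.cancel x (Dvd.of_beq_left hL' hLq)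
  have h5 : Dvd L' g := huni L' h3 h4
  exact hLd.trans (Dvd.of_beq_left hL'.symm (h5.shift x))

/-! ### The braid monoid as a congruence quotient -/

def StpF (m : ℕ) : FreeMonoid (Fin m) → FreeMonoid (Fin m) → Prop :=
  fun u v => Stp (FreeMonoid.toList u) (FreeMonoid.toList v)

def bcon (m : ℕ) : Con (FreeMonoid (Fin m)) := conGen (StpF m)

abbrev BM (m : ℕ) := (bcon m).Quotient

theorem bcon_of_beq {u v : W m} (h : Beq u v) :
    bcon m (FreeMonoid.ofList u) (FreeMonoid.ofList v) := by
  induction h with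
  | refl => exact (bcon m).refl _
  | tail h1 h2 ih =>
    refine (bcon m).trans ih (ConGen.Rel.of _ _ ?_)
    simpa [StpF, FreeMonoid.toList_ofList] using h2

theorem beq_of_bcon {u v : FreeMonoid (Fin m)} (h : bcon m u v) :
    Beq (FreeMonoid.toList u) (FreeMonoid.toList v) := by
  induction h with
  | of x y h => exact Stp.beq h
  | refl x => exact Beq.refl _
  | symm _ ih => exact ih.symm
  | trans _ _ ih1 ih2 => exact ih1.trans ih2
  | mul _ _ ih1 ih2 =>
    rw [FreeMonoid.toList_mul, FreeMonoid.toList_mul]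
    exact ih1.append_congr ih2

/-- The canonical map from braid words to the braid monoid. -/
def mkM (w : W m) : BM m := (FreeMonoid.ofList w : FreeMonoid (Fin m))

theorem mkM_eq_iff {u v : W m} : mkM (m := m) u = mkM v ↔ Beq u v := by
  rw [mkM, mkM, Con.eq]
  constructor
  · intro h; simpa [FreeMonoid.toList_ofList] using beq_of_bcon h
  · exact bcon_of_beq

theorem mkM_mul (u v : W m) : mkM (m := m) (u ++ v) = mkM u * mkM v := by
  rw [mkM, FreeMonoid.ofList_append]
  rfl

theorem mkM_surjective (x : BM m) : ∃ w : W m, mkM w = x := by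
  obtain ⟨w, rfl⟩ := Con.mk'_surjective x
  exact ⟨FreeMonoid.toList w, by simp [mkM, FreeMonoid.ofList_toList]⟩

theorem BM.mul_right_cancel {a b c : BM m} (h : a * c = b * c) : a = b := by
  obtain ⟨u, rfl⟩ := mkM_surjective a
  obtain ⟨v, rfl⟩ := mkM_surjective b
  obtain ⟨w, rfl⟩ := mkM_surjective c
  rw [← mkM_mul, ← mkM_mul, mkM_eq_iff] at h
  rw [mkM_eq_iff]
  exact cancel_right w h

theorem BM.mul_left_cancel {a b c : BM m} (h : c * a = c * b) : a = b := by
  obtain ⟨u, rfl⟩ := mkM_surjective a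
  obtain ⟨v, rfl⟩ := mkM_surjective b
  obtain ⟨w, rfl⟩ := mkM_surjective c
  rw [← mkM_mul, ← mkM_mul, mkM_eq_iff] at h
  rw [mkM_eq_iff]
  exact cancel_left w h

theorem left_ore (r s : BM m) : ∃ (p q : BM m), q * r = p * s := by
  obtain ⟨u, rfl⟩ := mkM_surjective r
  obtain ⟨v, rfl⟩ := mkM_surjective s
  obtain ⟨t, ⟨c1, h1⟩, ⟨c2, h2⟩⟩ := common_multiple u.reverse v.reverse
  have h1' := h1.reverse
  have h2' := h2.reverse
  simp only [List.reverse_append, List.reverse_reverse] at h1' h2'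
  refine ⟨mkM c2.reverse, mkM c1.reverse, ?_⟩
  rw [← mkM_mul, ← mkM_mul, mkM_eq_iff]
  exact h1'.trans h2'.symm

noncomputable instance : OreLocalization.OreSet (⊤ : Submonoid (BM m)) where
  ore_right_cancel r₁ r₂ s h := ⟨1, by
    have := BM.mul_right_cancel h
    simp [this]⟩
  oreNum r s := (left_ore r s).choose
  oreDenom r s := ⟨(left_ore r s).choose_spec.choose, trivial⟩
  ore_eq r s := (left_ore r s).choose_spec.choose_spec

theorem numeratorHom_inj {a b : BM m}
    (h : OreLocalization.numeratorHom (S := (⊤ : Submonoid (BM m))) a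
       = OreLocalization.numeratorHom (S := (⊤ : Submonoid (BM m))) b) : a = b := by
  rw [OreLocalization.numeratorHom_apply, OreLocalization.numeratorHom_apply,
    OreLocalization.oreDiv_eq_iff] at h
  obtain ⟨u, v, h1, h2⟩ := h
  have h2' : (u : BM m) = v := by simpa using h2
  have h1' : (u : BM m) * b = (u : BM m) * a := by
    simpa [Submonoid.smul_def, h2'] using h1
  exact (BM.mul_left_cancel h1').symm

/-! ### The braid group side -/

section Group

variable {n : ℕ}

/-- Evaluation of a positive word in the braid group. -/
def phiw (n : ℕ) (w : W (n-1)) : BraidGroup n := (w.map (braidGen n)).prod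

@[simp] theorem phiw_nil : phiw n [] = 1 := rfl

theorem phiw_cons (i : Fin (n-1)) (w : W (n-1)) :
    phiw n (i :: w) = braidGen n i * phiw n w := by simp [phiw]

theorem phiw_append (u v : W (n-1)) : phiw n (u ++ v) = phiw n u * phiw n v := by
  simp [phiw]

theorem mk_rel {a b : FreeGroup (Fin (n-1))} (h : a * b⁻¹ ∈ braidRels n) :
    (QuotientGroup.mk a : BraidGroup n) = QuotientGroup.mk b := by
  have h1 : a * b⁻¹ ∈ Subgroup.normalClosure (braidRels n) := Subgroup.subset_normalClosure h
  rw [QuotientGroup.eq]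
  have h2 := Subgroup.Normal.conj_mem (Subgroup.normalClosure_normal)
    _ ((Subgroup.normalClosure (braidRels n)).inv_mem h1) a⁻¹
  have e : a⁻¹ * b = a⁻¹ * (a * b⁻¹)⁻¹ * a⁻¹⁻¹ := by group
  rw [e]; exact h2

theorem gen_far {i j : Fin (n-1)} (h : Far i j) :
    braidGen n i * braidGen n j = braidGen n j * braidGen n i := by
  rcases h with h | h
  · have := mk_rel (n := n) (a := FreeGroup.of i * FreeGroup.of j)
      (b := FreeGroup.of j * FreeGroup.of i) (Or.inl ⟨i, j, h, rfl⟩)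
    simp only [braidGen, PresentedGroup.of, ← map_mul]; exact this
  · have := mk_rel (n := n) (a := FreeGroup.of j * FreeGroup.of i)
      (b := FreeGroup.of i * FreeGroup.of j) (Or.inl ⟨j, i, h, rfl⟩)
    simp only [braidGen, PresentedGroup.of, ← map_mul]; exact this.symm

theorem gen_adj {i j : Fin (n-1)} (h : Adj i j) :
    braidGen n i * braidGen n j * braidGen n i
      = braidGen n j * braidGen n i * braidGen n j := by
  rcases h with h | h
  · have := mk_rel (n := n) (a := FreeGroup.of i * FreeGroup.of j * FreeGroup.of i)
      (b := FreeGroup.of j * FreeGroup.of i * FreeGroup.of j) (Or.inr ⟨i, j, h, rfl⟩)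
    simp only [braidGen, PresentedGroup.of, ← map_mul]; exact this
  · have := mk_rel (n := n) (a := FreeGroup.of j * FreeGroup.of i * FreeGroup.of j)
      (b := FreeGroup.of i * FreeGroup.of j * FreeGroup.of i) (Or.inr ⟨j, i, h, rfl⟩)
    simp only [braidGen, PresentedGroup.of, ← map_mul]; exact this.symm

theorem phiw_beq {u v : W (n-1)} (h : Beq u v) : phiw n u = phiw n v := by
  induction h with
  | refl => rfl
  | tail h1 h2 ih =>
    rw [ih]
    cases h2 with
    | far i j hf x y =>
      have e : ∀ t, braidGen n i * (braidGen n j * t) = braidGen n j * (braidGen n i * t) :=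
        fun t => by rw [← mul_assoc, gen_far hf, mul_assoc]
      simp only [phiw_append, phiw_cons, e]
    | adj i j ha x y =>
      have e : ∀ t, braidGen n i * (braidGen n j * (braidGen n i * t))
          = braidGen n j * (braidGen n i * (braidGen n j * t)) := fun t => by
        rw [← mul_assoc, ← mul_assoc, gen_adj ha, mul_assoc, mul_assoc]
      simp only [phiw_append, phiw_cons, e]

theorem phiw_mem (w : W (n-1)) : phiw n w ∈ posBraid n := by
  induction w with
  | nil => exact one_mem _
  | cons i w ih =>
    rw [phiw_cons]
    exact mul_mem (Submonoid.subset_closure ⟨i, rfl⟩) ih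

theorem mem_pos_iff {c : BraidGroup n} : c ∈ posBraid n ↔ ∃ w : W (n-1), phiw n w = c := by
  constructor
  · intro hc
    induction hc using Submonoid.closure_induction with
    | mem x hx => obtain ⟨i, rfl⟩ := hx; exact ⟨[i], by simp [phiw]⟩
    | one => exact ⟨[], rfl⟩
    | mul x y _ _ ihx ihy =>
      obtain ⟨w1, rfl⟩ := ihx
      obtain ⟨w2, rfl⟩ := ihy
      exact ⟨w1 ++ w2, phiw_append _ _⟩
  · rintro ⟨w, rfl⟩; exact phiw_mem w

/-! ### Injectivity of the positive monoid in the braid group -/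

noncomputable def FU (n : ℕ) (i : Fin (n-1)) :
    (OreLocalization (⊤ : Submonoid (BM (n-1))) (BM (n-1)))ˣ :=
  (OreLocalization.numerator_isUnit (⟨mkM [i], trivial⟩ : (⊤ : Submonoid (BM (n-1))))).unit

theorem FU_val (i : Fin (n-1)) :
    ((FU n i : (OreLocalization (⊤ : Submonoid (BM (n-1))) (BM (n-1)))ˣ) :
      OreLocalization (⊤ : Submonoid (BM (n-1))) (BM (n-1)))
    = OreLocalization.numeratorHom (mkM [i]) := IsUnit.unit_spec _

theorem FU_rels : ∀ r ∈ braidRels n, FreeGroup.lift (FU n) r = 1 := by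
  rintro r (⟨i, j, hij, rfl⟩ | ⟨i, j, hij, rfl⟩)
  · simp only [map_mul, map_inv, FreeGroup.lift_apply_of]
    rw [mul_inv_eq_one]
    apply Units.ext
    rw [Units.val_mul, Units.val_mul, FU_val, FU_val]
    rw [← map_mul, ← map_mul, ← mkM_mul, ← mkM_mul]
    exact congrArg _ (mkM_eq_iff.2 (beq_swap (Or.inl hij) []))
  · simp only [map_mul, map_inv, FreeGroup.lift_apply_of]
    rw [mul_inv_eq_one]
    apply Units.ext
    rw [Units.val_mul, Units.val_mul, Units.val_mul, Units.val_mul, FU_val, FU_val]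
    rw [← map_mul, ← map_mul, ← map_mul, ← map_mul, ← mkM_mul, ← mkM_mul, ← mkM_mul, ← mkM_mul]
    exact congrArg _ (mkM_eq_iff.2 (beq_braid (Or.inl hij) []))

noncomputable def Ψ (n : ℕ) :
    BraidGroup n →* (OreLocalization (⊤ : Submonoid (BM (n-1))) (BM (n-1)))ˣ :=
  PresentedGroup.toGroup FU_rels

theorem psi_phiw (w : W (n-1)) :
    ((Ψ n (phiw n w) : (OreLocalization (⊤ : Submonoid (BM (n-1))) (BM (n-1)))ˣ) :
      OreLocalization (⊤ : Submonoid (BM (n-1))) (BM (n-1)))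
    = OreLocalization.numeratorHom (mkM w) := by
  induction w with
  | nil => simp [phiw_nil, mkM, map_one]
  | cons i w ih =>
    rw [phiw_cons, map_mul, Units.val_mul, ih]
    have h1 : Ψ n (braidGen n i) = FU n i := PresentedGroup.toGroup.of FU_rels
    rw [h1, FU_val, ← map_mul, ← mkM_mul]
    rfl

theorem phiw_inj {u v : W (n-1)} (h : phiw n u = phiw n v) : Beq u v := by
  have h1 := congrArg (fun x => ((Ψ n x : _ˣ) :
    OreLocalization (⊤ : Submonoid (BM (n-1))) (BM (n-1)))) h
  simp only [psi_phiw] at h1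
  exact mkM_eq_iff.1 (numeratorHom_inj h1)

/-! ### Clearing denominators -/

theorem clear (a : BraidGroup n) :
    ∃ (k : ℕ) (w : W (n-1)), phiw n (Dpow (n-1) k) * a = phiw n w := by
  let K : Subgroup (BraidGroup n) :=
    { carrier := {a | ∃ (k : ℕ) (w : W (n-1)), phiw n (Dpow (n-1) k) * a = phiw n w}
      one_mem' := ⟨0, [], by simp⟩
      mul_mem' := by
        rintro a b ⟨k, p, hk⟩ ⟨l, q, hl⟩
        obtain ⟨p', hp'⟩ := comm_pow_left (m := n-1) l p
        refine ⟨l + k, p' ++ q, ?_⟩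
        have e1 : phiw n (Dpow (n-1) (l+k)) = phiw n (Dpow (n-1) l) * phiw n (Dpow (n-1) k) := by
          rw [Dpow_add, phiw_append]
        have e2 : phiw n (Dpow (n-1) l) * phiw n p = phiw n p' * phiw n (Dpow (n-1) l) := by
          rw [← phiw_append, ← phiw_append]; exact phiw_beq hp'
        calc phiw n (Dpow (n-1) (l+k)) * (a * b)
            = phiw n (Dpow (n-1) l) * (phiw n (Dpow (n-1) k) * a) * b := by
              rw [e1]; group
          _ = phiw n (Dpow (n-1) l) * phiw n p * b := by rw [hk]
          _ = phiw n p' * (phiw n (Dpow (n-1) l) * b) := by rw [e2]; group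
          _ = phiw n p' * phiw n q := by rw [hl]
          _ = phiw n (p' ++ q) := (phiw_append _ _).symm
      inv_mem' := by
        rintro a ⟨k, p, hk⟩
        obtain ⟨mp, c, hc⟩ := dvd_Dpow (m := n-1) p
        obtain ⟨c', hc'⟩ := comm_pow_left (m := n-1) mp c
        refine ⟨mp, c' ++ Dpow (n-1) k, ?_⟩
        have ha : a = (phiw n (Dpow (n-1) k))⁻¹ * phiw n p := by rw [← hk]; group
        have h1 : phiw n p * phiw n c = phiw n (Dpow (n-1) mp) := by
          rw [← phiw_append]; exact phiw_beq hc
        have h2 : phiw n (Dpow (n-1) mp) * phiw n c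
            = phiw n c' * phiw n (Dpow (n-1) mp) := by
          rw [← phiw_append, ← phiw_append]; exact phiw_beq hc'
        have hpinv : (phiw n p)⁻¹ = phiw n c * (phiw n (Dpow (n-1) mp))⁻¹ := by
          rw [← h1]; group
        have hainv : a⁻¹ = phiw n c * (phiw n (Dpow (n-1) mp))⁻¹ * phiw n (Dpow (n-1) k) := by
          rw [ha, mul_inv_rev, hpinv]; group
        rw [phiw_append]
        calc phiw n (Dpow (n-1) mp) * a⁻¹
            = (phiw n (Dpow (n-1) mp) * phiw n c)
              * ((phiw n (Dpow (n-1) mp))⁻¹ * phiw n (Dpow (n-1) k)) := by rw [hainv]; group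
          _ = (phiw n c' * phiw n (Dpow (n-1) mp))
              * ((phiw n (Dpow (n-1) mp))⁻¹ * phiw n (Dpow (n-1) k)) := by rw [h2]
          _ = phiw n c' * phiw n (Dpow (n-1) k) := by group }
  have hgen : ∀ i : Fin (n-1), braidGen n i ∈ K := fun i => ⟨0, [i], by simp [phiw]⟩
  have hK : (⊤ : Subgroup (BraidGroup n)) ≤ K := by
    rw [← PresentedGroup.closure_range_of (braidRels n)]
    exact Subgroup.closure_le K |>.2 (by rintro _ ⟨i, rfl⟩; exact hgen i)
  exact hK (Subgroup.mem_top a)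

theorem clear_ge {a : BraidGroup n} {k₀ : ℕ} {w₀ : W (n-1)}
    (h : phiw n (Dpow (n-1) k₀) * a = phiw n w₀) {k : ℕ} (hk : k₀ ≤ k) :
    phiw n (Dpow (n-1) k) * a = phiw n (Dpow (n-1) (k - k₀) ++ w₀) := by
  have e : Dpow (n-1) k = Dpow (n-1) (k - k₀) ++ Dpow (n-1) k₀ := by
    rw [← Dpow_add]; congr 1; omega
  rw [e, phiw_append, mul_assoc, h, ← phiw_append]

end Group

end Garside

open Garside in
/-- (Garside lattice structure) The prefix order on `Bₙ` admits greatest common divisors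
and least common multiples. -/
theorem garside_lattice (n : ℕ) (a b : BraidGroup n) :
    (∃ d : BraidGroup n, braidPrefix n d a ∧ braidPrefix n d b ∧
      ∀ d' : BraidGroup n, braidPrefix n d' a → braidPrefix n d' b → braidPrefix n d' d) ∧
    (∃ m : BraidGroup n, braidPrefix n a m ∧ braidPrefix n b m ∧
      ∀ m' : BraidGroup n, braidPrefix n a m' → braidPrefix n b m' → braidPrefix n m m') := by
  classical
  obtain ⟨k₁, p₁, hp₁⟩ := clear a
  obtain ⟨k₂, q₂, hq₂⟩ := clear b
  set k := k₁ + k₂ with hk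
  have hP := clear_ge hp₁ (show k₁ ≤ k by omega)
  have hQ := clear_ge hq₂ (show k₂ ≤ k by omega)
  set p : W (n-1) := Dpow (n-1) (k - k₁) ++ p₁ with hpdef
  set q : W (n-1) := Dpow (n-1) (k - k₂) ++ q₂ with hqdef
  set X := phiw n (Dpow (n-1) k) with hX
  -- hP : X * a = phiw n p ; hQ : X * b = phiw n q
  have ha : a = X⁻¹ * phiw n p := by rw [← hP]; group
  have hb : b = X⁻¹ * phiw n q := by rw [← hQ]; group
  have hDsplit : ∀ k₃ : ℕ, phiw n (Dpow (n-1) (k₃ + k)) = phiw n (Dpow (n-1) k₃) * X := by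
    intro k₃; rw [Dpow_add, phiw_append]
  constructor
  · -- gcd
    obtain ⟨g, hgp, hgq, hguni⟩ := gcd_exists p q
    refine ⟨X⁻¹ * phiw n g, ?_, ?_, ?_⟩
    · obtain ⟨c, hc⟩ := hgp
      refine ⟨phiw n c, phiw_mem c, ?_⟩
      have h1 : phiw n g * phiw n c = phiw n p := by
        rw [← phiw_append]; exact phiw_beq hc
      rw [mul_assoc, h1, ha]
    · obtain ⟨c, hc⟩ := hgq
      refine ⟨phiw n c, phiw_mem c, ?_⟩
      have h1 : phiw n g * phiw n c = phiw n q := by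
        rw [← phiw_append]; exact phiw_beq hc
      rw [mul_assoc, h1, hb]
    · intro d' hd'a hd'b
      obtain ⟨k₃, r₀, hr₀⟩ := clear d'
      have hR := clear_ge hr₀ (show k₃ ≤ k₃ + k by omega)
      rw [show k₃ + k - k₃ = k from by omega] at hR
      obtain ⟨c₁, hc₁, he₁⟩ := hd'a
      obtain ⟨w₁, rfl⟩ := mem_pos_iff.1 hc₁
      obtain ⟨c₂, hc₂, he₂⟩ := hd'b
      obtain ⟨w₂, rfl⟩ := mem_pos_iff.1 hc₂
      have hrp : Garside.Dvd (Dpow (n-1) k ++ r₀) (Dpow (n-1) k₃ ++ p) := by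
        refine ⟨w₁, phiw_inj ?_⟩
        rw [phiw_append (Dpow (n-1) k ++ r₀) w₁, phiw_append (Dpow (n-1) k₃) p, ← hR]
        calc phiw n (Dpow (n-1) (k₃ + k)) * d' * phiw n w₁
            = phiw n (Dpow (n-1) (k₃ + k)) * (d' * phiw n w₁) := by group
          _ = phiw n (Dpow (n-1) k₃) * (X * a) := by rw [he₁, hDsplit]; group
          _ = phiw n (Dpow (n-1) k₃) * phiw n p := by rw [hP]
      have hrq : Garside.Dvd (Dpow (n-1) k ++ r₀) (Dpow (n-1) k₃ ++ q) := by
        refine ⟨w₂, phiw_inj ?_⟩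
        rw [phiw_append (Dpow (n-1) k ++ r₀) w₂, phiw_append (Dpow (n-1) k₃) q, ← hR]
        calc phiw n (Dpow (n-1) (k₃ + k)) * d' * phiw n w₂
            = phiw n (Dpow (n-1) (k₃ + k)) * (d' * phiw n w₂) := by group
          _ = phiw n (Dpow (n-1) k₃) * (X * b) := by rw [he₂, hDsplit]; group
          _ = phiw n (Dpow (n-1) k₃) * phiw n q := by rw [hQ]
      obtain ⟨e, he⟩ := gcd_shift (Dpow (n-1) k₃) p q g hguni (Dpow (n-1) k ++ r₀) hrp hrq
      refine ⟨phiw n e, phiw_mem e, ?_⟩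
      have h2 : phiw n (Dpow (n-1) k ++ r₀) * phiw n e = phiw n (Dpow (n-1) k₃) * phiw n g := by
        rw [← phiw_append, ← phiw_append]; exact phiw_beq he
      rw [← hR, hDsplit] at h2
      have h3 : phiw n (Dpow (n-1) k₃) * (X * (d' * phiw n e))
          = phiw n (Dpow (n-1) k₃) * (X * (X⁻¹ * phiw n g)) := by
        calc phiw n (Dpow (n-1) k₃) * (X * (d' * phiw n e))
            = phiw n (Dpow (n-1) k₃) * X * d' * phiw n e := by group
          _ = phiw n (Dpow (n-1) k₃) * phiw n g := h2
          _ = phiw n (Dpow (n-1) k₃) * (X * (X⁻¹ * phiw n g)) := by group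
      have h4 := mul_left_cancel h3
      exact mul_left_cancel h4
  · -- lcm
    obtain ⟨l, hpl, hql, hluni⟩ := lcm_exists p q
    refine ⟨X⁻¹ * phiw n l, ?_, ?_, ?_⟩
    · obtain ⟨c, hc⟩ := hpl
      refine ⟨phiw n c, phiw_mem c, ?_⟩
      have h1 : phiw n p * phiw n c = phiw n l := by
        rw [← phiw_append]; exact phiw_beq hc
      rw [ha, mul_assoc, h1]
    · obtain ⟨c, hc⟩ := hql
      refine ⟨phiw n c, phiw_mem c, ?_⟩
      have h1 : phiw n q * phiw n c = phiw n l := by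
        rw [← phiw_append]; exact phiw_beq hc
      rw [hb, mul_assoc, h1]
    · intro m' hm'a hm'b
      obtain ⟨k₃, s₀, hs₀⟩ := clear m'
      have hS := clear_ge hs₀ (show k₃ ≤ k₃ + k by omega)
      rw [show k₃ + k - k₃ = k from by omega] at hS
      obtain ⟨c₁, hc₁, he₁⟩ := hm'a
      obtain ⟨w₁, rfl⟩ := mem_pos_iff.1 hc₁
      obtain ⟨c₂, hc₂, he₂⟩ := hm'b
      obtain ⟨w₂, rfl⟩ := mem_pos_iff.1 hc₂
      have hps : Garside.Dvd (Dpow (n-1) k₃ ++ p) (Dpow (n-1) k ++ s₀) := by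
        refine ⟨w₁, phiw_inj ?_⟩
        rw [phiw_append (Dpow (n-1) k₃ ++ p) w₁, phiw_append (Dpow (n-1) k₃) p, ← hS]
        calc phiw n (Dpow (n-1) k₃) * phiw n p * phiw n w₁
            = phiw n (Dpow (n-1) k₃) * (X * a * phiw n w₁) := by rw [hP]; group
          _ = phiw n (Dpow (n-1) k₃) * (X * m') := by rw [← he₁]; group
          _ = phiw n (Dpow (n-1) (k₃ + k)) * m' := by rw [hDsplit]; group
      have hqs : Garside.Dvd (Dpow (n-1) k₃ ++ q) (Dpow (n-1) k ++ s₀) := by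
        refine ⟨w₂, phiw_inj ?_⟩
        rw [phiw_append (Dpow (n-1) k₃ ++ q) w₂, phiw_append (Dpow (n-1) k₃) q, ← hS]
        calc phiw n (Dpow (n-1) k₃) * phiw n q * phiw n w₂
            = phiw n (Dpow (n-1) k₃) * (X * b * phiw n w₂) := by rw [hQ]; group
          _ = phiw n (Dpow (n-1) k₃) * (X * m') := by rw [← he₂]; group
          _ = phiw n (Dpow (n-1) (k₃ + k)) * m' := by rw [hDsplit]; group
      obtain ⟨e, he⟩ := lcm_shift (Dpow (n-1) k₃) p q l hpl hql hluni (Dpow (n-1) k ++ s₀) hps hqs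
      refine ⟨phiw n e, phiw_mem e, ?_⟩
      have h2 : phiw n (Dpow (n-1) k₃) * phiw n l * phiw n e = phiw n (Dpow (n-1) k ++ s₀) := by
        rw [← phiw_append, ← phiw_append]
        exact phiw_beq (by simpa [List.append_assoc] using he)
      rw [← hS, hDsplit] at h2
      have h3 : phiw n (Dpow (n-1) k₃) * (X * (X⁻¹ * phiw n l * phiw n e))
          = phiw n (Dpow (n-1) k₃) * (X * m') := by
        calc phiw n (Dpow (n-1) k₃) * (X * (X⁻¹ * phiw n l * phiw n e))
            = phiw n (Dpow (n-1) k₃) * phiw n l * phiw n e := by group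
          _ = phiw n (Dpow (n-1) k₃) * X * m' := h2
          _ = phiw n (Dpow (n-1) k₃) * (X * m') := by group
      have h4 := mul_left_cancel h3
      exact mul_left_cancel h4
end
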